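/- arXiv:0805.2214 — 6 statements merged into one kernel-verified Lean document; each statement's English description precedes it below -/
import Mathlib

section
/- Suppose E[log⁺|g(ε₀)|] < ∞, E[log⁺|c(ε₀)|] < ∞ and E[log|c(ε₀)|] < 0 (the last expectation possibly equal to −∞). Then for every k ∈ ℤ the series X_k = ∑_{i=1}^∞ g(ε_{k−i}) ∏_{1≤j<i} c(ε_{k−j}) converges with probability one, the sequence (X_k)_{k∈ℤ} satisfies X_k = c(ε_{k−1})X_{k−1} + g(ε_{k−1}) almost surely for every k, and (X_k)_{k∈ℤ} is strictly stationary, i.e. for every n ≥ 1 and every k ∈ ℤ the random vector (X_{k+1}, …, X_{k+n}) has the same distribution as (X_1, …, X_n). -/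
open MeasureTheory ProbabilityTheory Filter
open Topology
open scoped ENNReal NNReal

noncomputable def brandtS (c g : ℝ → ℝ) (m : ℕ) (u : ℕ → ℝ) : ℝ :=
  ∑ i ∈ Finset.range m, g (u i) * ∏ j ∈ Finset.range i, c (u j)

noncomputable def brandtL (c g : ℝ → ℝ) (u : ℕ → ℝ) : ℝ :=
  (Filter.liminf (fun m => ((brandtS c g m u : ℝ) : EReal)) Filter.atTop).toReal

def brandtPath {Ω : Type*} (ε : ℤ → Ω → ℝ) (k : ℤ) (ω : Ω) : ℕ → ℝ :=
  fun j => ε (k - (j + 1)) ω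

lemma measurable_brandtS (c g : ℝ → ℝ) (hc : Measurable c) (hg : Measurable g) (m : ℕ) :
    Measurable (brandtS c g m) := by
  apply Finset.measurable_sum
  intro i _
  exact ((hg.comp (measurable_pi_apply i)).mul
    (Finset.measurable_prod _ (fun j _ => hc.comp (measurable_pi_apply j))))

lemma measurable_brandtL (c g : ℝ → ℝ) (hc : Measurable c) (hg : Measurable g) :
    Measurable (brandtL c g) := by
  apply measurable_ereal_toReal.comp
  exact Measurable.liminf (fun m =>
    (measurable_coe_real_ereal.comp (measurable_brandtS c g hc hg m)))

lemma brandtS_congr (c g : ℝ → ℝ) (m : ℕ) {u v : ℕ → ℝ} (h : ∀ j < m, u j = v j) :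
    brandtS c g m u = brandtS c g m v := by
  unfold brandtS
  refine Finset.sum_congr rfl (fun i hi => ?_)
  rw [Finset.mem_range] at hi
  rw [h i hi]
  congr 1
  refine Finset.prod_congr rfl (fun j hj => ?_)
  rw [Finset.mem_range] at hj
  rw [h j (hj.trans hi)]

lemma brandtL_tendsto (c g : ℝ → ℝ) {u : ℕ → ℝ} {l : ℝ}
    (h : Tendsto (fun m => brandtS c g m u) atTop (𝓝 l)) :
    brandtL c g u = l := by
  have h' : Tendsto (fun m => ((brandtS c g m u : ℝ) : EReal)) atTop (𝓝 (l : EReal)) :=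
    (continuous_coe_real_ereal.tendsto l).comp h
  rw [brandtL, h'.liminf_eq]
  simp

lemma brandtS_succ {Ω : Type*} (ε : ℤ → Ω → ℝ) (c g : ℝ → ℝ) (k : ℤ) (ω : Ω) (m : ℕ) :
    brandtS c g (m + 1) (brandtPath ε k ω)
      = g (ε (k - 1) ω) + c (ε (k - 1) ω) * brandtS c g m (brandtPath ε (k - 1) ω) := by
  have hshift : ∀ j : ℕ, brandtPath ε k ω (j + 1) = brandtPath ε (k - 1) ω j := by
    intro j
    show ε (k - ((j : ℤ) + 1 + 1)) ω = ε (k - 1 - ((j : ℤ) + 1)) ω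
    congr 1
    ring
  have h0 : brandtPath ε k ω 0 = ε (k - 1) ω := by
    show ε (k - ((0 : ℤ) + 1)) ω = ε (k - 1) ω
    norm_num
  unfold brandtS
  rw [Finset.sum_range_succ']
  simp only [Finset.prod_range_succ', hshift, h0, Finset.range_zero, Finset.prod_empty, mul_one]
  rw [Finset.mul_sum]
  rw [add_comm]
  congr 1
  refine Finset.sum_congr rfl (fun i _ => ?_)
  ring

lemma brandt_window_law {Ω : Type*} [MeasurableSpace Ω] (P : Measure Ω) [IsProbabilityMeasure P]
    (ε : ℤ → Ω → ℝ) (hεmeas : ∀ k, Measurable (ε k))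
    (hindep : iIndepFun ε P)
    (hident : ∀ k, IdentDistrib (ε k) (ε 0) P P)
    (N : ℕ) (w : Fin N → ℤ) (hw : Function.Injective w) :
    Measure.map (fun ω (t : Fin N) => ε (w t) ω) P
      = Measure.pi (fun _ => Measure.map (ε 0) P) := by
  have hmeas : Measurable (fun ω (t : Fin N) => ε (w t) ω) :=
    measurable_pi_lambda _ (fun t => hεmeas (w t))
  have : IsProbabilityMeasure (Measure.map (ε 0) P) :=
    Measure.isProbabilityMeasure_map (hεmeas 0).aemeasurable
  refine (Measure.pi_eq (μ := fun _ : Fin N => Measure.map (ε 0) P) (fun s hs => ?_)).symm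
  rw [Measure.map_apply hmeas (MeasurableSet.univ_pi hs)]
  have hpre : (fun ω (t : Fin N) => ε (w t) ω) ⁻¹' Set.pi Set.univ s
      = ⋂ t : Fin N, ε (w t) ⁻¹' s t := by
    ext ω; simp [Set.mem_pi]
  rw [hpre]
  classical
  set sets : ℤ → Set ℝ := fun z => if h : ∃ t, w t = z then s h.choose else Set.univ with hsets_def
  have hsets_w : ∀ t, sets (w t) = s t := by
    intro t
    have h : ∃ t', w t' = w t := ⟨t, rfl⟩
    simp only [hsets_def, dif_pos h]
    exact congrArg s (hw h.choose_spec)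
  have hiInter : (⋂ t : Fin N, ε (w t) ⁻¹' s t)
      = ⋂ z ∈ Finset.image w Finset.univ, ε z ⁻¹' sets z := by
    ext ω
    simp only [Set.mem_iInter, Finset.mem_image, Finset.mem_univ, true_and]
    constructor
    · rintro h z ⟨t, rfl⟩
      rw [hsets_w t]; exact h t
    · intro h t
      have := h (w t) ⟨t, rfl⟩
      rwa [hsets_w t] at this
  rw [hiInter]
  rw [hindep.measure_inter_preimage_eq_mul (Finset.image w Finset.univ)
    (sets := sets) (fun z _ => ?_)]
  · rw [Finset.prod_image (fun a _ b _ h => hw h)]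
    refine Finset.prod_congr rfl (fun t _ => ?_)
    rw [hsets_w t, ← Measure.map_apply (hεmeas (w t)) (hs t), (hident (w t)).map_eq]
  · by_cases h : ∃ t, w t = z
    · simp only [hsets_def, dif_pos h]; exact hs _
    · simp only [hsets_def, dif_neg h]; exact MeasurableSet.univ

lemma brandt_choose_M {Ω : Type*} [MeasurableSpace Ω] (P : Measure Ω) [IsProbabilityMeasure P]
    (Y : Ω → ℝ) (hY : Measurable Y)
    (hpos : Integrable (fun ω => max (Y ω) 0) P)
    (hneg : ∫⁻ ω, ENNReal.ofReal (Y ω) ∂P < ∫⁻ ω, ENNReal.ofReal (-(Y ω)) ∂P) :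
    ∃ M : ℕ, Integrable (fun ω => max (Y ω) (-(M:ℝ))) P ∧
      ∫ ω, max (Y ω) (-(M:ℝ)) ∂P < 0 := by
  set A := ∫⁻ ω, ENNReal.ofReal (Y ω) ∂P with hA
  have hA_lt : A < ⊤ := by
    calc A ≤ ∫⁻ ω, ENNReal.ofReal (max (Y ω) 0) ∂P := by
          refine lintegral_mono (fun ω => ENNReal.ofReal_le_ofReal (le_max_left _ _))
      _ < ⊤ := hpos.lintegral_lt_top
  have hmono : Monotone (fun (M : ℕ) (ω : Ω) => min (ENNReal.ofReal (-(Y ω))) (M : ℝ≥0∞)) := by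
    intro a b hab ω
    exact min_le_min le_rfl (by exact_mod_cast Nat.cast_le.mpr hab)
  have hsup : ∀ ω, (⨆ M : ℕ, min (ENNReal.ofReal (-(Y ω))) (M : ℝ≥0∞))
      = ENNReal.ofReal (-(Y ω)) := by
    intro ω
    apply le_antisymm
    · exact iSup_le fun M => min_le_left _ _
    · obtain ⟨M, hM⟩ := exists_nat_ge (-(Y ω))
      refine le_iSup_of_le M ?_
      refine le_min le_rfl ?_
      calc ENNReal.ofReal (-(Y ω)) ≤ ENNReal.ofReal M := ENNReal.ofReal_le_ofReal hM
        _ = (M : ℝ≥0∞) := ENNReal.ofReal_natCast M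
  have hlim : (⨆ M : ℕ, ∫⁻ ω, min (ENNReal.ofReal (-(Y ω))) (M : ℝ≥0∞) ∂P)
      = ∫⁻ ω, ENNReal.ofReal (-(Y ω)) ∂P := by
    rw [← lintegral_iSup (f := fun M ω => min (ENNReal.ofReal (-(Y ω))) (M : ℝ≥0∞)) (fun M => (hY.neg.ennreal_ofReal).min measurable_const)
      (fun a b hab => fun ω => hmono hab ω)]
    exact lintegral_congr fun ω => hsup ω
  have hex : ∃ M : ℕ, A < ∫⁻ ω, min (ENNReal.ofReal (-(Y ω))) (M : ℝ≥0∞) ∂P := by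
    by_contra h
    push_neg at h
    have : (⨆ M : ℕ, ∫⁻ ω, min (ENNReal.ofReal (-(Y ω))) (M : ℝ≥0∞) ∂P) ≤ A := iSup_le h
    rw [hlim] at this
    exact absurd (lt_of_lt_of_le hneg this) (lt_irrefl _)
  obtain ⟨M, hM⟩ := hex
  set BM := ∫⁻ ω, min (ENNReal.ofReal (-(Y ω))) (M : ℝ≥0∞) ∂P with hBM
  have hBM_lt : BM < ⊤ := by
    calc BM ≤ ∫⁻ _, (M : ℝ≥0∞) ∂P := lintegral_mono fun ω => min_le_right _ _
      _ = M := by simp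
      _ < ⊤ := by simp [ENNReal.natCast_lt_top]
  have hMnn : (0:ℝ) ≤ (M:ℝ) := Nat.cast_nonneg M
  have hpt_pos : ∀ ω, ENNReal.ofReal (max (Y ω) (-(M:ℝ))) = ENNReal.ofReal (Y ω) := by
    intro ω
    rcases le_total (-(M:ℝ)) (Y ω) with h | h
    · rw [max_eq_left h]
    · rw [max_eq_right h, ENNReal.ofReal_of_nonpos (neg_nonpos.mpr hMnn),
        ENNReal.ofReal_of_nonpos (h.trans (neg_nonpos.mpr hMnn))]
  have hpt_neg : ∀ ω, ENNReal.ofReal (-(max (Y ω) (-(M:ℝ))))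
      = min (ENNReal.ofReal (-(Y ω))) (M : ℝ≥0∞) := by
    intro ω
    rcases le_total (-(M:ℝ)) (Y ω) with h | h
    · rw [max_eq_left h]
      have h2 : ENNReal.ofReal (-(Y ω)) ≤ (M : ℝ≥0∞) := by
        rw [← ENNReal.ofReal_natCast M]
        exact ENNReal.ofReal_le_ofReal (by linarith)
      rw [min_eq_left h2]
    · rw [max_eq_right h, neg_neg]
      have h2 : (M : ℝ≥0∞) ≤ ENNReal.ofReal (-(Y ω)) := by
        rw [← ENNReal.ofReal_natCast M]
        exact ENNReal.ofReal_le_ofReal (by linarith)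
      rw [min_eq_right h2, ENNReal.ofReal_natCast]
  have hfmeas : Measurable (fun ω => max (Y ω) (-(M:ℝ))) := hY.max measurable_const
  have hint : Integrable (fun ω => max (Y ω) (-(M:ℝ))) P := by
    refine Integrable.mono' (hpos.add (integrable_const (M:ℝ)))
      hfmeas.aestronglyMeasurable (Filter.Eventually.of_forall fun ω => ?_)
    rw [Real.norm_eq_abs, abs_le]
    constructor
    · simp only [Pi.add_apply]
      have : -(M:ℝ) ≤ max (Y ω) (-(M:ℝ)) := le_max_right _ _
      have h0 : (0:ℝ) ≤ max (Y ω) 0 := le_max_right _ _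
      linarith
    · simp only [Pi.add_apply]
      have : max (Y ω) (-(M:ℝ)) ≤ max (Y ω) 0 := max_le_max le_rfl (neg_nonpos.mpr hMnn)
      linarith
  refine ⟨M, hint, ?_⟩
  rw [integral_eq_lintegral_pos_part_sub_lintegral_neg_part hint]
  have e1 : ∫⁻ ω, ENNReal.ofReal (max (Y ω) (-(M:ℝ))) ∂P = A :=
    lintegral_congr fun ω => hpt_pos ω
  have e2 : ∫⁻ ω, ENNReal.ofReal (-(max (Y ω) (-(M:ℝ)))) ∂P = BM :=
    lintegral_congr fun ω => hpt_neg ω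
  rw [e1, e2, sub_neg]
  exact (ENNReal.toReal_lt_toReal hA_lt.ne hBM_lt.ne).mpr hM

lemma brandt_conv {Ω : Type*} [MeasurableSpace Ω] (P : Measure Ω) [IsProbabilityMeasure P]
    (ε : ℤ → Ω → ℝ) (c g : ℝ → ℝ)
    (hc : Measurable c) (hg : Measurable g)
    (hεmeas : ∀ k, Measurable (ε k))
    (hindep : iIndepFun ε P)
    (hident : ∀ k, IdentDistrib (ε k) (ε 0) P P)
    (hlogg : Integrable (fun ω => Real.log (max |g (ε 0 ω)| 1)) P)
    (hlogc : Integrable (fun ω => Real.log (max |c (ε 0 ω)| 1)) P)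
    (hneg : ∫⁻ ω, ENNReal.ofReal (Real.log |c (ε 0 ω)|) ∂P
        < ∫⁻ ω, ENNReal.ofReal (-(Real.log |c (ε 0 ω)|)) ∂P) (k : ℤ) :
    ∀ᵐ ω ∂P, ∃ l, Tendsto (fun m => brandtS c g m (brandtPath ε k ω)) atTop (𝓝 l) := by
  letI : MeasureSpace Ω := ⟨P⟩
  have hYmeas : Measurable (fun ω => Real.log |c (ε 0 ω)|) :=
    Real.measurable_log.comp ((hc.comp (hεmeas 0)).abs)
  have hmax_eq : ∀ x : ℝ, max (Real.log |c x|) 0 = Real.log (max |c x| 1) := by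
    intro x
    rcases le_total 1 |c x| with h | h
    · rw [max_eq_left (Real.log_nonneg h), max_eq_left h]
    · rw [max_eq_right (Real.log_nonpos (abs_nonneg _) h), max_eq_right h, Real.log_one]
  have hpos : Integrable (fun ω => max (Real.log |c (ε 0 ω)|) 0) P := by
    refine hlogc.congr (Filter.Eventually.of_forall fun ω => (hmax_eq (ε 0 ω)).symm)
  obtain ⟨M, hMint, hMneg⟩ := brandt_choose_M P _ hYmeas hpos hneg
  set φM : ℝ → ℝ := fun x => max (Real.log |c x|) (-(M:ℝ)) with hφM_def
  have hφM : Measurable φM := (Real.measurable_log.comp hc.abs).max measurable_const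
  set α : ℝ := ∫ ω, φM (ε 0 ω) ∂P with hα_def
  have hα : α < 0 := hMneg
  set W : ℕ → Ω → ℝ := fun j ω => φM (ε (k - (j + 1)) ω) with hW_def
  have hWident0 : ∀ j : ℕ, IdentDistrib (W j) (fun ω => φM (ε 0 ω)) P P :=
    fun j => (hident (k - (j + 1))).comp hφM
  have hWident : ∀ j : ℕ, IdentDistrib (W j) (W 0) P P :=
    fun j => (hWident0 j).trans (hWident0 0).symm
  have hWindep : Pairwise (Function.onFun (IndepFun · · P) W) := by
    intro i j hij
    have hne : k - ((i : ℤ) + 1) ≠ k - ((j : ℤ) + 1) := by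
      intro h
      apply hij
      omega
    exact (hindep.indepFun hne).comp hφM hφM
  have hWint : Integrable (W 0) P := ((hWident0 0).integrable_iff).mpr hMint
  have hSLLN := strong_law_ae_real W hWint hWindep hWident
  have hEW0 : ∫ ω, W 0 ω ∂P = α := (hWident0 0).integral_eq
  set δ : ℝ := -α / 4 with hδ_def
  have hδ : 0 < δ := by rw [hδ_def]; linarith
  set s : ℕ → Set Ω :=
    fun i => {ω | δ * i < Real.log (max |g (ε (k - (i + 1)) ω)| 1)} with hs_def
  have hVint : Integrable (fun ω => Real.log (max |g (ε 0 ω)| 1) / δ) P := hlogg.div_const δ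
  have hVnn : 0 ≤ fun ω => Real.log (max |g (ε 0 ω)| 1) / δ := by
    intro ω
    exact div_nonneg (Real.log_nonneg (le_max_right _ _)) hδ.le
  have hsum : (∑' i : ℕ, P (s i)) < ∞ := by
    have heq : ∀ i : ℕ, P (s i)
        = P {ω | Real.log (max |g (ε 0 ω)| 1) / δ ∈ Set.Ioi (i : ℝ)} := by
      intro i
      have hmeasset : MeasurableSet {x : ℝ | δ * i < Real.log (max |g x| 1)} :=
        measurableSet_lt measurable_const
          (Real.measurable_log.comp (hg.abs.max measurable_const))
      have h1 : s i = (ε (k - (i + 1))) ⁻¹' {x : ℝ | δ * i < Real.log (max |g x| 1)} := rfl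
      have h2 : {ω | Real.log (max |g (ε 0 ω)| 1) / δ ∈ Set.Ioi (i : ℝ)}
          = (ε 0) ⁻¹' {x : ℝ | δ * i < Real.log (max |g x| 1)} := by
        ext ω
        simp only [Set.mem_setOf_eq, Set.mem_Ioi, Set.mem_preimage]
        rw [lt_div_iff₀ hδ, mul_comm]
      rw [h1, h2]
      exact (hident (k - (i + 1))).measure_mem_eq hmeasset
    calc (∑' i : ℕ, P (s i))
        = ∑' i : ℕ, P {ω | Real.log (max |g (ε 0 ω)| 1) / δ ∈ Set.Ioi (i : ℝ)} := by
          exact tsum_congr heq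
      _ < ∞ := tsum_prob_mem_Ioi_lt_top hVint hVnn
  have hBC : ∀ᵐ ω ∂P, ∀ᶠ i in atTop, ω ∉ s i := ae_eventually_notMem hsum.ne
  filter_upwards [hSLLN, hBC] with ω hω1 hω2
  rw [hEW0] at hω1
  have havg : ∀ᶠ i : ℕ in atTop, (∑ j ∈ Finset.range i, W j ω) / i < α / 2 :=
    hω1.eventually_lt_const (by linarith)
  have hterm : ∀ᶠ i : ℕ in atTop,
      ‖g (brandtPath ε k ω i) * ∏ j ∈ Finset.range i, c (brandtPath ε k ω j)‖
        ≤ (Real.exp (α / 4)) ^ i := by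
    filter_upwards [havg, hω2, eventually_ge_atTop 1] with i havg_i hg_i hi1
    have hipos : (0 : ℝ) < i := by exact_mod_cast hi1
    have hsumW : (∑ j ∈ Finset.range i, W j ω) < (α / 2) * i := by
      rw [div_lt_iff₀ hipos] at havg_i
      exact havg_i
    have hlogc_le : ∑ j ∈ Finset.range i, Real.log |c (brandtPath ε k ω j)|
        ≤ ∑ j ∈ Finset.range i, W j ω :=
      Finset.sum_le_sum fun j _ => le_max_left _ _
    have hgi : Real.log (max |g (ε (k - (i + 1)) ω)| 1) ≤ δ * i := not_lt.mp hg_i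
    have hgabs : |g (brandtPath ε k ω i)| ≤ Real.exp (δ * i) := by
      have h2 : (0:ℝ) < max |g (brandtPath ε k ω i)| 1 :=
        lt_of_lt_of_le zero_lt_one (le_max_right _ _)
      calc |g (brandtPath ε k ω i)| ≤ max |g (brandtPath ε k ω i)| 1 := le_max_left _ _
        _ = Real.exp (Real.log (max |g (brandtPath ε k ω i)| 1)) := (Real.exp_log h2).symm
        _ ≤ Real.exp (δ * i) := Real.exp_le_exp.mpr hgi
    have hprod : ∏ j ∈ Finset.range i, |c (brandtPath ε k ω j)|
        ≤ Real.exp ((α / 2) * i) := by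
      calc ∏ j ∈ Finset.range i, |c (brandtPath ε k ω j)|
          ≤ ∏ j ∈ Finset.range i, Real.exp (Real.log |c (brandtPath ε k ω j)|) := by
            refine Finset.prod_le_prod (fun j _ => abs_nonneg _) (fun j _ => ?_)
            rcases eq_or_lt_of_le (abs_nonneg (c (brandtPath ε k ω j))) with h | h
            · rw [← h]; exact (Real.exp_pos _).le
            · rw [Real.exp_log h]
        _ = Real.exp (∑ j ∈ Finset.range i, Real.log |c (brandtPath ε k ω j)|) :=
            (Real.exp_sum _ _).symm
        _ ≤ Real.exp ((α / 2) * i) :=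
            Real.exp_le_exp.mpr (le_of_lt (lt_of_le_of_lt hlogc_le hsumW))
    calc ‖g (brandtPath ε k ω i) * ∏ j ∈ Finset.range i, c (brandtPath ε k ω j)‖
        = |g (brandtPath ε k ω i)| * ∏ j ∈ Finset.range i, |c (brandtPath ε k ω j)| := by
          rw [Real.norm_eq_abs, abs_mul, Finset.abs_prod]
      _ ≤ Real.exp (δ * i) * Real.exp ((α / 2) * i) := by
          refine mul_le_mul hgabs hprod (Finset.prod_nonneg fun j _ => abs_nonneg _)
            (Real.exp_pos _).le
      _ = Real.exp ((δ + α / 2) * i) := by rw [← Real.exp_add]; ring_nf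
      _ = (Real.exp (α / 4)) ^ i := by
          rw [← Real.exp_nat_mul]
          congr 1
          rw [hδ_def]
          ring
  have hsummable : Summable (fun i =>
      g (brandtPath ε k ω i) * ∏ j ∈ Finset.range i, c (brandtPath ε k ω j)) := by
    refine Summable.of_norm_bounded_eventually
      (summable_geometric_of_lt_one (r := Real.exp (α / 4)) (Real.exp_pos _).le
        (Real.exp_lt_one_iff.mpr (by linarith : α / 4 < 0))) ?_
    rwa [Nat.cofinite_eq_atTop]
  exact ⟨_, hsummable.hasSum.tendsto_sum_nat⟩

noncomputable def brandtH (c g : ℝ → ℝ) (m n : ℕ) : (Fin (m + n) → ℝ) → Fin n → ℝ :=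
  fun v i => brandtS c g m
    (fun j => if h : n - 1 - (i : ℕ) + j < m + n then v ⟨n - 1 - (i : ℕ) + j, h⟩ else 0)

lemma measurable_brandtH (c g : ℝ → ℝ) (hc : Measurable c) (hg : Measurable g) (m n : ℕ) :
    Measurable (brandtH c g m n) := by
  refine measurable_pi_lambda _ (fun i => ?_)
  refine (measurable_brandtS c g hc hg m).comp ?_
  refine measurable_pi_lambda _ (fun j => ?_)
  by_cases h : n - 1 - (i : ℕ) + j < m + n
  · simp only [dif_pos h]
    exact measurable_pi_apply _
  · simp only [dif_neg h]
    exact measurable_const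

lemma brandtH_comp {Ω : Type*} (ε : ℤ → Ω → ℝ) (c g : ℝ → ℝ) (m n : ℕ) (k : ℤ) (ω : Ω)
    (i : Fin n) :
    brandtS c g m (brandtPath ε (k + 1 + (i : ℕ)) ω)
      = brandtH c g m n (fun t : Fin (m + n) => ε (k + (n : ℤ) - 1 - (t : ℕ)) ω) i := by
  have hi := i.isLt
  refine brandtS_congr c g m (fun j hj => ?_)
  have hlt : n - 1 - (i : ℕ) + j < m + n := by omega
  show ε (k + 1 + (i : ℕ) - ((j : ℤ) + 1)) ω
      = (fun j : ℕ => if h : n - 1 - (i : ℕ) + j < m + n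
          then ε (k + (n : ℤ) - 1 - (((⟨n - 1 - (i : ℕ) + j, h⟩ : Fin (m + n)) : ℕ) : ℤ)) ω
          else 0) j
  simp only [dif_pos hlt]
  congr 1
  omega


/-- **Theorem 1 (Brandt).** If `E log⁺|g(ε₀)| < ∞`, `E log⁺|c(ε₀)| < ∞` and
`E log|c(ε₀)| < 0` (possibly `= −∞`, expressed by the positive part of the integral being
strictly smaller than the negative part), then for every `k ∈ ℤ` the series
`X_k = ∑_{i≥1} g(ε_{k−i}) ∏_{1≤j<i} c(ε_{k−j})` converges a.s., satisfies the stochastic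
recurrence `X_k = c(ε_{k−1}) X_{k−1} + g(ε_{k−1})` a.s., and is strictly stationary. -/
theorem augmented_garch_existence_stationary
    {Ω : Type*} [MeasurableSpace Ω] (P : Measure Ω) [IsProbabilityMeasure P]
    (ε : ℤ → Ω → ℝ) (c g : ℝ → ℝ)
    (hc : Measurable c) (hg : Measurable g)
    (hεmeas : ∀ k, Measurable (ε k))
    (hindep : iIndepFun ε P)
    (hident : ∀ k, IdentDistrib (ε k) (ε 0) P P)
    (hlogg : Integrable (fun ω => Real.log (max |g (ε 0 ω)| 1)) P)
    (hlogc : Integrable (fun ω => Real.log (max |c (ε 0 ω)| 1)) P)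
    (hneg : ∫⁻ ω, ENNReal.ofReal (Real.log |c (ε 0 ω)|) ∂P
        < ∫⁻ ω, ENNReal.ofReal (-(Real.log |c (ε 0 ω)|)) ∂P) :
    ∃ X : ℤ → Ω → ℝ, (∀ k, Measurable (X k)) ∧
      (∀ k : ℤ, ∀ᵐ ω ∂P, Tendsto
        (fun m => ∑ i ∈ Finset.range m,
          g (ε (k - (i + 1)) ω) * ∏ j ∈ Finset.range i, c (ε (k - (j + 1)) ω))
        atTop (nhds (X k ω))) ∧
      (∀ k : ℤ, ∀ᵐ ω ∂P, X k ω = c (ε (k - 1) ω) * X (k - 1) ω + g (ε (k - 1) ω)) ∧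
      (∀ n : ℕ, 1 ≤ n → ∀ k : ℤ,
        Measure.map (fun ω => fun i : Fin n => X (k + 1 + (i : ℕ)) ω) P
          = Measure.map (fun ω => fun i : Fin n => X (1 + (i : ℕ)) ω) P) := by
  classical
  set X : ℤ → Ω → ℝ := fun k ω => brandtL c g (brandtPath ε k ω) with hX_def
  have hpathmeas : ∀ k : ℤ, Measurable (fun ω => brandtPath ε k ω) :=
    fun k => measurable_pi_lambda _ (fun j => hεmeas _)
  have hXmeas : ∀ k, Measurable (X k) :=
    fun k => (measurable_brandtL c g hc hg).comp (hpathmeas k)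
  have hconv := brandt_conv P ε c g hc hg hεmeas hindep hident hlogg hlogc hneg
  have htend : ∀ k : ℤ, ∀ᵐ ω ∂P,
      Tendsto (fun m => brandtS c g m (brandtPath ε k ω)) atTop (𝓝 (X k ω)) := by
    intro k
    filter_upwards [hconv k] with ω hω
    obtain ⟨l, hl⟩ := hω
    have hXl : X k ω = l := brandtL_tendsto c g hl
    rwa [hXl]
  refine ⟨X, hXmeas, fun k => htend k, ?_, ?_⟩
  · -- recurrence
    intro k
    filter_upwards [htend k, htend (k - 1)] with ω h1 h2
    have h1' : Tendsto (fun m => brandtS c g (m + 1) (brandtPath ε k ω)) atTop (𝓝 (X k ω)) :=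
      h1.comp (tendsto_add_atTop_nat 1)
    have h1'' : Tendsto (fun m => g (ε (k - 1) ω)
        + c (ε (k - 1) ω) * brandtS c g m (brandtPath ε (k - 1) ω)) atTop (𝓝 (X k ω)) :=
      h1'.congr (fun m => brandtS_succ ε c g k ω m)
    have h3 : Tendsto (fun m => g (ε (k - 1) ω)
        + c (ε (k - 1) ω) * brandtS c g m (brandtPath ε (k - 1) ω)) atTop
        (𝓝 (g (ε (k - 1) ω) + c (ε (k - 1) ω) * X (k - 1) ω)) :=
      tendsto_const_nhds.add (tendsto_const_nhds.mul h2)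
    have h4 := tendsto_nhds_unique h1'' h3
    rw [h4]; ring
  · -- stationarity
    intro n hn k
    haveI : IsProbabilityMeasure (Measure.map (ε 0) P) :=
      Measure.isProbabilityMeasure_map (hεmeas 0).aemeasurable
    have hvecmeas : ∀ k' : ℤ, Measurable (fun ω => fun i : Fin n => X (k' + 1 + (i : ℕ)) ω) :=
      fun k' => measurable_pi_lambda _ (fun i => hXmeas _)
    have hvecmmeas : ∀ (m : ℕ) (k' : ℤ), Measurable
        (fun ω => fun i : Fin n => brandtS c g m (brandtPath ε (k' + 1 + (i : ℕ)) ω)) :=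
      fun m k' => measurable_pi_lambda _
        (fun i => (measurable_brandtS c g hc hg m).comp (hpathmeas _))
    -- the law of the truncated vector does not depend on k
    have hlawm : ∀ (m : ℕ) (k' : ℤ),
        Measure.map (fun ω => fun i : Fin n =>
            brandtS c g m (brandtPath ε (k' + 1 + (i : ℕ)) ω)) P
          = Measure.map (brandtH c g m n)
              (Measure.pi (fun _ : Fin (m + n) => Measure.map (ε 0) P)) := by
      intro m k'
      have hwinj : Function.Injective (fun t : Fin (m + n) => k' + (n : ℤ) - 1 - (t : ℕ)) := by
        intro a b hab
        simp only at hab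
        exact Fin.ext (by omega)
      have hwinmeas : Measurable (fun ω => fun t : Fin (m + n) =>
          ε (k' + (n : ℤ) - 1 - (t : ℕ)) ω) :=
        measurable_pi_lambda _ (fun t => hεmeas _)
      have hwin := brandt_window_law P ε hεmeas hindep hident (m + n)
        (fun t => k' + (n : ℤ) - 1 - (t : ℕ)) hwinj
      calc Measure.map (fun ω => fun i : Fin n =>
              brandtS c g m (brandtPath ε (k' + 1 + (i : ℕ)) ω)) P
          = Measure.map (brandtH c g m n ∘ (fun ω => fun t : Fin (m + n) =>
              ε (k' + (n : ℤ) - 1 - (t : ℕ)) ω)) P := by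
            congr 1
            funext ω
            exact funext (fun i => brandtH_comp ε c g m n k' ω i)
        _ = Measure.map (brandtH c g m n)
              (Measure.map (fun ω => fun t : Fin (m + n) =>
                ε (k' + (n : ℤ) - 1 - (t : ℕ)) ω) P) :=
            (Measure.map_map (measurable_brandtH c g hc hg m n) hwinmeas).symm
        _ = Measure.map (brandtH c g m n)
              (Measure.pi (fun _ : Fin (m + n) => Measure.map (ε 0) P)) := by rw [hwin]
    haveI : IsProbabilityMeasure
        (Measure.map (fun ω => fun i : Fin n => X (k + 1 + (i : ℕ)) ω) P) :=
      Measure.isProbabilityMeasure_map (hvecmeas k).aemeasurable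
    apply ext_of_forall_lintegral_eq_of_IsFiniteMeasure
    intro f
    have hfm : Measurable fun x : Fin n → ℝ => (f x : ℝ≥0∞) :=
      measurable_coe_nnreal_ennreal.comp f.continuous.measurable
    rw [lintegral_map hfm (hvecmeas k),
      lintegral_map hfm (measurable_pi_lambda _ (fun i : Fin n => hXmeas (1 + (i : ℕ))))]
    have key : ∀ k' : ℤ, Tendsto (fun m => ∫⁻ ω,
        (f (fun i : Fin n => brandtS c g m (brandtPath ε (k' + 1 + (i : ℕ)) ω)) : ℝ≥0∞) ∂P)
        atTop (𝓝 (∫⁻ ω, (f (fun i : Fin n => X (k' + 1 + (i : ℕ)) ω) : ℝ≥0∞) ∂P)) := by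
      intro k'
      refine tendsto_lintegral_of_dominated_convergence
        (fun _ => ((nndist f 0 : ℝ≥0) : ℝ≥0∞))
        (fun m => hfm.comp (hvecmmeas m k')) (fun m => Eventually.of_forall fun ω => ?_) ?_ ?_
      · refine ENNReal.coe_le_coe.mpr ?_
        have := f.nndist_coe_le_nndist (g := 0)
          (fun i : Fin n => brandtS c g m (brandtPath ε (k' + 1 + (i : ℕ)) ω))
        simpa only [BoundedContinuousFunction.coe_zero, Pi.zero_apply,
          NNReal.nndist_zero_eq_val'] using this
      · rw [lintegral_const, measure_univ, mul_one]
        exact ENNReal.coe_ne_top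
      · have hae : ∀ᵐ ω ∂P, ∀ i : Fin n, Tendsto
            (fun m => brandtS c g m (brandtPath ε (k' + 1 + (i : ℕ)) ω)) atTop
            (𝓝 (X (k' + 1 + (i : ℕ)) ω)) := ae_all_iff.2 fun i => htend _
        filter_upwards [hae] with ω hω
        have hv : Tendsto (fun m => fun i : Fin n =>
            brandtS c g m (brandtPath ε (k' + 1 + (i : ℕ)) ω)) atTop
            (𝓝 (fun i => X (k' + 1 + (i : ℕ)) ω)) := tendsto_pi_nhds.mpr hω
        exact ENNReal.tendsto_coe.mpr ((f.continuous.tendsto _).comp hv)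
    have heq : ∀ m : ℕ, (∫⁻ ω,
        (f (fun i : Fin n => brandtS c g m (brandtPath ε (k + 1 + (i : ℕ)) ω)) : ℝ≥0∞) ∂P)
        = ∫⁻ ω,
        (f (fun i : Fin n => brandtS c g m (brandtPath ε (0 + 1 + (i : ℕ)) ω)) : ℝ≥0∞) ∂P := by
      intro m
      rw [← lintegral_map hfm (hvecmmeas m k), ← lintegral_map hfm (hvecmmeas m 0),
        hlawm m k, hlawm m 0]
    have key0 := key 0
    have keyk := (key k).congr heq
    have hfin := tendsto_nhds_unique keyk key0
    simp only [zero_add] at hfin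
    exact hfin
end

section
/- Let μ > 0 and assume E[|g(ε₀)|^μ] < ∞ and E[|c(ε₀)|^μ] < 1. Then the series X₀ = ∑_{i=1}^∞ g(ε_{−i}) ∏_{1≤j<i} c(ε_{−j}) converges almost surely and E[|X₀|^μ] < ∞. -/
open MeasureTheory ProbabilityTheory Filter

/-- Expectation of a product of independent `ℝ≥0∞`-valued random variables over a finset. -/
lemma indep_lintegral_finset_prod {Ω ι : Type*} [MeasurableSpace Ω] {P : Measure Ω}
    [IsProbabilityMeasure P] (f : ι → Ω → ENNReal) (hm : ∀ i, Measurable (f i))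
    (h : iIndepFun f P) (s : Finset ι) :
    ∫⁻ ω, ∏ k ∈ s, f k ω ∂P = ∏ k ∈ s, ∫⁻ ω, f k ω ∂P := by
  classical
  induction s using Finset.induction_on with
  | empty => simp
  | @insert a s ha ih =>
    have hindep2 : IndepFun (f a) (fun ω => ∏ k ∈ s, f k ω) P := by
      have h1 := (h.indepFun_finsetProd_of_notMem hm ha).symm
      simpa [Finset.prod_fn] using h1
    calc ∫⁻ ω, ∏ k ∈ insert a s, f k ω ∂P
        = ∫⁻ ω, f a ω * ∏ k ∈ s, f k ω ∂P := by
          simp [Finset.prod_insert ha]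
      _ = (∫⁻ ω, f a ω ∂P) * ∫⁻ ω, ∏ k ∈ s, f k ω ∂P :=
          lintegral_mul_eq_lintegral_mul_lintegral_of_indepFun'' (hm a).aemeasurable
            (Finset.measurable_prod s fun k _ => hm k).aemeasurable hindep2
      _ = ∏ k ∈ insert a s, ∫⁻ ω, f k ω ∂P := by rw [ih, Finset.prod_insert ha]

/-- `(∑' i, x i) ^ μ ≤ ∑' i, (x i) ^ μ` for `0 < μ ≤ 1` in `ℝ≥0∞`. -/
lemma ennreal_tsum_rpow_le {μ : ℝ} (hμ : 0 < μ) (hμ1 : μ ≤ 1) (x : ℕ → ENNReal) :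
    (∑' i, x i) ^ μ ≤ ∑' i, x i ^ μ := by
  have hfin : ∀ s : Finset ℕ, (∑ i ∈ s, x i) ^ μ ≤ ∑ i ∈ s, x i ^ μ := by
    intro s
    induction s using Finset.induction_on with
    | empty => simp [ENNReal.zero_rpow_of_pos hμ]
    | @insert a s ha ih =>
      rw [Finset.sum_insert ha, Finset.sum_insert ha]
      exact (ENNReal.rpow_add_le_add_rpow _ _ hμ.le hμ1).trans (add_le_add le_rfl ih)
  have h1 : Tendsto (fun n => (∑ i ∈ Finset.range n, x i) ^ μ) atTop
      (nhds ((∑' i, x i) ^ μ)) :=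
    (ENNReal.continuous_rpow_const.tendsto _).comp (ENNReal.tendsto_nat_tsum x)
  refine le_of_tendsto h1 (Filter.Eventually.of_forall fun n => (hfin _).trans ?_)
  exact ENNReal.sum_le_tsum _

/-- **Theorem 3, sufficiency.** If `E|g(ε₀)|^μ < ∞` and `E|c(ε₀)|^μ < 1` for some `μ > 0`,
then the series `X₀ = ∑_{i≥1} g(ε_{−i}) ∏_{1≤j<i} c(ε_{−j})` converges a.s. and
`E|X₀|^μ < ∞`. -/
theorem augmented_garch_moment_sufficient
    {Ω : Type*} [MeasurableSpace Ω] (P : Measure Ω) [IsProbabilityMeasure P]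
    (ε : ℤ → Ω → ℝ) (c g : ℝ → ℝ)
    (hc : Measurable c) (hg : Measurable g)
    (hεmeas : ∀ k, Measurable (ε k))
    (hindep : iIndepFun ε P)
    (hident : ∀ k, IdentDistrib (ε k) (ε 0) P P)
    (μ : ℝ) (hμ : 0 < μ)
    (hgmom : ∫⁻ ω, ENNReal.ofReal (|g (ε 0 ω)| ^ μ) ∂P < ⊤)
    (hcmom : ∫⁻ ω, ENNReal.ofReal (|c (ε 0 ω)| ^ μ) ∂P < 1) :
    ∃ X₀ : Ω → ℝ, Measurable X₀ ∧
      (∀ᵐ ω ∂P, Tendsto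
        (fun m => ∑ i ∈ Finset.range m,
          g (ε (0 - (i + 1) : ℤ) ω) * ∏ j ∈ Finset.range i, c (ε (0 - (j + 1) : ℤ) ω))
        atTop (nhds (X₀ ω))) ∧
      ∫⁻ ω, ENNReal.ofReal (|X₀ ω| ^ μ) ∂P < ⊤ := by
  classical
  set m : ℕ → ℤ := fun j => (0 - (j + 1) : ℤ) with hm_def
  have hm_inj : Function.Injective m := by
    intro a b hab
    simp only [m] at hab
    omega
  set T : ℕ → Ω → ℝ := fun i ω =>
    g (ε (m i) ω) * ∏ j ∈ Finset.range i, c (ε (m j) ω) with hT_def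
  have hTmeas : ∀ i, Measurable (T i) := fun i =>
    (hg.comp (hεmeas _)).mul (Finset.measurable_prod _ fun j _ => hc.comp (hεmeas _))
  set A := ∫⁻ ω, ENNReal.ofReal (|c (ε 0 ω)| ^ μ) ∂P with hA_def
  set B := ∫⁻ ω, ENNReal.ofReal (|g (ε 0 ω)| ^ μ) ∂P with hB_def
  have hA1 : A < 1 := hcmom
  have hBtop : B < ⊤ := hgmom
  have hoc' : ∀ x : ℝ, ENNReal.ofReal |x| ^ μ = ENNReal.ofReal (|x| ^ μ) := fun x =>
    ENNReal.ofReal_rpow_of_nonneg (abs_nonneg x) hμ.le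
  -- measurability of the basic composed maps
  have hφg : Measurable fun x : ℝ => ENNReal.ofReal (|g x| ^ μ) :=
    ENNReal.measurable_ofReal.comp ((Real.continuous_rpow_const hμ.le).measurable.comp hg.abs)
  have hφc : Measurable fun x : ℝ => ENNReal.ofReal (|c x| ^ μ) :=
    ENNReal.measurable_ofReal.comp ((Real.continuous_rpow_const hμ.le).measurable.comp hc.abs)
  -- the key moment identity
  have key : ∀ i, ∫⁻ ω, ENNReal.ofReal (|T i ω| ^ μ) ∂P = B * A ^ i := by
    intro i
    set φ : ℤ → ℝ → ENNReal := fun k x =>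
      if k = m i then ENNReal.ofReal (|g x| ^ μ) else ENNReal.ofReal (|c x| ^ μ) with hφ_def
    have hφmeas : ∀ k, Measurable (φ k) := by
      intro k
      dsimp only [φ]
      split
      · exact hφg
      · exact hφc
    set Z : ℤ → Ω → ENNReal := fun k => φ k ∘ ε k with hZ_def
    have hZindep : iIndepFun Z P := hindep.comp φ hφmeas
    have hZmeas : ∀ k, Measurable (Z k) := fun k => (hφmeas k).comp (hεmeas k)
    have hZi : ∀ ω, Z (m i) ω = ENNReal.ofReal (|g (ε (m i) ω)| ^ μ) := by
      intro ω; simp [Z, φ]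
    have hZj : ∀ j, j ≠ i → ∀ ω, Z (m j) ω = ENNReal.ofReal (|c (ε (m j) ω)| ^ μ) := by
      intro j hj ω
      simp only [Z, φ, Function.comp_apply]
      rw [if_neg fun h => hj (hm_inj h)]
    have hpoint : ∀ ω, ENNReal.ofReal (|T i ω| ^ μ) = ∏ j ∈ Finset.range (i + 1), Z (m j) ω := by
      intro ω
      have habs : |T i ω| = |g (ε (m i) ω)| * ∏ j ∈ Finset.range i, |c (ε (m j) ω)| := by
        rw [hT_def]; dsimp only; rw [abs_mul, Finset.abs_prod]
      have hpow : |T i ω| ^ μ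
          = |g (ε (m i) ω)| ^ μ * ∏ j ∈ Finset.range i, |c (ε (m j) ω)| ^ μ := by
        rw [habs, Real.mul_rpow (abs_nonneg _) (Finset.prod_nonneg fun j _ => abs_nonneg _),
          ← Real.finset_prod_rpow _ _ (fun j _ => abs_nonneg _) μ]
      rw [hpow, ENNReal.ofReal_mul (Real.rpow_nonneg (abs_nonneg _) μ),
        ENNReal.ofReal_prod_of_nonneg fun j _ => Real.rpow_nonneg (abs_nonneg _) μ,
        Finset.prod_range_succ, hZi ω,
        Finset.prod_congr rfl fun j hj => (hZj j (Finset.mem_range.1 hj).ne ω).symm]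
      ring
    have hAj : ∀ j, j ≠ i → ∫⁻ ω, Z (m j) ω ∂P = A := by
      intro j hj
      have h1 : IdentDistrib (Z (m j)) (fun ω => ENNReal.ofReal (|c (ε 0 ω)| ^ μ)) P P := by
        have h2 := (hident (m j)).comp hφc
        have h3 : Z (m j) = (fun x => ENNReal.ofReal (|c x| ^ μ)) ∘ ε (m j) := by
          funext ω; exact hZj j hj ω
        rw [h3]
        exact h2
      exact h1.lintegral_eq
    have hBi : ∫⁻ ω, Z (m i) ω ∂P = B := by
      have h1 : IdentDistrib (Z (m i)) (fun ω => ENNReal.ofReal (|g (ε 0 ω)| ^ μ)) P P := by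
        have h2 := (hident (m i)).comp hφg
        have h3 : Z (m i) = (fun x => ENNReal.ofReal (|g x| ^ μ)) ∘ ε (m i) := by
          funext ω; exact hZi ω
        rw [h3]
        exact h2
      exact h1.lintegral_eq
    calc ∫⁻ ω, ENNReal.ofReal (|T i ω| ^ μ) ∂P
        = ∫⁻ ω, ∏ k ∈ (Finset.range (i + 1)).image m, Z k ω ∂P := by
          refine lintegral_congr fun ω => ?_
          rw [hpoint ω, Finset.prod_image fun a _ b _ h => hm_inj h]
      _ = ∏ k ∈ (Finset.range (i + 1)).image m, ∫⁻ ω, Z k ω ∂P :=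
          indep_lintegral_finset_prod Z hZmeas hZindep _
      _ = ∏ j ∈ Finset.range (i + 1), ∫⁻ ω, Z (m j) ω ∂P :=
          Finset.prod_image fun a _ b _ h => hm_inj h
      _ = (∏ j ∈ Finset.range i, ∫⁻ ω, Z (m j) ω ∂P) * ∫⁻ ω, Z (m i) ω ∂P :=
          Finset.prod_range_succ _ _
      _ = B * A ^ i := by
          rw [hBi, Finset.prod_congr rfl fun j hj => hAj j (Finset.mem_range.1 hj).ne,
            Finset.prod_const, Finset.card_range, mul_comm]
  -- the ENNReal-valued series of absolute values
  set N : Ω → ENNReal := fun ω => ∑' i, ENNReal.ofReal |T i ω| with hN_def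
  have hNmeas : Measurable N :=
    Measurable.ennreal_tsum fun i => ENNReal.measurable_ofReal.comp (hTmeas i).abs
  have hsum_mom : ∑' i, (B * A ^ i) = B * (1 - A)⁻¹ := by
    rw [ENNReal.tsum_mul_left, ENNReal.tsum_geometric]
  have hBA_top : B * (1 - A)⁻¹ < ⊤ := by
    refine ENNReal.mul_lt_top hBtop ?_
    rw [ENNReal.inv_lt_top]
    exact tsub_pos_of_lt hA1
  -- `p`-related quantities for the case μ > 1
  set p : ENNReal := ENNReal.ofReal μ with hp_def
  have hp0 : p ≠ 0 := by
    simp only [p, ne_eq, ENNReal.ofReal_eq_zero, not_le]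
    exact hμ
  have hptop : p ≠ ⊤ := ENNReal.ofReal_ne_top
  have hp_toReal : p.toReal = μ := ENNReal.toReal_ofReal hμ.le
  have help : ∀ f : Ω → ℝ,
      eLpNorm f p P = (∫⁻ ω, ENNReal.ofReal (|f ω| ^ μ) ∂P) ^ (1 / μ) := by
    intro f
    rw [eLpNorm_eq_lintegral_rpow_enorm_toReal hp0 hptop, hp_toReal]
    congr 1
    refine lintegral_congr fun ω => ?_
    rw [Real.enorm_eq_ofReal_abs, hoc']
  have hTelp : ∀ i, eLpNorm (T i) p P = (B * A ^ i) ^ (1 / μ) := by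
    intro i
    rw [help, key]
  -- geometric bound for (B * A^i)^(1/μ)
  set r : ENNReal := A ^ (1 / μ) with hr_def
  have hr1 : r < 1 := ENNReal.rpow_lt_one hA1 (by positivity)
  have hBA_rpow : ∀ i : ℕ, (B * A ^ i) ^ (1 / μ) = B ^ (1 / μ) * r ^ i := by
    intro i
    rw [ENNReal.mul_rpow_of_nonneg _ _ (by positivity)]
    congr 1
    rw [← ENNReal.rpow_natCast A i, ← ENNReal.rpow_mul, hr_def,
      ← ENNReal.rpow_natCast (A ^ (1 / μ)) i, ← ENNReal.rpow_mul, mul_comm (i : ℝ) (1 / μ)]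
  have hsum_rpow : ∑' i : ℕ, (B * A ^ i) ^ (1 / μ) = B ^ (1 / μ) * (1 - r)⁻¹ := by
    simp_rw [hBA_rpow]
    rw [ENNReal.tsum_mul_left, ENNReal.tsum_geometric]
  have hsum_rpow_top : B ^ (1 / μ) * (1 - r)⁻¹ < ⊤ := by
    refine ENNReal.mul_lt_top (ENNReal.rpow_lt_top_of_nonneg (by positivity) hBtop.ne) ?_
    rw [ENNReal.inv_lt_top]
    exact tsub_pos_of_lt hr1
  -- finiteness of ∫ N^μ in the case μ ≤ 1
  have hNrpow_lt : μ ≤ 1 → ∫⁻ ω, N ω ^ μ ∂P < ⊤ := by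
    intro hμ1
    have hle : ∀ ω, N ω ^ μ ≤ ∑' i, ENNReal.ofReal (|T i ω| ^ μ) := by
      intro ω
      refine (ennreal_tsum_rpow_le hμ hμ1 _).trans ?_
      exact ENNReal.tsum_le_tsum fun i => le_of_eq (hoc' _)
    calc ∫⁻ ω, N ω ^ μ ∂P ≤ ∫⁻ ω, ∑' i, ENNReal.ofReal (|T i ω| ^ μ) ∂P := lintegral_mono hle
      _ = ∑' i, ∫⁻ ω, ENNReal.ofReal (|T i ω| ^ μ) ∂P :=
          lintegral_tsum fun i =>
            (ENNReal.measurable_ofReal.comp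
              (((Real.continuous_rpow_const hμ.le).measurable).comp (hTmeas i).abs)).aemeasurable
      _ = B * (1 - A)⁻¹ := by simp_rw [key]; exact hsum_mom
      _ < ⊤ := hBA_top
  -- finiteness of ∫ N in the case 1 < μ
  have hN1_lt : 1 < μ → ∫⁻ ω, N ω ∂P < ⊤ := by
    intro hμ1
    have hT1 : ∀ i, ∫⁻ ω, ENNReal.ofReal |T i ω| ∂P ≤ (B * A ^ i) ^ (1 / μ) := by
      intro i
      have h1 : ∫⁻ ω, ENNReal.ofReal |T i ω| ∂P = eLpNorm (T i) 1 P := by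
        rw [eLpNorm_one_eq_lintegral_enorm]
        exact lintegral_congr fun ω => (Real.enorm_eq_ofReal_abs _).symm
      rw [h1, ← hTelp i]
      exact eLpNorm_le_eLpNorm_of_exponent_le
        (by rw [hp_def]; exact_mod_cast ENNReal.one_le_ofReal.2 hμ1.le)
        (hTmeas i).aestronglyMeasurable
    calc ∫⁻ ω, N ω ∂P = ∑' i, ∫⁻ ω, ENNReal.ofReal |T i ω| ∂P :=
          lintegral_tsum fun i =>
            (ENNReal.measurable_ofReal.comp (hTmeas i).abs).aemeasurable
      _ ≤ ∑' i : ℕ, (B * A ^ i) ^ (1 / μ) := ENNReal.tsum_le_tsum hT1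
      _ = B ^ (1 / μ) * (1 - r)⁻¹ := hsum_rpow
      _ < ⊤ := hsum_rpow_top
  -- a.e. finiteness of N
  have hNfin : ∀ᵐ ω ∂P, N ω < ⊤ := by
    rcases le_or_gt μ 1 with hμ1 | hμ1
    · have h1 : ∀ᵐ ω ∂P, N ω ^ μ ≠ ⊤ :=
        ae_lt_top (ENNReal.continuous_rpow_const.measurable.comp hNmeas)
          (hNrpow_lt hμ1).ne |>.mono fun ω h => h.ne
      filter_upwards [h1] with ω h
      rw [lt_top_iff_ne_top]
      intro hN
      exact h (by rw [hN]; exact ENNReal.top_rpow_of_pos hμ)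
    · have h1 := ae_lt_top hNmeas (hN1_lt hμ1).ne
      exact h1
  -- the candidate limit
  set Xp : Ω → ENNReal := fun ω => ∑' i, ENNReal.ofReal (T i ω) with hXp_def
  set Xm : Ω → ENNReal := fun ω => ∑' i, ENNReal.ofReal (-T i ω) with hXm_def
  set X₀ : Ω → ℝ := fun ω => (Xp ω).toReal - (Xm ω).toReal with hX_def
  have hXpmeas : Measurable Xp :=
    Measurable.ennreal_tsum fun i => ENNReal.measurable_ofReal.comp (hTmeas i)
  have hXmmeas : Measurable Xm :=
    Measurable.ennreal_tsum fun i => ENNReal.measurable_ofReal.comp (hTmeas i).neg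
  have hXmeas : Measurable X₀ := hXpmeas.ennreal_toReal.sub hXmmeas.ennreal_toReal
  -- pointwise identities
  have hsplit : ∀ (x : ℝ), ENNReal.ofReal x + ENNReal.ofReal (-x) = ENNReal.ofReal |x| := by
    intro x
    rcases le_total 0 x with hx | hx
    · rw [ENNReal.ofReal_of_nonpos (show -x ≤ 0 by linarith), add_zero, abs_of_nonneg hx]
    · rw [ENNReal.ofReal_of_nonpos hx, zero_add, abs_of_nonpos hx]
  have hXpN : ∀ ω, Xp ω ≤ N ω := by
    intro ω
    calc Xp ω ≤ Xp ω + Xm ω := le_self_add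
      _ = N ω := by
        rw [hXp_def, hXm_def, hN_def, ← ENNReal.tsum_add]
        exact tsum_congr fun i => hsplit _
  have hXmN : ∀ ω, Xm ω ≤ N ω := by
    intro ω
    calc Xm ω ≤ Xp ω + Xm ω := le_add_self
      _ = N ω := by
        rw [hXp_def, hXm_def, hN_def, ← ENNReal.tsum_add]
        exact tsum_congr fun i => hsplit _
  -- partial sums identity
  have hpartial : ∀ (n : ℕ) (ω : Ω), ∑ i ∈ Finset.range n, T i ω
      = (∑ i ∈ Finset.range n, ENNReal.ofReal (T i ω)).toReal
        - (∑ i ∈ Finset.range n, ENNReal.ofReal (-T i ω)).toReal := by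
    intro n ω
    rw [ENNReal.toReal_sum fun i _ => ENNReal.ofReal_ne_top,
      ENNReal.toReal_sum fun i _ => ENNReal.ofReal_ne_top, ← Finset.sum_sub_distrib]
    refine Finset.sum_congr rfl fun i _ => ?_
    rcases le_total 0 (T i ω) with hx | hx
    · rw [ENNReal.toReal_ofReal hx, ENNReal.ofReal_of_nonpos (show -T i ω ≤ 0 by linarith),
        ENNReal.toReal_zero, sub_zero]
    · rw [ENNReal.ofReal_of_nonpos hx, ENNReal.toReal_zero,
        ENNReal.toReal_ofReal (by linarith), zero_sub, neg_neg]
  -- a.e. convergence of partial sums to X₀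
  have htend : ∀ᵐ ω ∂P, Tendsto (fun n => ∑ i ∈ Finset.range n, T i ω)
      atTop (nhds (X₀ ω)) := by
    filter_upwards [hNfin] with ω hNω
    have hXptop : Xp ω ≠ ⊤ := ((hXpN ω).trans_lt hNω).ne
    have hXmtop : Xm ω ≠ ⊤ := ((hXmN ω).trans_lt hNω).ne
    have h1 : Tendsto (fun n => (∑ i ∈ Finset.range n, ENNReal.ofReal (T i ω)).toReal)
        atTop (nhds (Xp ω).toReal) :=
      (ENNReal.tendsto_toReal hXptop).comp (ENNReal.tendsto_nat_tsum _)
    have h2 : Tendsto (fun n => (∑ i ∈ Finset.range n, ENNReal.ofReal (-T i ω)).toReal)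
        atTop (nhds (Xm ω).toReal) :=
      (ENNReal.tendsto_toReal hXmtop).comp (ENNReal.tendsto_nat_tsum _)
    have h3 := h1.sub h2
    rw [hX_def]
    refine Tendsto.congr (fun n => (hpartial n ω).symm) h3
  -- ofReal |X₀| ≤ N a.e.
  have hXabs : ∀ᵐ ω ∂P, ENNReal.ofReal |X₀ ω| ≤ N ω := by
    filter_upwards [hNfin] with ω hNω
    have hXptop : Xp ω ≠ ⊤ := ((hXpN ω).trans_lt hNω).ne
    have hXmtop : Xm ω ≠ ⊤ := ((hXmN ω).trans_lt hNω).ne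
    have habs : |X₀ ω| ≤ (Xp ω).toReal + (Xm ω).toReal := by
      rw [hX_def]
      exact (abs_sub _ _).trans (by
        rw [abs_of_nonneg ENNReal.toReal_nonneg, abs_of_nonneg ENNReal.toReal_nonneg])
    calc ENNReal.ofReal |X₀ ω| ≤ ENNReal.ofReal ((Xp ω).toReal + (Xm ω).toReal) :=
          ENNReal.ofReal_le_ofReal habs
      _ = Xp ω + Xm ω := by
          rw [ENNReal.ofReal_add ENNReal.toReal_nonneg ENNReal.toReal_nonneg,
            ENNReal.ofReal_toReal hXptop, ENNReal.ofReal_toReal hXmtop]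
      _ = N ω := by
          rw [hXp_def, hXm_def, hN_def, ← ENNReal.tsum_add]
          exact tsum_congr fun i => hsplit _
  -- the moment bound
  have hmom : ∫⁻ ω, ENNReal.ofReal (|X₀ ω| ^ μ) ∂P < ⊤ := by
    rcases le_or_gt μ 1 with hμ1 | hμ1
    · calc ∫⁻ ω, ENNReal.ofReal (|X₀ ω| ^ μ) ∂P ≤ ∫⁻ ω, N ω ^ μ ∂P := by
            refine lintegral_mono_ae ?_
            filter_upwards [hXabs] with ω hω
            rw [← hoc']
            exact ENNReal.rpow_le_rpow hω hμ.le
        _ < ⊤ := hNrpow_lt hμ1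
    · -- Fatou argument
      set S : ℕ → Ω → ℝ := fun n ω => ∑ i ∈ Finset.range n, T i ω with hS_def
      have hSmeas : ∀ n, Measurable (S n) := fun n =>
        Finset.measurable_sum _ fun i _ => hTmeas i
      have hSbound : ∀ n, ∫⁻ ω, ENNReal.ofReal (|S n ω| ^ μ) ∂P
          ≤ (B ^ (1 / μ) * (1 - r)⁻¹) ^ μ := by
        intro n
        have h1 : (∫⁻ ω, ENNReal.ofReal (|S n ω| ^ μ) ∂P) ^ (1 / μ)
            ≤ B ^ (1 / μ) * (1 - r)⁻¹ := by
          rw [← help]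
          have h2 : S n = ∑ i ∈ Finset.range n, T i := by
            funext ω; simp [S, Finset.sum_apply]
          rw [h2]
          calc eLpNorm (∑ i ∈ Finset.range n, T i) p P
              ≤ ∑ i ∈ Finset.range n, eLpNorm (T i) p P :=
                eLpNorm_sum_le (fun i _ => (hTmeas i).aestronglyMeasurable)
                  (by rw [hp_def]; exact_mod_cast ENNReal.one_le_ofReal.2 hμ1.le)
            _ = ∑ i ∈ Finset.range n, (B * A ^ i) ^ (1 / μ) :=
                Finset.sum_congr rfl fun i _ => hTelp i
            _ ≤ ∑' i : ℕ, (B * A ^ i) ^ (1 / μ) := ENNReal.sum_le_tsum _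
            _ = B ^ (1 / μ) * (1 - r)⁻¹ := hsum_rpow
        calc ∫⁻ ω, ENNReal.ofReal (|S n ω| ^ μ) ∂P
            = ((∫⁻ ω, ENNReal.ofReal (|S n ω| ^ μ) ∂P) ^ (1 / μ)) ^ μ := by
              rw [← ENNReal.rpow_mul, one_div, inv_mul_cancel₀ hμ.ne', ENNReal.rpow_one]
          _ ≤ (B ^ (1 / μ) * (1 - r)⁻¹) ^ μ := ENNReal.rpow_le_rpow h1 hμ.le
      have hliminf : ∀ᵐ ω ∂P, ENNReal.ofReal (|X₀ ω| ^ μ)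
          = liminf (fun n => ENNReal.ofReal (|S n ω| ^ μ)) atTop := by
        filter_upwards [htend] with ω hω
        have hcont : Tendsto (fun n => ENNReal.ofReal (|S n ω| ^ μ)) atTop
            (nhds (ENNReal.ofReal (|X₀ ω| ^ μ))) := by
          have hc1 : Continuous fun x : ℝ => ENNReal.ofReal (|x| ^ μ) :=
            ENNReal.continuous_ofReal.comp
              ((Real.continuous_rpow_const hμ.le).comp continuous_abs)
          exact (hc1.tendsto _).comp hω
        exact hcont.liminf_eq.symm
      calc ∫⁻ ω, ENNReal.ofReal (|X₀ ω| ^ μ) ∂P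
          = ∫⁻ ω, liminf (fun n => ENNReal.ofReal (|S n ω| ^ μ)) atTop ∂P :=
            lintegral_congr_ae hliminf
        _ ≤ liminf (fun n => ∫⁻ ω, ENNReal.ofReal (|S n ω| ^ μ) ∂P) atTop :=
            lintegral_liminf_le fun n =>
              ENNReal.measurable_ofReal.comp
                (((Real.continuous_rpow_const hμ.le).measurable).comp (hSmeas n).abs)
        _ ≤ liminf (fun _ : ℕ => (B ^ (1 / μ) * (1 - r)⁻¹) ^ μ) atTop :=
            liminf_le_liminf (Filter.Eventually.of_forall hSbound)
        _ = (B ^ (1 / μ) * (1 - r)⁻¹) ^ μ := liminf_const _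
        _ < ⊤ := ENNReal.rpow_lt_top_of_nonneg hμ.le hsum_rpow_top.ne
  exact ⟨X₀, hXmeas, htend, hmom⟩
end

section
/- Let μ > 0 and assume E[|ε₀|^{2μ}] < ∞. Assume there is a constant c with 0 ≤ c < 1 such that |c(ε₀)| ≤ c almost surely, and assume E[exp(μ|g(ε₀)|)] < ∞. Then the series X₀ converges almost surely and E[|y₀|^{2μ}] < ∞. -/
open MeasureTheory ProbabilityTheory Filter Topology

private lemma lintegral_finset_prod_of_iIndepFun {Ω : Type*} [MeasurableSpace Ω]
    {P : Measure Ω} [IsProbabilityMeasure P] {ι : Type*} {f : ι → Ω → ENNReal}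
    (h : iIndepFun f P) (hm : ∀ i, Measurable (f i))
    (s : Finset ι) :
    ∫⁻ ω, ∏ i ∈ s, f i ω ∂P = ∏ i ∈ s, ∫⁻ ω, f i ω ∂P := by
  classical
  induction s using Finset.induction_on with
  | empty => simp
  | @insert i s hi ih =>
    have hindep : IndepFun (f i) (∏ j ∈ s, f j) P :=
      (h.indepFun_finsetProd_of_notMem hm hi).symm
    have hmp : Measurable (∏ j ∈ s, f j) := by
      have : (∏ j ∈ s, f j) = fun a => ∏ j ∈ s, f j a := funext fun a => by simp
      rw [this]; exact Finset.measurable_prod s (fun j _ => hm j)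
    have key := lintegral_mul_eq_lintegral_mul_lintegral_of_indepFun (hm i) hmp hindep
    rw [Finset.prod_insert hi]
    calc ∫⁻ ω, ∏ j ∈ insert i s, f j ω ∂P
        = ∫⁻ ω, (f i * ∏ j ∈ s, f j) ω ∂P := by
          apply lintegral_congr; intro ω
          simp [Finset.prod_insert hi]
      _ = (∫⁻ ω, f i ω ∂P) * ∫⁻ ω, (∏ j ∈ s, f j) ω ∂P := key
      _ = (∫⁻ ω, f i ω ∂P) * ∏ j ∈ s, ∫⁻ ω, f j ω ∂P := by
          rw [← ih]; apply congrArg; apply lintegral_congr; intro ω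
          simp

private lemma exp_mul_le_one_add {t x : ℝ} (ht0 : 0 ≤ t) (ht1 : t ≤ 1) :
    Real.exp (t * x) ≤ 1 + t * Real.exp x := by
  have h : Real.exp (t • x + (1 - t) • (0 : ℝ)) ≤ t • Real.exp x + (1 - t) • Real.exp 0 :=
    convexOn_exp.2 (Set.mem_univ x) (Set.mem_univ (0 : ℝ)) ht0 (by linarith) (by ring)
  simp only [smul_eq_mul, mul_zero, add_zero, Real.exp_zero, mul_one] at h
  nlinarith [Real.exp_pos x]

/-- **Proposition 1, sufficiency.** For an exponential augmented GARCH process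
(`Λ(x) = log x`, so `σ₀² = exp X₀` and `y₀ = exp(X₀/2) ε₀`): if `|c(ε₀)| ≤ c < 1` a.s.,
`E exp(μ|g(ε₀)|) < ∞` and `E|ε₀|^{2μ} < ∞`, then the series `X₀` converges a.s. and
`E|y₀|^{2μ} < ∞`. -/
theorem exponential_garch_moment_sufficient
    {Ω : Type*} [MeasurableSpace Ω] (P : Measure Ω) [IsProbabilityMeasure P]
    (ε : ℤ → Ω → ℝ) (c g : ℝ → ℝ)
    (hc : Measurable c) (hg : Measurable g)
    (hεmeas : ∀ k, Measurable (ε k))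
    (hindep : iIndepFun ε P)
    (hident : ∀ k, IdentDistrib (ε k) (ε 0) P P)
    (μ : ℝ) (hμ : 0 < μ)
    (hεmom : ∫⁻ ω, ENNReal.ofReal (|ε 0 ω| ^ (2 * μ)) ∂P < ⊤)
    (c₀ : ℝ) (hc₀0 : 0 ≤ c₀) (hc₀1 : c₀ < 1)
    (hcbd : ∀ᵐ ω ∂P, |c (ε 0 ω)| ≤ c₀)
    (hgmom : ∫⁻ ω, ENNReal.ofReal (Real.exp (μ * |g (ε 0 ω)|)) ∂P < ⊤) :
    ∃ X₀ : Ω → ℝ, Measurable X₀ ∧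
      (∀ᵐ ω ∂P, Tendsto
        (fun m => ∑ i ∈ Finset.range m,
          g (ε (0 - (i + 1) : ℤ) ω) * ∏ j ∈ Finset.range i, c (ε (0 - (j + 1) : ℤ) ω))
        atTop (nhds (X₀ ω))) ∧
      ∫⁻ ω, ENNReal.ofReal (|Real.exp (X₀ ω / 2) * ε 0 ω| ^ (2 * μ)) ∂P < ⊤ := by
  classical
  -- index map
  set κ : ℕ → ℤ := fun i => (0 - (i + 1) : ℤ) with hκdef
  have hκinj : Function.Injective κ := by
    intro a b h
    simp only [hκdef] at h; omega
  have hκ0 : ∀ i, κ i ≠ 0 := by intro i; simp only [hκdef]; omega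
  -- the summands
  set term : ℕ → Ω → ℝ :=
    fun i ω => g (ε (0 - (i + 1) : ℤ) ω) * ∏ j ∈ Finset.range i, c (ε (0 - (j + 1) : ℤ) ω)
    with htermdef
  have htermmeas : ∀ i, Measurable (term i) := by
    intro i
    exact (hg.comp (hεmeas _)).mul
      (Finset.measurable_prod _ fun j _ => hc.comp (hεmeas _))
  -- a.e. bound on |c (ε k)| for every k
  have hcb : ∀ k : ℤ, ∀ᵐ ω ∂P, |c (ε k ω)| ≤ c₀ := by
    intro k
    have hs : MeasurableSet {x : ℝ | ¬|c x| ≤ c₀} :=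
      (measurableSet_le hc.abs measurable_const).compl
    rw [ae_iff] at hcbd ⊢
    have h1 : {ω | ¬|c (ε k ω)| ≤ c₀} = ε k ⁻¹' {x | ¬|c x| ≤ c₀} := rfl
    have h2 : {ω | ¬|c (ε 0 ω)| ≤ c₀} = ε 0 ⁻¹' {x | ¬|c x| ≤ c₀} := rfl
    rw [h1, ← Measure.map_apply (hεmeas k) hs, (hident k).map_eq,
      Measure.map_apply (hεmeas 0) hs]
    rw [h2] at hcbd
    exact hcbd
  have hcball : ∀ᵐ ω ∂P, ∀ i : ℕ, |c (ε (0 - (i + 1) : ℤ) ω)| ≤ c₀ :=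
    ae_all_iff.2 fun i => hcb _
  -- dominating sequence
  set G : ℕ → Ω → ℝ := fun i ω => c₀ ^ i * |g (ε (0 - (i + 1) : ℤ) ω)| with hGdef
  have hGnn : ∀ i ω, 0 ≤ G i ω := fun i ω => by
    simp only [hGdef]; positivity
  have hGmeas : ∀ i, Measurable fun ω => ENNReal.ofReal (G i ω) := fun i =>
    ((hg.comp (hεmeas _)).abs.const_mul _).ennreal_ofReal
  -- identical distribution transfer for lintegrals
  have hlid : ∀ (k : ℤ) (ψ : ℝ → ENNReal), Measurable ψ →
      ∫⁻ ω, ψ (ε k ω) ∂P = ∫⁻ ω, ψ (ε 0 ω) ∂P := fun k ψ hψ =>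
    ((hident k).comp hψ).lintegral_eq
  -- integrability of |g(ε₀)|
  have hgabs : ∫⁻ ω, ENNReal.ofReal |g (ε 0 ω)| ∂P < ⊤ := by
    have hle : ∀ ω, ENNReal.ofReal |g (ε 0 ω)| ≤
        ENNReal.ofReal μ⁻¹ * ENNReal.ofReal (Real.exp (μ * |g (ε 0 ω)|)) := by
      intro ω
      rw [← ENNReal.ofReal_mul (by positivity)]
      apply ENNReal.ofReal_le_ofReal
      have h1 : μ * |g (ε 0 ω)| ≤ Real.exp (μ * |g (ε 0 ω)|) := by
        have := Real.add_one_le_exp (μ * |g (ε 0 ω)|); linarith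
      rw [inv_mul_eq_div, le_div_iff₀ hμ]
      linarith [h1, mul_comm μ |g (ε 0 ω)|]
    calc ∫⁻ ω, ENNReal.ofReal |g (ε 0 ω)| ∂P
        ≤ ∫⁻ ω, ENNReal.ofReal μ⁻¹ * ENNReal.ofReal (Real.exp (μ * |g (ε 0 ω)|)) ∂P :=
          lintegral_mono hle
      _ = ENNReal.ofReal μ⁻¹ * ∫⁻ ω, ENNReal.ofReal (Real.exp (μ * |g (ε 0 ω)|)) ∂P :=
          lintegral_const_mul _ (((hg.comp (hεmeas 0)).abs.const_mul μ).exp.ennreal_ofReal)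
      _ < ⊤ := ENNReal.mul_lt_top ENNReal.ofReal_lt_top hgmom
  -- a.e. summability of G
  have htsumlt : ∫⁻ ω, ∑' i, ENNReal.ofReal (G i ω) ∂P < ⊤ := by
    rw [lintegral_tsum fun i => (hGmeas i).aemeasurable]
    have heach : ∀ i, ∫⁻ ω, ENNReal.ofReal (G i ω) ∂P =
        ENNReal.ofReal c₀ ^ i * ∫⁻ ω, ENNReal.ofReal |g (ε 0 ω)| ∂P := by
      intro i
      have h1 : ∀ ω, ENNReal.ofReal (G i ω) =
          ENNReal.ofReal c₀ ^ i * ENNReal.ofReal |g (ε (0 - (i + 1) : ℤ) ω)| := by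
        intro ω
        simp only [hGdef]
        rw [ENNReal.ofReal_mul (by positivity), ENNReal.ofReal_pow hc₀0]
      have hm' : Measurable fun ω => ENNReal.ofReal |g (ε (0 - (i + 1) : ℤ) ω)| :=
        (hg.comp (hεmeas _)).abs.ennreal_ofReal
      rw [lintegral_congr h1, lintegral_const_mul _ hm',
        hlid _ (fun x => ENNReal.ofReal |g x|) (hg.abs.ennreal_ofReal)]
    calc ∑' i, ∫⁻ ω, ENNReal.ofReal (G i ω) ∂P
        = ∑' i, ENNReal.ofReal c₀ ^ i * ∫⁻ ω, ENNReal.ofReal |g (ε 0 ω)| ∂P :=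
          tsum_congr heach
      _ = (1 - ENNReal.ofReal c₀)⁻¹ * ∫⁻ ω, ENNReal.ofReal |g (ε 0 ω)| ∂P := by
          rw [ENNReal.tsum_mul_right, ENNReal.tsum_geometric]
      _ < ⊤ := by
          refine ENNReal.mul_lt_top ?_ hgabs
          rw [ENNReal.inv_lt_top]
          simp only [tsub_pos_iff_lt]
          exact ENNReal.ofReal_lt_one.2 hc₀1
  have hsumG : ∀ᵐ ω ∂P, Summable fun i => G i ω := by
    have h := ae_lt_top (Measurable.ennreal_tsum hGmeas) htsumlt.ne
    filter_upwards [h] with ω hω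
    have := ENNReal.summable_toReal hω.ne
    exact this.congr fun i => ENNReal.toReal_ofReal (hGnn i ω)
  -- term bound
  have htermbd : ∀ᵐ ω ∂P, ∀ i, |term i ω| ≤ G i ω := by
    filter_upwards [hcball] with ω hω i
    have hprod : |∏ j ∈ Finset.range i, c (ε (0 - (j + 1) : ℤ) ω)| ≤ c₀ ^ i := by
      rw [Finset.abs_prod]
      calc ∏ j ∈ Finset.range i, |c (ε (0 - (j + 1) : ℤ) ω)|
          ≤ ∏ _j ∈ Finset.range i, c₀ :=
            Finset.prod_le_prod (fun _ _ => abs_nonneg _) (fun j _ => hω j)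
        _ = c₀ ^ i := by simp
    calc |term i ω|
        = |g (ε (0 - (i + 1) : ℤ) ω)| * |∏ j ∈ Finset.range i, c (ε (0 - (j + 1) : ℤ) ω)| :=
          abs_mul _ _
      _ ≤ |g (ε (0 - (i + 1) : ℤ) ω)| * c₀ ^ i :=
          mul_le_mul_of_nonneg_left hprod (abs_nonneg _)
      _ = G i ω := mul_comm _ _
  -- a.e. existence of the limit of partial sums
  have haetend : ∀ᵐ ω ∂P, ∃ l : ℝ,
      Tendsto (fun m => ∑ i ∈ Finset.range m, term i ω) atTop (𝓝 l) := by
    filter_upwards [hsumG, htermbd] with ω h1 h2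
    have habs : Summable fun i => |term i ω| :=
      Summable.of_nonneg_of_le (fun i => abs_nonneg _) h2 h1
    exact ⟨_, habs.of_abs.hasSum.tendsto_sum_nat⟩
  obtain ⟨X₀, hX₀meas, hX₀tend⟩ :=
    measurable_limit_of_tendsto_metrizable_ae (μ := P) (L := atTop)
      (f := fun m ω => ∑ i ∈ Finset.range m, term i ω)
      (fun m => (Finset.measurable_sum _ fun i _ => htermmeas i).aemeasurable) haetend
  refine ⟨X₀, hX₀meas, hX₀tend, ?_⟩
  -- the independent factor functions
  set φ : ℤ → ℝ → ENNReal := fun k x =>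
    if k = 0 then ENNReal.ofReal (|x| ^ (2 * μ))
    else if k < 0 then ENNReal.ofReal (Real.exp (μ * c₀ ^ (-k - 1).toNat * |g x|))
    else 1 with hφdef
  have hφmeas : ∀ k, Measurable (φ k) := by
    intro k
    rcases lt_trichotomy k 0 with hk | hk | hk
    · have : φ k = fun x => ENNReal.ofReal (Real.exp (μ * c₀ ^ (-k - 1).toNat * |g x|)) := by
        funext x; simp only [hφdef]; rw [if_neg (by omega), if_pos hk]
      rw [this]
      exact ((hg.abs.const_mul _)).exp.ennreal_ofReal
    · have : φ k = fun x => ENNReal.ofReal (|x| ^ (2 * μ)) := by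
        funext x; simp only [hφdef]; rw [if_pos hk]
      rw [this]
      exact ((Real.continuous_rpow_const (by positivity)).measurable.comp
        measurable_abs).ennreal_ofReal
    · have : φ k = fun _ => 1 := by
        funext x; simp only [hφdef]; rw [if_neg (by omega), if_neg (by omega)]
      rw [this]; exact measurable_const
  set f : ℤ → Ω → ENNReal := fun k ω => φ k (ε k ω) with hfdef
  have hfmeas : ∀ k, Measurable (f k) := fun k => (hφmeas k).comp (hεmeas k)
  have hfind : iIndepFun f P := hindep.comp φ hφmeas
  have hf0 : f 0 = fun ω => ENNReal.ofReal (|ε 0 ω| ^ (2 * μ)) := by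
    funext ω; simp [hfdef, hφdef]
  have hfκ : ∀ i : ℕ, f (κ i) =
      fun ω => ENNReal.ofReal (Real.exp (μ * c₀ ^ i * |g (ε (κ i) ω)|)) := by
    intro i; funext ω
    have he : ((-(κ i) - 1).toNat) = i := by simp only [hκdef]; omega
    simp only [hfdef, hφdef]
    rw [if_neg (by simp only [hκdef]; omega), if_pos (by simp only [hκdef]; omega), he]
  -- the finite index sets
  set S : ℕ → Finset ℤ := fun n => insert 0 ((Finset.range n).image κ) with hSdef
  have h0S : ∀ n, (0 : ℤ) ∉ (Finset.range n).image κ := by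
    intro n h; obtain ⟨i, _, hi⟩ := Finset.mem_image.1 h; exact hκ0 i hi
  have hprodS : ∀ n ω, ∏ k ∈ S n, f k ω = f 0 ω * ∏ i ∈ Finset.range n, f (κ i) ω := by
    intro n ω
    rw [hSdef, Finset.prod_insert (h0S n), Finset.prod_image fun a _ b _ h => hκinj h]
  -- bound on lintegrals of the exponential factors
  set A : ENNReal := ∫⁻ ω, ENNReal.ofReal (Real.exp (μ * |g (ε 0 ω)|)) ∂P with hAdef
  have hAlt : A ≠ ⊤ := hgmom.ne
  set Ar : ℝ := A.toReal with hArdef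
  have hArnn : 0 ≤ Ar := ENNReal.toReal_nonneg
  have hAi : ∀ i : ℕ, ∫⁻ ω, f (κ i) ω ∂P ≤ ENNReal.ofReal (Real.exp (c₀ ^ i * Ar)) := by
    intro i
    have hmeasi : Measurable fun x : ℝ => ENNReal.ofReal (Real.exp (μ * c₀ ^ i * |g x|)) :=
      ((hg.abs.const_mul _)).exp.ennreal_ofReal
    have h1 : ∫⁻ ω, f (κ i) ω ∂P
        = ∫⁻ ω, ENNReal.ofReal (Real.exp (μ * c₀ ^ i * |g (ε 0 ω)|)) ∂P := by
      rw [hfκ i]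
      exact hlid (κ i) _ hmeasi
    rw [h1]
    have h2 : ∀ ω, ENNReal.ofReal (Real.exp (μ * c₀ ^ i * |g (ε 0 ω)|)) ≤
        1 + ENNReal.ofReal (c₀ ^ i) * ENNReal.ofReal (Real.exp (μ * |g (ε 0 ω)|)) := by
      intro ω
      have hexp : Real.exp (μ * c₀ ^ i * |g (ε 0 ω)|) ≤
          1 + c₀ ^ i * Real.exp (μ * |g (ε 0 ω)|) := by
        have h3 := exp_mul_le_one_add (t := c₀ ^ i) (x := μ * |g (ε 0 ω)|)
          (by positivity) (pow_le_one₀ hc₀0 hc₀1.le)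
        have h4 : μ * c₀ ^ i * |g (ε 0 ω)| = c₀ ^ i * (μ * |g (ε 0 ω)|) := by ring
        rw [h4]; exact h3
      calc ENNReal.ofReal (Real.exp (μ * c₀ ^ i * |g (ε 0 ω)|))
          ≤ ENNReal.ofReal (1 + c₀ ^ i * Real.exp (μ * |g (ε 0 ω)|)) :=
            ENNReal.ofReal_le_ofReal hexp
        _ ≤ ENNReal.ofReal 1 + ENNReal.ofReal (c₀ ^ i * Real.exp (μ * |g (ε 0 ω)|)) :=
            ENNReal.ofReal_add_le
        _ = 1 + ENNReal.ofReal (c₀ ^ i) * ENNReal.ofReal (Real.exp (μ * |g (ε 0 ω)|)) := by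
            rw [ENNReal.ofReal_one, ENNReal.ofReal_mul (by positivity)]
    calc ∫⁻ ω, ENNReal.ofReal (Real.exp (μ * c₀ ^ i * |g (ε 0 ω)|)) ∂P
        ≤ ∫⁻ ω, (1 + ENNReal.ofReal (c₀ ^ i) *
            ENNReal.ofReal (Real.exp (μ * |g (ε 0 ω)|))) ∂P := lintegral_mono h2
      _ = 1 + ENNReal.ofReal (c₀ ^ i) * A := by
          have hm'' : Measurable fun ω => ENNReal.ofReal (Real.exp (μ * |g (ε 0 ω)|)) :=
            ((hg.comp (hεmeas 0)).abs.const_mul μ).exp.ennreal_ofReal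
          rw [lintegral_add_left measurable_const, lintegral_const_mul _ hm'',
            lintegral_const, measure_univ, mul_one]
      _ ≤ ENNReal.ofReal (Real.exp (c₀ ^ i * Ar)) := by
          have hA' : A = ENNReal.ofReal Ar := (ENNReal.ofReal_toReal hAlt).symm
          rw [hA', ← ENNReal.ofReal_mul (by positivity), ← ENNReal.ofReal_one,
            ← ENNReal.ofReal_add (by norm_num) (by positivity)]
          apply ENNReal.ofReal_le_ofReal
          have := Real.add_one_le_exp (c₀ ^ i * Ar)
          linarith
  -- uniform bound on products
  have hgeom : ∀ n, ∑ i ∈ Finset.range n, c₀ ^ i ≤ (1 - c₀)⁻¹ := by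
    intro n
    have hsummable : Summable fun i : ℕ => c₀ ^ i := summable_geometric_of_lt_one hc₀0 hc₀1
    calc ∑ i ∈ Finset.range n, c₀ ^ i ≤ ∑' i, c₀ ^ i :=
        Summable.sum_le_tsum _ (fun i _ => by positivity) hsummable
      _ = (1 - c₀)⁻¹ := tsum_geometric_of_lt_one hc₀0 hc₀1
  set K : ENNReal := ENNReal.ofReal (Real.exp ((1 - c₀)⁻¹ * Ar)) with hKdef
  have hprodA : ∀ n, ∏ i ∈ Finset.range n, ∫⁻ ω, f (κ i) ω ∂P ≤ K := by
    intro n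
    calc ∏ i ∈ Finset.range n, ∫⁻ ω, f (κ i) ω ∂P
        ≤ ∏ i ∈ Finset.range n, ENNReal.ofReal (Real.exp (c₀ ^ i * Ar)) :=
          Finset.prod_le_prod' fun i _ => hAi i
      _ = ENNReal.ofReal (∏ i ∈ Finset.range n, Real.exp (c₀ ^ i * Ar)) :=
          (ENNReal.ofReal_prod_of_nonneg fun i _ => (Real.exp_pos _).le).symm
      _ = ENNReal.ofReal (Real.exp (∑ i ∈ Finset.range n, c₀ ^ i * Ar)) := by
          rw [Real.exp_sum]
      _ ≤ K := by
          apply ENNReal.ofReal_le_ofReal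
          apply Real.exp_le_exp.2
          rw [← Finset.sum_mul]
          exact mul_le_mul_of_nonneg_right (hgeom n) hArnn
  have hint : ∀ n, ∫⁻ ω, ∏ k ∈ S n, f k ω ∂P ≤
      (∫⁻ ω, ENNReal.ofReal (|ε 0 ω| ^ (2 * μ)) ∂P) * K := by
    intro n
    rw [lintegral_finset_prod_of_iIndepFun hfind hfmeas (S n), hSdef,
      Finset.prod_insert (h0S n), Finset.prod_image fun a _ b _ h => hκinj h]
    have h0 : ∫⁻ ω, f 0 ω ∂P = ∫⁻ ω, ENNReal.ofReal (|ε 0 ω| ^ (2 * μ)) ∂P := by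
      rw [hf0]
    rw [h0]
    exact mul_le_mul_right (hprodA n) _
  -- pointwise identity for the target integrand
  have hid : ∀ x y : ℝ, ENNReal.ofReal (|Real.exp (x / 2) * y| ^ (2 * μ)) =
      ENNReal.ofReal (Real.exp (μ * x)) * ENNReal.ofReal (|y| ^ (2 * μ)) := by
    intro x y
    rw [abs_mul, abs_of_pos (Real.exp_pos _),
      Real.mul_rpow (Real.exp_pos _).le (abs_nonneg _),
      Real.rpow_def_of_pos (Real.exp_pos _), Real.log_exp,
      show x / 2 * (2 * μ) = μ * x by ring,
      ENNReal.ofReal_mul (Real.exp_pos _).le]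
  -- a.e. domination by the liminf
  have hkey : ∀ᵐ ω ∂P,
      ENNReal.ofReal (|Real.exp (X₀ ω / 2) * ε 0 ω| ^ (2 * μ)) ≤
      liminf (fun n => ∏ k ∈ S n, f k ω) atTop := by
    filter_upwards [hX₀tend, htermbd] with ω hten hbd
    rw [hid]
    set b : ENNReal := ENNReal.ofReal (|ε 0 ω| ^ (2 * μ)) with hbdef
    have h1 : Tendsto (fun n => ENNReal.ofReal
        (Real.exp (μ * ∑ i ∈ Finset.range n, term i ω)) * b) atTop
        (𝓝 (ENNReal.ofReal (Real.exp (μ * X₀ ω)) * b)) := by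
      have ht0 : Tendsto (fun n => ∑ i ∈ Finset.range n, term i ω) atTop (𝓝 (X₀ ω)) := hten
      have ht1 := ht0.const_mul μ
      have ht2 := (Real.continuous_exp.continuousAt.tendsto).comp ht1
      have ht3 := (ENNReal.continuous_ofReal.continuousAt.tendsto).comp ht2
      exact ENNReal.Tendsto.mul_const ht3 (Or.inr ENNReal.ofReal_ne_top)
    have h2 : ∀ n, ENNReal.ofReal (Real.exp (μ * ∑ i ∈ Finset.range n, term i ω)) * b ≤
        ∏ k ∈ S n, f k ω := by
      intro n
      rw [hprodS n ω]
      have hb : f 0 ω = b := by rw [hf0]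
      have hstep : ENNReal.ofReal (Real.exp (μ * ∑ i ∈ Finset.range n, term i ω)) ≤
          ∏ i ∈ Finset.range n, f (κ i) ω := by
        have hsle : ∑ i ∈ Finset.range n, term i ω ≤ ∑ i ∈ Finset.range n, G i ω :=
          Finset.sum_le_sum fun i _ => (le_abs_self _).trans (hbd i)
        have hexp : Real.exp (μ * ∑ i ∈ Finset.range n, term i ω) ≤
            ∏ i ∈ Finset.range n, Real.exp (μ * c₀ ^ i * |g (ε (κ i) ω)|) := by
          rw [← Real.exp_sum]
          apply Real.exp_le_exp.2
          calc μ * ∑ i ∈ Finset.range n, term i ω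
              ≤ μ * ∑ i ∈ Finset.range n, G i ω := mul_le_mul_of_nonneg_left hsle hμ.le
            _ = ∑ i ∈ Finset.range n, μ * c₀ ^ i * |g (ε (κ i) ω)| := by
                rw [Finset.mul_sum]
                refine Finset.sum_congr rfl fun i _ => ?_
                simp only [hGdef, hκdef]; ring
        calc ENNReal.ofReal (Real.exp (μ * ∑ i ∈ Finset.range n, term i ω))
            ≤ ENNReal.ofReal
                (∏ i ∈ Finset.range n, Real.exp (μ * c₀ ^ i * |g (ε (κ i) ω)|)) :=
              ENNReal.ofReal_le_ofReal hexp
          _ = ∏ i ∈ Finset.range n,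
                ENNReal.ofReal (Real.exp (μ * c₀ ^ i * |g (ε (κ i) ω)|)) :=
              ENNReal.ofReal_prod_of_nonneg fun i _ => (Real.exp_pos _).le
          _ = ∏ i ∈ Finset.range n, f (κ i) ω := by
              refine Finset.prod_congr rfl fun i _ => ?_
              rw [hfκ i]
      calc ENNReal.ofReal (Real.exp (μ * ∑ i ∈ Finset.range n, term i ω)) * b
          ≤ (∏ i ∈ Finset.range n, f (κ i) ω) * b := mul_le_mul_left hstep b
        _ = f 0 ω * ∏ i ∈ Finset.range n, f (κ i) ω := by rw [hb, mul_comm]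
    calc ENNReal.ofReal (Real.exp (μ * X₀ ω)) * b
        = liminf (fun n => ENNReal.ofReal
            (Real.exp (μ * ∑ i ∈ Finset.range n, term i ω)) * b) atTop :=
          h1.liminf_eq.symm
      _ ≤ liminf (fun n => ∏ k ∈ S n, f k ω) atTop :=
          liminf_le_liminf (Eventually.of_forall h2)
  -- conclusion
  calc ∫⁻ ω, ENNReal.ofReal (|Real.exp (X₀ ω / 2) * ε 0 ω| ^ (2 * μ)) ∂P
      ≤ ∫⁻ ω, liminf (fun n => ∏ k ∈ S n, f k ω) atTop ∂P := lintegral_mono_ae hkey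
    _ ≤ liminf (fun n => ∫⁻ ω, ∏ k ∈ S n, f k ω ∂P) atTop :=
        lintegral_liminf_le fun n => Finset.measurable_prod _ fun k _ => hfmeas k
    _ ≤ (∫⁻ ω, ENNReal.ofReal (|ε 0 ω| ^ (2 * μ)) ∂P) * K := by
        calc liminf (fun n => ∫⁻ ω, ∏ k ∈ S n, f k ω ∂P) atTop
            ≤ liminf (fun _ : ℕ =>
                (∫⁻ ω, ENNReal.ofReal (|ε 0 ω| ^ (2 * μ)) ∂P) * K) atTop :=
              liminf_le_liminf (Eventually.of_forall hint)
          _ = _ := liminf_const _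
    _ < ⊤ := ENNReal.mul_lt_top hεmom ENNReal.ofReal_lt_top
end

section
/- Assume c(ε₀) ≥ 0 and g(ε₀) ≥ 0 almost surely, the series X₀ converges almost surely, and E[η₀²] < ∞. Then there exist constants C₁ > 0 and 0 < ϱ < 1 such that for all k ∈ ℤ and all m ≥ 1, (E[(η_k − η_{k,m})²])^{1/2} ≤ C₁ ϱ^m. -/
open MeasureTheory ProbabilityTheory Filter

namespace PolyGarchAux

open scoped NNReal ENNReal
set_option linter.unusedSectionVars false

/-! ### Auxiliary real inequalities -/

lemma rpow_diff_le {α : ℝ} (hα : 0 < α) {u v : ℝ} (hv : 0 ≤ v) (hvu : v ≤ u) :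
    u ^ α - v ^ α ≤ max α 1 * ((u - v) ^ min α 1 * u ^ (α - min α 1)) := by
  have h0u : 0 ≤ u := hv.trans hvu
  have h0uv : 0 ≤ u - v := sub_nonneg.2 hvu
  rcases le_or_gt α 1 with hα1 | hα1
  · rw [min_eq_left hα1, sub_self, Real.rpow_zero, mul_one]
    have key : u ^ α ≤ (u - v) ^ α + v ^ α := by
      have h := NNReal.rpow_add_le_add_rpow (u - v).toNNReal v.toNNReal hα.le hα1
      have hcoe : (((u - v).toNNReal + v.toNNReal : ℝ≥0) : ℝ) = u := by
        push_cast [Real.coe_toNNReal _ h0uv, Real.coe_toNNReal _ hv]; ring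
    
      calc u ^ α = (((u - v).toNNReal + v.toNNReal : ℝ≥0) : ℝ) ^ α := by rw [hcoe]
        _ = ((((u - v).toNNReal + v.toNNReal : ℝ≥0) ^ α : ℝ≥0) : ℝ) := by
            rw [NNReal.coe_rpow]
        _ ≤ (((u - v).toNNReal ^ α + v.toNNReal ^ α : ℝ≥0) : ℝ) := by exact_mod_cast h
        _ = (u - v) ^ α + v ^ α := by
            push_cast [NNReal.coe_rpow, Real.coe_toNNReal _ h0uv, Real.coe_toNNReal _ hv]
            ring
    have h1 : u ^ α - v ^ α ≤ (u - v) ^ α := by linarith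
    exact h1.trans (le_mul_of_one_le_left (Real.rpow_nonneg h0uv α) (le_max_right α 1))
  · rw [min_eq_right hα1.le, max_eq_left hα1.le, Real.rpow_one]
    rcases h0u.eq_or_lt with hu | hu
    · obtain rfl : u = 0 := hu.symm
      obtain rfl : v = 0 := le_antisymm hvu hv
      simp [Real.zero_rpow hα.ne']
    · set t := v / u with ht
      have ht0 : 0 ≤ t := div_nonneg hv hu.le
      have ht1 : t ≤ 1 := (div_le_one hu).2 hvu
      have hber : 1 + α * (t - 1) ≤ t ^ α := by
        have h := one_add_mul_self_le_rpow_one_add (by linarith : (-1:ℝ) ≤ t - 1) hα1.le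
        rwa [show (1:ℝ) + (t - 1) = t by ring] at h
      have hveq : v ^ α = u ^ α * t ^ α := by
        rw [← Real.mul_rpow hu.le ht0]
        congr 1
        rw [ht]; field_simp
      have hupow : u ^ (α - 1) * u = u ^ α := by
        calc u ^ (α - 1) * u = u ^ (α - 1) * u ^ (1:ℝ) := by rw [Real.rpow_one]
          _ = u ^ (α - 1 + 1) := (Real.rpow_add hu _ _).symm
          _ = u ^ α := by rw [show α - 1 + 1 = α by ring]
      have hprod : u - v = u * (1 - t) := by rw [ht]; field_simp
      calc u ^ α - v ^ α = u ^ α * (1 - t ^ α) := by rw [hveq]; ring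
        _ ≤ u ^ α * (α * (1 - t)) := by
            apply mul_le_mul_of_nonneg_left (by linarith) (Real.rpow_nonneg hu.le α)
        _ = α * ((u - v) * u ^ (α - 1)) := by rw [hprod, ← hupow]; ring

lemma sq_bound {α β ν : ℝ} (hα : 0 < α) (hβ : β = min α 1) {u v e : ℝ}
    (hv : 0 ≤ v) (hvu : v ≤ u) :
    ((u ^ α - v ^ α) * |e| ^ ν) ^ (2:ℝ) ≤
      (max α 1) ^ (2:ℝ) * ((u - v) ^ (β * 2) * (u ^ ((α - β) * 2) * |e| ^ (ν * 2))) := by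
  have h0u : 0 ≤ u := hv.trans hvu
  have h0uv : 0 ≤ u - v := sub_nonneg.2 hvu
  have hd : 0 ≤ u ^ α - v ^ α := sub_nonneg.2 (Real.rpow_le_rpow hv hvu hα.le)
  have he : 0 ≤ |e| ^ ν := Real.rpow_nonneg (abs_nonneg e) ν
  have key := rpow_diff_le hα hv hvu
  rw [← hβ] at key
  have hmax : (0:ℝ) ≤ max α 1 := le_max_of_le_right zero_le_one
  calc ((u ^ α - v ^ α) * |e| ^ ν) ^ (2:ℝ)
      = (u ^ α - v ^ α) ^ (2:ℝ) * (|e| ^ ν) ^ (2:ℝ) := Real.mul_rpow hd he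
    _ ≤ (max α 1 * ((u - v) ^ β * u ^ (α - β))) ^ (2:ℝ) * (|e| ^ ν) ^ (2:ℝ) := by
        refine mul_le_mul_of_nonneg_right ?_ (Real.rpow_nonneg he 2)
        exact Real.rpow_le_rpow hd key (by norm_num)
    _ = (max α 1) ^ (2:ℝ) * ((u - v) ^ (β * 2) * (u ^ ((α - β) * 2) * |e| ^ (ν * 2))) := by
        rw [Real.mul_rpow hmax
            (mul_nonneg (Real.rpow_nonneg h0uv β) (Real.rpow_nonneg h0u _)),
          Real.mul_rpow (Real.rpow_nonneg h0uv β) (Real.rpow_nonneg h0u _),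
          ← Real.rpow_mul h0uv, ← Real.rpow_mul h0u, ← Real.rpow_mul (abs_nonneg e)]
        ring

lemma f_zero {f : ℝ → ℝ} {ν : ℝ}
    (hf : (∀ x, f x = |x| ^ ν) ∨ (∀ x, f x = Real.sign x * |x| ^ ν)) (hν : 0 < ν) :
    f 0 = 0 := by
  rcases hf with h | h
  · rw [h]; simp [Real.zero_rpow hν.ne']
  · rw [h]; simp

lemma f_diff_abs {f : ℝ → ℝ} {ν γ : ℝ}
    (hf : (∀ x, f x = |x| ^ ν) ∨ (∀ x, f x = Real.sign x * |x| ^ ν))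
    (hν : 0 < ν) (hγ : 0 < γ) {u v e : ℝ} (hv : 0 ≤ v) (hvu : v ≤ u) :
    |f (u ^ γ * e) - f (v ^ γ * e)| = (u ^ (γ * ν) - v ^ (γ * ν)) * |e| ^ ν := by
  have h0u : 0 ≤ u := hv.trans hvu
  have habs : ∀ w : ℝ, 0 ≤ w → |w ^ γ * e| ^ ν = w ^ (γ * ν) * |e| ^ ν := by
    intro w hw
    rw [abs_mul, abs_of_nonneg (Real.rpow_nonneg hw γ),
      Real.mul_rpow (Real.rpow_nonneg hw γ) (abs_nonneg e), ← Real.rpow_mul hw]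
  have hmono : v ^ (γ * ν) ≤ u ^ (γ * ν) :=
    Real.rpow_le_rpow hv hvu (by positivity)
  have hnn : 0 ≤ (u ^ (γ * ν) - v ^ (γ * ν)) * |e| ^ ν :=
    mul_nonneg (by linarith) (Real.rpow_nonneg (abs_nonneg e) ν)
  rcases hf with h | h
  · rw [h, h, habs u h0u, habs v hv, ← sub_mul, abs_of_nonneg hnn]
  · have hsign : ∀ w : ℝ, 0 ≤ w →
        f (w ^ γ * e) = Real.sign e * (w ^ (γ * ν) * |e| ^ ν) := by
      intro w hw
      rcases hw.eq_or_lt with hw0 | hw0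
      · obtain rfl : w = 0 := hw0.symm
        rw [Real.zero_rpow hγ.ne', zero_mul, h, Real.zero_rpow (by positivity : γ * ν ≠ 0)]
        simp
      · rw [h, habs w hw]
        have hwp : 0 < w ^ γ := Real.rpow_pos_of_pos hw0 γ
        have : Real.sign (w ^ γ * e) = Real.sign e := by
          rcases lt_trichotomy e 0 with he | he | he
          · rw [Real.sign_of_neg he, Real.sign_of_neg (mul_neg_of_pos_of_neg hwp he)]
          · rw [he, mul_zero]
          · rw [Real.sign_of_pos he, Real.sign_of_pos (mul_pos hwp he)]
        rw [this]
    rw [hsign u h0u, hsign v hv, ← mul_sub, abs_mul, ← sub_mul, abs_of_nonneg hnn]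
    rcases eq_or_ne e 0 with rfl | he
    · simp [Real.zero_rpow hν.ne']
    · have hse : |Real.sign e| = 1 := by
        rcases lt_or_gt_of_ne he with h' | h'
        · rw [Real.sign_of_neg h']; norm_num
        · rw [Real.sign_of_pos h']; norm_num
      rw [hse, one_mul]

/-! ### The partial-sum functional -/

noncomputable def XmFun (c g : ℝ → ℝ) (n : ℕ) (w : Fin n → ℝ) : ℝ :=
  ∑ i : Fin n, g (w i) * ∏ j ∈ (Finset.range i.val).attach,
    c (w ⟨j.val, Nat.lt_trans (Finset.mem_range.mp j.property) i.isLt⟩)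

lemma XmFun_measurable {c g : ℝ → ℝ} (hc : Measurable c) (hg : Measurable g) (n : ℕ) :
    Measurable (XmFun c g n) := by
  apply Finset.measurable_sum
  intro i _
  exact (hg.comp (measurable_pi_apply i)).mul
    (Finset.measurable_prod _ fun j _ => hc.comp (measurable_pi_apply _))

/-! ### Independence helpers -/

variable {Ω : Type*} [MeasurableSpace Ω] {P : Measure Ω} [IsProbabilityMeasure P]
  {ε : ℤ → Ω → ℝ}

lemma lint_single (hεmeas : ∀ k, Measurable (ε k))
    (hident : ∀ k, IdentDistrib (ε k) (ε 0) P P)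
    (h : ℝ → ℝ≥0∞) (hh : Measurable h) (i : ℤ) :
    ∫⁻ ω, h (ε i ω) ∂P = ∫⁻ ω, h (ε 0 ω) ∂P := by
  rw [← lintegral_map hh (hεmeas i), ← lintegral_map hh (hεmeas 0), (hident i).map_eq]

lemma block_mul (hεmeas : ∀ k, Measurable (ε k))
    (hindep : iIndepFun ε P)
    {n₁ n₂ : ℕ} (a : Fin n₁ → ℤ) (b : Fin n₂ → ℤ) (hab : ∀ i j, a i ≠ b j)
    {F : (Fin n₁ → ℝ) → ℝ≥0∞} {G : (Fin n₂ → ℝ) → ℝ≥0∞}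
    (hF : Measurable F) (hG : Measurable G) :
    ∫⁻ ω, F (fun i => ε (a i) ω) * G (fun j => ε (b j) ω) ∂P
      = (∫⁻ ω, F (fun i => ε (a i) ω) ∂P) * ∫⁻ ω, G (fun j => ε (b j) ω) ∂P := by
  classical
  have hST : Disjoint (Finset.univ.image a) (Finset.univ.image b) := by
    rw [Finset.disjoint_left]
    rintro x hx hx'
    obtain ⟨i, -, rfl⟩ := Finset.mem_image.mp hx
    obtain ⟨j, -, hj⟩ := Finset.mem_image.mp hx'
    exact hab i j hj.symm
  have hbase := hindep.indepFun_finset _ _ hST hεmeas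
  let rA : (∀ x : (Finset.univ.image a : Finset ℤ), ℝ) → Fin n₁ → ℝ := fun v i =>
    v ⟨a i, Finset.mem_image_of_mem a (Finset.mem_univ i)⟩
  let rB : (∀ x : (Finset.univ.image b : Finset ℤ), ℝ) → Fin n₂ → ℝ := fun v j =>
    v ⟨b j, Finset.mem_image_of_mem b (Finset.mem_univ j)⟩
  have hrA : Measurable rA := measurable_pi_lambda _ fun i => measurable_pi_apply _
  have hrB : Measurable rB := measurable_pi_lambda _ fun j => measurable_pi_apply _
  have hcomp := hbase.comp (φ := F ∘ rA) (ψ := G ∘ rB) (hF.comp hrA) (hG.comp hrB)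
  exact lintegral_mul_eq_lintegral_mul_lintegral_of_indepFun
    (hF.comp (measurable_pi_lambda _ fun i => hεmeas (a i)))
    (hG.comp (measurable_pi_lambda _ fun j => hεmeas (b j))) hcomp

lemma block_mul3 (hεmeas : ∀ k, Measurable (ε k))
    (hindep : iIndepFun ε P)
    {n₁ n₂ n₃ : ℕ} (a : Fin n₁ → ℤ) (b : Fin n₂ → ℤ) (d : Fin n₃ → ℤ)
    (hab : ∀ i j, a i ≠ b j) (had : ∀ i j, a i ≠ d j) (hbd : ∀ i j, b i ≠ d j)
    {F : (Fin n₁ → ℝ) → ℝ≥0∞} {G : (Fin n₂ → ℝ) → ℝ≥0∞} {H : (Fin n₃ → ℝ) → ℝ≥0∞}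
    (hF : Measurable F) (hG : Measurable G) (hH : Measurable H) :
    ∫⁻ ω, F (fun i => ε (a i) ω) * (G (fun j => ε (b j) ω) * H (fun l => ε (d l) ω)) ∂P
      = (∫⁻ ω, F (fun i => ε (a i) ω) ∂P) *
        ((∫⁻ ω, G (fun j => ε (b j) ω) ∂P) * ∫⁻ ω, H (fun l => ε (d l) ω) ∂P) := by
  let K : (Fin (n₂ + n₃) → ℝ) → ℝ≥0∞ := fun w =>
    G (fun j => w (Fin.castAdd n₃ j)) * H (fun l => w (Fin.natAdd n₂ l))
  have hK : Measurable K :=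
    (hG.comp (measurable_pi_lambda _ fun j => measurable_pi_apply _)).mul
      (hH.comp (measurable_pi_lambda _ fun l => measurable_pi_apply _))
  have hKeq : ∀ ω, K (fun i => ε (Fin.append b d i) ω)
      = G (fun j => ε (b j) ω) * H (fun l => ε (d l) ω) := by
    intro ω
    simp only [K, Fin.append_left, Fin.append_right]
  have habd : ∀ i j, a i ≠ Fin.append b d j := by
    intro i j
    refine Fin.addCases (motive := fun j => a i ≠ Fin.append b d j) ?_ ?_ j
    · intro j'; simpa [Fin.append_left] using hab i j'
    · intro j'; simpa [Fin.append_right] using had i j'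
  calc ∫⁻ ω, F (fun i => ε (a i) ω) * (G (fun j => ε (b j) ω) * H (fun l => ε (d l) ω)) ∂P
      = ∫⁻ ω, F (fun i => ε (a i) ω) * K (fun i => ε (Fin.append b d i) ω) ∂P := by
        exact lintegral_congr fun ω => by rw [hKeq]
    _ = (∫⁻ ω, F (fun i => ε (a i) ω) ∂P) * ∫⁻ ω, K (fun i => ε (Fin.append b d i) ω) ∂P :=
        block_mul hεmeas hindep a (Fin.append b d) habd hF hK
    _ = (∫⁻ ω, F (fun i => ε (a i) ω) ∂P) *
        ((∫⁻ ω, G (fun j => ε (b j) ω) ∂P) * ∫⁻ ω, H (fun l => ε (d l) ω) ∂P) := by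
        congr 1
        rw [lintegral_congr hKeq]
        exact block_mul hεmeas hindep b d hbd hG hH

lemma lint_prod (hεmeas : ∀ k, Measurable (ε k))
    (hindep : iIndepFun ε P)
    (hident : ∀ k, IdentDistrib (ε k) (ε 0) P P)
    (φ : ℝ → ℝ≥0∞) (hφ : Measurable φ) :
    ∀ (m : ℕ) (a : Fin m → ℤ), Function.Injective a →
      ∫⁻ ω, ∏ j : Fin m, φ (ε (a j) ω) ∂P = (∫⁻ ω, φ (ε 0 ω) ∂P) ^ m := by
  intro m
  induction m with
  | zero =>
      intro a _
      simp
  | succ n ih =>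
      intro a ha
      have hsplit : ∀ ω, (∏ j : Fin (n+1), φ (ε (a j) ω))
          = (fun w : Fin 1 → ℝ => φ (w 0)) (fun _ => ε (a 0) ω) *
            (fun w : Fin n → ℝ => ∏ j, φ (w j)) (fun j => ε (a j.succ) ω) := by
        intro ω; simp [Fin.prod_univ_succ]
      rw [lintegral_congr hsplit]
      have hb := block_mul (P := P) hεmeas hindep (fun _ : Fin 1 => a 0)
          (fun j : Fin n => a j.succ)
          (fun i j h => (Fin.succ_ne_zero j) (ha h.symm))
          (F := fun w : Fin 1 → ℝ => φ (w 0)) (G := fun w : Fin n → ℝ => ∏ j, φ (w j))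
          (by exact hφ.comp (measurable_pi_apply 0))
          (by exact Finset.measurable_prod _ fun j _ => hφ.comp (measurable_pi_apply j))
      rw [hb, ih (fun j => a j.succ) (fun x y h => Fin.succ_injective _ (ha h)),
        lint_single hεmeas hident φ hφ (a 0), pow_succ]
      ring

lemma map_pi (hεmeas : ∀ k, Measurable (ε k))
    (hindep : iIndepFun ε P)
    (hident : ∀ k, IdentDistrib (ε k) (ε 0) P P)
    {n : ℕ} (a : Fin n → ℤ) (ha : Function.Injective a) :
    Measure.map (fun ω (i : Fin n) => ε (a i) ω) P
      = Measure.pi (fun _ => Measure.map (ε 0) P) := by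
  haveI : IsProbabilityMeasure (Measure.map (ε 0) P) :=
    Measure.isProbabilityMeasure_map (hεmeas 0).aemeasurable
  refine (Measure.pi_eq fun s hs => ?_).symm
  have hmt : Measurable fun ω (i : Fin n) => ε (a i) ω :=
    measurable_pi_lambda _ fun i => hεmeas (a i)
  rw [Measure.map_apply hmt (MeasurableSet.univ_pi hs)]
  classical
  set sets : ℤ → Set ℝ := fun z => if h : ∃ i, a i = z then s h.choose else Set.univ
    with hsets
  have hsets_ai : ∀ i, sets (a i) = s i := by
    intro i
    have h : ∃ i', a i' = a i := ⟨i, rfl⟩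
    rw [hsets]
    simp only
    rw [dif_pos h]
    exact congrArg s (ha h.choose_spec)
  have hmeas_sets : ∀ z ∈ Finset.univ.image a, MeasurableSet (sets z) := by
    intro z _
    rw [hsets]
    simp only
    split
    · exact hs _
    · exact MeasurableSet.univ
  have key := hindep.measure_inter_preimage_eq_mul (Finset.univ.image a) hmeas_sets
  have hseteq : (fun ω (i : Fin n) => ε (a i) ω) ⁻¹' Set.pi Set.univ s
      = ⋂ z ∈ Finset.univ.image a, ε z ⁻¹' sets z := by
    ext ω
    simp only [Set.mem_preimage, Set.mem_pi, Set.mem_univ, true_implies, Set.mem_iInter,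
      Finset.mem_image, Finset.mem_univ, true_and]
    constructor
    · rintro h z hz
      obtain ⟨i, rfl⟩ := hz
      rw [hsets_ai]
      exact h i
    · intro h i
      have := h (a i) ⟨i, rfl⟩
      rwa [hsets_ai] at this
  rw [hseteq, key, Finset.prod_image (fun x _ y _ h => ha h)]
  refine Finset.prod_congr rfl fun i _ => ?_
  rw [hsets_ai, ← (hident (a i)).map_eq, Measure.map_apply (hεmeas (a i)) (hs i)]

lemma lint_shift (hεmeas : ∀ k, Measurable (ε k))
    (hindep : iIndepFun ε P)
    (hident : ∀ k, IdentDistrib (ε k) (ε 0) P P)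
    {n : ℕ} (a b : Fin n → ℤ) (ha : Function.Injective a) (hb : Function.Injective b)
    (Θ : (Fin n → ℝ) → ℝ≥0∞) (hΘ : Measurable Θ) :
    ∫⁻ ω, Θ (fun i => ε (a i) ω) ∂P = ∫⁻ ω, Θ (fun i => ε (b i) ω) ∂P := by
  rw [← lintegral_map hΘ (measurable_pi_lambda _ fun i => hεmeas (a i)),
    ← lintegral_map hΘ (measurable_pi_lambda _ fun i => hεmeas (b i)),
    map_pi hεmeas hindep hident a ha, map_pi hεmeas hindep hident b hb]

end PolyGarchAux

open PolyGarchAux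
open scoped NNReal ENNReal
set_option maxHeartbeats 1000000

/-- **Lemma 1.** For a polynomial augmented GARCH process (`σ_k = X_k^{1/(2δ)}`,
`y_k = σ_k ε_k`, with truncated versions built from the partial sums `X_{k,m}`), if
`E η₀² < ∞` where `η_k = f(y_k)` with `f(x) = |x|^ν` or `f(x) = sign(x)|x|^ν`, then there
are constants `C₁ > 0` and `0 < ϱ < 1` with `‖η_k − η_{k,m}‖₂ ≤ C₁ ϱ^m` for all `k`, `m ≥ 1`. -/
theorem polynomial_garch_L2_approximation
    {Ω : Type*} [MeasurableSpace Ω] (P : Measure Ω) [IsProbabilityMeasure P]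
    (ε : ℤ → Ω → ℝ) (c g : ℝ → ℝ)
    (hc : Measurable c) (hg : Measurable g)
    (hεmeas : ∀ k, Measurable (ε k))
    (hindep : iIndepFun ε P)
    (hident : ∀ k, IdentDistrib (ε k) (ε 0) P P)
    (δ ν : ℝ) (hδ : 0 < δ) (hν : 0 < ν)
    (hcpos : ∀ᵐ ω ∂P, 0 ≤ c (ε 0 ω)) (hgpos : ∀ᵐ ω ∂P, 0 ≤ g (ε 0 ω))
    (f : ℝ → ℝ)
    (hf : (∀ x, f x = |x| ^ ν) ∨ (∀ x, f x = Real.sign x * |x| ^ ν))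
    (X : ℤ → Ω → ℝ) (hXmeas : ∀ k, Measurable (X k))
    (hX : ∀ k : ℤ, ∀ᵐ ω ∂P, Tendsto
      (fun m => ∑ i ∈ Finset.range m,
        g (ε (k - (i + 1)) ω) * ∏ j ∈ Finset.range i, c (ε (k - (j + 1)) ω))
      atTop (nhds (X k ω)))
    (Xm : ℤ → ℕ → Ω → ℝ)
    (hXm : ∀ k m ω, Xm k m ω = ∑ i ∈ Finset.range m,
      g (ε (k - (i + 1)) ω) * ∏ j ∈ Finset.range i, c (ε (k - (j + 1)) ω))
    (η : ℤ → Ω → ℝ) (hη : ∀ k ω, η k ω = f (X k ω ^ (1 / (2 * δ)) * ε k ω))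
    (ηm : ℤ → ℕ → Ω → ℝ)
    (hηm : ∀ k m ω, ηm k m ω = f (Xm k m ω ^ (1 / (2 * δ)) * ε k ω))
    (hmom : ∫⁻ ω, ENNReal.ofReal ((η 0 ω) ^ 2) ∂P < ⊤) :
    ∃ C₁ > (0 : ℝ), ∃ ϱ : ℝ, 0 < ϱ ∧ ϱ < 1 ∧
      ∀ k : ℤ, ∀ m : ℕ, 1 ≤ m →
        eLpNorm (fun ω => η k ω - ηm k m ω) 2 P ≤ ENNReal.ofReal (C₁ * ϱ ^ m) := by
  classical
  -- exponents
  set γ : ℝ := 1 / (2 * δ) with hγdef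
  have hγpos : 0 < γ := by rw [hγdef]; positivity
  set α : ℝ := γ * ν with hαdef
  have hαpos : 0 < α := mul_pos hγpos hν
  set β : ℝ := min α 1 with hβdef
  have hβpos : 0 < β := lt_min hαpos one_pos
  have hβα : β ≤ α := min_le_left _ _
  set s : ℝ := α * 2 with hsdef
  have hspos : 0 < s := by rw [hsdef]; positivity
  set κ : ℝ := β / α with hκdef
  have hκ0 : 0 < κ := div_pos hβpos hαpos
  have hκ1 : κ ≤ 1 := by rw [hκdef]; exact (div_le_one hαpos).2 hβα
  have hsκ : s * κ = β * 2 := by rw [hsdef, hκdef]; field_simp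
  have hsκ' : s * (1 - κ) = (α - β) * 2 := by
    rw [hsdef, hκdef]; field_simp
  -- measurability of the partial sums
  have hXmmeas : ∀ (k : ℤ) (n : ℕ), Measurable (Xm k n) := by
    intro k n
    have hfun : Xm k n = fun ω => ∑ i ∈ Finset.range n,
        g (ε (k - (i + 1)) ω) * ∏ j ∈ Finset.range i, c (ε (k - (j + 1)) ω) :=
      funext fun ω => hXm k n ω
    rw [hfun]
    exact Finset.measurable_sum _ fun i _ =>
      (hg.comp (hεmeas _)).mul (Finset.measurable_prod _ fun j _ => hc.comp (hεmeas _))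
  -- transfer of a.s. nonneg to all coordinates
  have htransfer : ∀ (h : ℝ → ℝ), Measurable h → (∀ᵐ ω ∂P, 0 ≤ h (ε 0 ω)) →
      ∀ i : ℤ, ∀ᵐ ω ∂P, 0 ≤ h (ε i ω) := by
    intro h hh h0 i
    have hset : MeasurableSet {x : ℝ | h x < 0} := measurableSet_lt hh measurable_const
    have e0 : P {ω | h (ε 0 ω) < 0} = 0 := by
      rw [ae_iff] at h0; simpa [not_le] using h0
    have hmapi : P {ω | h (ε i ω) < 0} = Measure.map (ε i) P {x | h x < 0} := by
      rw [Measure.map_apply (hεmeas i) hset]; rfl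
    have hmap0 : P {ω | h (ε 0 ω) < 0} = Measure.map (ε 0) P {x | h x < 0} := by
      rw [Measure.map_apply (hεmeas 0) hset]; rfl
    rw [ae_iff]
    simp only [not_le]
    rw [show {a | h (ε i a) < 0} = {ω | h (ε i ω) < 0} from rfl, hmapi, (hident i).map_eq,
      ← hmap0, e0]
  have hXtd : ∀ k : ℤ, ∀ᵐ ω ∂P, Tendsto (fun n => Xm k n ω) atTop (nhds (X k ω)) := by
    intro k
    filter_upwards [hX k] with ω h
    have heq : (fun n => Xm k n ω) = fun n => ∑ i ∈ Finset.range n,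
        g (ε (k - (i + 1)) ω) * ∏ j ∈ Finset.range i, c (ε (k - (j + 1)) ω) :=
      funext fun n => hXm k n ω
    rw [heq]; exact h
  have hGOOD : ∀ᵐ ω ∂P, (∀ i : ℤ, 0 ≤ c (ε i ω) ∧ 0 ≤ g (ε i ω)) ∧
      ∀ k : ℤ, Tendsto (fun n => Xm k n ω) atTop (nhds (X k ω)) :=
    (ae_all_iff.2 fun i : ℤ => (htransfer c hc hcpos i).and (htransfer g hg hgpos i)).and
      (ae_all_iff.2 hXtd)
  -- the algebraic splitting of partial sums
  have hSPLIT : ∀ (k : ℤ) (m n : ℕ) (ω : Ω), Xm k (m + n) ω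
      = Xm k m ω + (∏ j ∈ Finset.range m, c (ε (k - (j + 1)) ω)) * Xm (k - m) n ω := by
    intro k m n ω
    simp only [hXm]
    rw [Finset.sum_range_add, Finset.mul_sum]
    congr 1
    refine Finset.sum_congr rfl fun i _ => ?_
    rw [Finset.prod_range_add,
      show k - (↑(m + i) + 1) = k - (m:ℤ) - (↑i + 1) by push_cast; ring]
    have hprod : ∏ x ∈ Finset.range i, c (ε (k - (↑(m + x) + 1)) ω)
        = ∏ x ∈ Finset.range i, c (ε (k - (m:ℤ) - (↑x + 1)) ω) :=
      Finset.prod_congr rfl fun x _ => by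
        rw [show k - (↑(m + x) + 1) = k - (m:ℤ) - (↑x + 1) by push_cast; ring]
    rw [hprod]
    ring
  -- the pointwise a.s. bundle
  have hPT : ∀ᵐ ω ∂P,
      (∀ (k : ℤ) (n : ℕ), 0 ≤ Xm k n ω) ∧
      (∀ k : ℤ, Monotone fun n => Xm k n ω) ∧
      (∀ (k : ℤ) (n : ℕ), Xm k n ω ≤ X k ω) ∧
      (∀ k : ℤ, 0 ≤ X k ω) ∧
      (∀ (k : ℤ) (m : ℕ), X k ω
        = Xm k m ω + (∏ j ∈ Finset.range m, c (ε (k - (j + 1)) ω)) * X (k - m) ω) ∧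
      (∀ k : ℤ, Tendsto (fun n => Xm k n ω) atTop (nhds (X k ω))) ∧
      (∀ i : ℤ, 0 ≤ c (ε i ω)) := by
    filter_upwards [hGOOD] with ω hω
    obtain ⟨hnn, htd⟩ := hω
    have h1 : ∀ (k : ℤ) (n : ℕ), 0 ≤ Xm k n ω := by
      intro k n
      rw [hXm]
      exact Finset.sum_nonneg fun i _ => mul_nonneg (hnn _).2
        (Finset.prod_nonneg fun j _ => (hnn _).1)
    have h2 : ∀ k : ℤ, Monotone fun n => Xm k n ω := by
      intro k
      refine monotone_nat_of_le_succ fun n => ?_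
      have hs1 := hSPLIT k n 1 ω
      have hs2 : 0 ≤ (∏ j ∈ Finset.range n, c (ε (k - (j + 1)) ω)) * Xm (k - n) 1 ω :=
        mul_nonneg (Finset.prod_nonneg fun j _ => (hnn _).1) (h1 _ _)
      show Xm k n ω ≤ Xm k (n + 1) ω
      rw [hs1]
      linarith
    have h3 : ∀ (k : ℤ) (n : ℕ), Xm k n ω ≤ X k ω := by
      intro k n
      refine ge_of_tendsto (htd k) ?_
      filter_upwards [eventually_ge_atTop n] with n' hn'
      exact h2 k hn'
    have h4 : ∀ k : ℤ, 0 ≤ X k ω := fun k => (h1 k 0).trans (h3 k 0)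
    have h5 : ∀ (k : ℤ) (m : ℕ), X k ω
        = Xm k m ω + (∏ j ∈ Finset.range m, c (ε (k - (j + 1)) ω)) * X (k - m) ω := by
      intro k m
      have ha : Tendsto (fun n => Xm k (m + n) ω) atTop (nhds (X k ω)) := by
        have h := (htd k).comp (tendsto_add_atTop_nat m)
        simpa [Function.comp_def, Nat.add_comm] using h
      have hb : Tendsto (fun n => Xm k m ω
          + (∏ j ∈ Finset.range m, c (ε (k - (j + 1)) ω)) * Xm (k - m) n ω) atTop
          (nhds (Xm k m ω + (∏ j ∈ Finset.range m, c (ε (k - (j + 1)) ω)) * X (k - m) ω)) :=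
        tendsto_const_nhds.add (tendsto_const_nhds.mul (htd (k - m)))
      have heq : (fun n => Xm k (m + n) ω) = fun n => Xm k m ω
          + (∏ j ∈ Finset.range m, c (ε (k - (j + 1)) ω)) * Xm (k - m) n ω :=
        funext fun n => hSPLIT k m n ω
      exact tendsto_nhds_unique (heq ▸ ha) hb
    exact ⟨h1, h2, h3, h4, h5, htd, fun i => (hnn i).1⟩
  -- the difference formula
  have hDIFF : ∀ᵐ ω ∂P, ∀ (k : ℤ) (m : ℕ),
      |η k ω - ηm k m ω| = (X k ω ^ α - Xm k m ω ^ α) * |ε k ω| ^ ν := by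
    filter_upwards [hPT] with ω hω k m
    obtain ⟨h1, -, h3, -, -, -, -⟩ := hω
    rw [hη, hηm, hαdef]
    exact f_diff_abs hf hν hγpos (h1 k m) (h3 k m)

  -- main ENNReal quantities
  set A : ℤ → ℕ → Ω → ℝ≥0∞ := fun k m ω =>
    ENNReal.ofReal (X k ω - Xm k m ω) ^ s * ENNReal.ofReal |ε k ω| ^ (2 * ν) with hA
  set B : ℤ → Ω → ℝ≥0∞ := fun k ω =>
    ENNReal.ofReal (X k ω) ^ s * ENNReal.ofReal |ε k ω| ^ (2 * ν) with hB
  set φc : ℝ → ℝ≥0∞ := fun x => ENNReal.ofReal (c x) ^ s with hφcdef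
  have hφcmeas : Measurable φc := by
    rw [hφcdef]
    exact (ENNReal.continuous_rpow_const.measurable).comp
      (ENNReal.measurable_ofReal.comp hc)
  set ρ : ℝ≥0∞ := ∫⁻ ω, φc (ε 0 ω) ∂P with hρdef
  set N : ℝ≥0∞ := ∫⁻ ω, ENNReal.ofReal |ε 0 ω| ^ (2 * ν) ∂P with hNdef
  set Mn : ℕ → ℝ≥0∞ := fun n => ∫⁻ ω, ENNReal.ofReal (Xm 0 n ω) ^ s ∂P with hMndef
  set M : ℝ≥0∞ := ∫⁻ ω, ENNReal.ofReal (X 0 ω) ^ s ∂P with hMdef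
  have hAmeas : ∀ (k : ℤ) (m : ℕ), Measurable (A k m) := by
    intro k m
    rw [hA]
    exact ((ENNReal.continuous_rpow_const.measurable).comp
      (ENNReal.measurable_ofReal.comp ((hXmeas k).sub (hXmmeas k m)))).mul
      ((ENNReal.continuous_rpow_const.measurable).comp
        (ENNReal.measurable_ofReal.comp (hεmeas k).abs))
  have hBmeas : ∀ k : ℤ, Measurable (B k) := by
    intro k
    rw [hB]
    exact ((ENNReal.continuous_rpow_const.measurable).comp
      (ENNReal.measurable_ofReal.comp (hXmeas k))).mul
      ((ENNReal.continuous_rpow_const.measurable).comp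
        (ENNReal.measurable_ofReal.comp (hεmeas k).abs))
  -- partial sums as functions of finitely many coordinates
  have hXmFun : ∀ (k : ℤ) (n : ℕ) (ω : Ω),
      Xm k n ω = XmFun c g n (fun i : Fin n => ε (k - (((i : ℕ) : ℤ) + 1)) ω) := by
    intro k n ω
    rw [hXm,
      ← Fin.sum_univ_eq_sum_range (fun i => g (ε (k - ((i : ℤ) + 1)) ω)
        * ∏ j ∈ Finset.range i, c (ε (k - ((j : ℤ) + 1)) ω)) n]
    unfold XmFun
    refine Finset.sum_congr rfl fun i _ => ?_
    congr 1
    exact (Finset.prod_attach (Finset.range ((i : ℕ))) fun j => c (ε (k - ((j : ℤ) + 1)) ω)).symm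
  have hinj : ∀ (j : ℤ) (n : ℕ), Function.Injective fun i : Fin n => j - (((i : ℕ) : ℤ) + 1) := by
    intro j n x y h
    simp only at h
    have hxy : ((x : ℕ) : ℤ) = ((y : ℕ) : ℤ) := by omega
    exact Fin.ext (by exact_mod_cast hxy)
  have hXmFunMeas : ∀ n : ℕ, Measurable fun w : Fin n → ℝ => ENNReal.ofReal (XmFun c g n w) ^ s :=
    fun n => (ENNReal.continuous_rpow_const.measurable).comp
      (ENNReal.measurable_ofReal.comp (XmFun_measurable hc hg n))
  -- the basic factorization over finitely many coordinates
  have hFACT : ∀ (k : ℤ) (m n : ℕ),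
      ∫⁻ ω, (∏ j : Fin m, φc (ε (k - (((j : ℕ) : ℤ) + 1)) ω)) *
        (ENNReal.ofReal (Xm (k - m) n ω) ^ s * ENNReal.ofReal |ε k ω| ^ (2 * ν)) ∂P
      = ρ ^ m * (Mn n * N) := by
    intro k m n
    have h3 := block_mul3 (P := P) hεmeas hindep
      (fun j : Fin m => k - (((j : ℕ) : ℤ) + 1))
      (fun i : Fin n => (k - m) - (((i : ℕ) : ℤ) + 1))
      (fun _ : Fin 1 => k)
      (by intro i j; omega)
      (by intro i j; have := i.isLt; omega)
      (by intro i j; have := i.isLt; omega)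
      (F := fun w : Fin m → ℝ => ∏ j, φc (w j))
      (G := fun w : Fin n → ℝ => ENNReal.ofReal (XmFun c g n w) ^ s)
      (H := fun w : Fin 1 → ℝ => ENNReal.ofReal |w 0| ^ (2 * ν))
      (hF := by exact Finset.measurable_prod _ fun j _ => hφcmeas.comp (measurable_pi_apply j))
      (hG := by exact hXmFunMeas n)
      (hH := by
        apply Measurable.comp (g := fun a : ℝ≥0∞ => a ^ (2 * ν))
          ENNReal.continuous_rpow_const.measurable
        exact ENNReal.measurable_ofReal.comp (measurable_pi_apply 0).abs)
    have e0 : ∫⁻ ω, (∏ j : Fin m, φc (ε (k - (((j : ℕ) : ℤ) + 1)) ω)) *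
        (ENNReal.ofReal (Xm (k - m) n ω) ^ s * ENNReal.ofReal |ε k ω| ^ (2 * ν)) ∂P
        = (∫⁻ ω, ∏ j : Fin m, φc (ε (k - (((j : ℕ) : ℤ) + 1)) ω) ∂P) *
          ((∫⁻ ω, ENNReal.ofReal (XmFun c g n
              (fun i : Fin n => ε ((k - m) - (((i : ℕ) : ℤ) + 1)) ω)) ^ s ∂P) *
           (∫⁻ ω, ENNReal.ofReal |ε k ω| ^ (2 * ν) ∂P)) := by
      refine Eq.trans (lintegral_congr fun ω => ?_) h3
      rw [hXmFun (k - m) n ω]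
    rw [e0]
    have e1 : ∫⁻ ω, ∏ j : Fin m, φc (ε (k - (((j : ℕ) : ℤ) + 1)) ω) ∂P = ρ ^ m := by
      have := lint_prod (P := P) hεmeas hindep hident φc hφcmeas m
        (fun j : Fin m => k - (((j : ℕ) : ℤ) + 1)) (hinj k m)
      rw [this, hρdef]
    have e2 : ∫⁻ ω, ENNReal.ofReal (XmFun c g n
        (fun i : Fin n => ε ((k - m) - (((i : ℕ) : ℤ) + 1)) ω)) ^ s ∂P = Mn n := by
      have hshift := lint_shift (P := P) hεmeas hindep hident
        (fun i : Fin n => (k - m) - (((i : ℕ) : ℤ) + 1))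
        (fun i : Fin n => (0 : ℤ) - (((i : ℕ) : ℤ) + 1))
        (hinj (k - m) n) (hinj 0 n)
        (fun w => ENNReal.ofReal (XmFun c g n w) ^ s) (hXmFunMeas n)
      refine Eq.trans hshift ?_
      rw [hMndef]
      exact lintegral_congr fun ω => by rw [hXmFun 0 n ω]
    have e3 : ∫⁻ ω, ENNReal.ofReal |ε k ω| ^ (2 * ν) ∂P = N := by
      have h := lint_single (P := P) hεmeas hident
        (fun x => ENNReal.ofReal |x| ^ (2 * ν))
        (by
          apply Measurable.comp (g := fun a : ℝ≥0∞ => a ^ (2 * ν))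
            ENNReal.continuous_rpow_const.measurable
          exact ENNReal.measurable_ofReal.comp measurable_abs) k
      rw [hNdef]
      exact h
    rw [e1, e2, e3]
  -- monotone convergence for the full series
  have hMCT : ∀ j : ℤ, ∫⁻ ω, ENNReal.ofReal (X j ω) ^ s ∂P = ⨆ n, Mn n := by
    intro j
    have hcong : ∀ᵐ ω ∂P, ENNReal.ofReal (X j ω) ^ s
        = ⨆ n, ENNReal.ofReal (Xm j n ω) ^ s := by
      filter_upwards [hPT] with ω hω
      obtain ⟨-, h2, -, -, -, h6, -⟩ := hω
      have hmono : Monotone fun n => ENNReal.ofReal (Xm j n ω) ^ s :=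
        fun n n' h => ENNReal.rpow_le_rpow (ENNReal.ofReal_le_ofReal (h2 j h)) hspos.le
      have htd2 : Tendsto (fun n => ENNReal.ofReal (Xm j n ω) ^ s) atTop
          (nhds (ENNReal.ofReal (X j ω) ^ s)) :=
        (ENNReal.continuous_rpow_const.tendsto _).comp
          ((ENNReal.continuous_ofReal.tendsto _).comp (h6 j))
      exact tendsto_nhds_unique htd2 (tendsto_atTop_iSup hmono)
    rw [lintegral_congr_ae hcong,
      lintegral_iSup' (f := fun n ω => ENNReal.ofReal (Xm j n ω) ^ s)
        (fun n => (by
          apply Measurable.comp (g := fun a : ℝ≥0∞ => a ^ s)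
            ENNReal.continuous_rpow_const.measurable
          exact ENNReal.measurable_ofReal.comp (hXmmeas j n) : Measurable _).aemeasurable)
        (by filter_upwards [hPT] with ω hω; exact fun n n' h =>
          ENNReal.rpow_le_rpow (ENNReal.ofReal_le_ofReal (hω.2.1 j h)) hspos.le)]
    refine iSup_congr fun n => ?_
    have hshift := lint_shift (P := P) hεmeas hindep hident
      (fun i : Fin n => j - (((i : ℕ) : ℤ) + 1))
      (fun i : Fin n => (0 : ℤ) - (((i : ℕ) : ℤ) + 1))
      (hinj j n) (hinj 0 n)
      (fun w => ENNReal.ofReal (XmFun c g n w) ^ s) (hXmFunMeas n)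
    calc ∫⁻ ω, ENNReal.ofReal (Xm j n ω) ^ s ∂P
        = ∫⁻ ω, ENNReal.ofReal (XmFun c g n
            (fun i : Fin n => ε (j - (((i : ℕ) : ℤ) + 1)) ω)) ^ s ∂P :=
          lintegral_congr fun ω => by rw [← hXmFun j n ω]
      _ = ∫⁻ ω, ENNReal.ofReal (XmFun c g n
            (fun i : Fin n => ε ((0 : ℤ) - (((i : ℕ) : ℤ) + 1)) ω)) ^ s ∂P := hshift
      _ = Mn n := by
          rw [hMndef]
          exact lintegral_congr fun ω => by rw [hXmFun 0 n ω]
  have hMsup : (⨆ n, Mn n) = M := by rw [hMdef]; exact (hMCT 0).symm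

  -- the key identity : ∫ A = ρ^m * M * N
  have hK : ∀ (k : ℤ) (m : ℕ), ∫⁻ ω, A k m ω ∂P = ρ ^ m * (M * N) := by
    intro k m
    have hAnmeas : ∀ n : ℕ, Measurable fun ω =>
        (∏ j : Fin m, φc (ε (k - (((j : ℕ) : ℤ) + 1)) ω)) *
          (ENNReal.ofReal (Xm (k - m) n ω) ^ s * ENNReal.ofReal |ε k ω| ^ (2 * ν)) := by
      intro n
      refine (Finset.measurable_prod _ fun j _ => hφcmeas.comp (hεmeas _)).mul (Measurable.mul ?_ ?_)
      · apply Measurable.comp (g := fun a : ℝ≥0∞ => a ^ s)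
          ENNReal.continuous_rpow_const.measurable
        exact ENNReal.measurable_ofReal.comp (hXmmeas _ n)
      · apply Measurable.comp (g := fun a : ℝ≥0∞ => a ^ (2 * ν))
          ENNReal.continuous_rpow_const.measurable
        exact ENNReal.measurable_ofReal.comp (hεmeas k).abs
    have hae : ∀ᵐ ω ∂P, A k m ω = ⨆ n,
        (∏ j : Fin m, φc (ε (k - (((j : ℕ) : ℤ) + 1)) ω)) *
          (ENNReal.ofReal (Xm (k - m) n ω) ^ s * ENNReal.ofReal |ε k ω| ^ (2 * ν)) := by
      filter_upwards [hPT] with ω hω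
      obtain ⟨h1, h2, h3, h4, h5, h6, h7⟩ := hω
      have hdiffeq : X k ω - Xm k m ω
          = (∏ j ∈ Finset.range m, c (ε (k - (j + 1)) ω)) * X (k - m) ω := by
        rw [h5 k m]; ring
      have hofreal : ENNReal.ofReal (X k ω - Xm k m ω) ^ s
          = (∏ j : Fin m, φc (ε (k - (((j : ℕ) : ℤ) + 1)) ω))
            * ENNReal.ofReal (X (k - m) ω) ^ s := by
        rw [hdiffeq, ENNReal.ofReal_mul (Finset.prod_nonneg fun j _ => h7 _),
          ENNReal.mul_rpow_of_nonneg _ _ hspos.le,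
          ENNReal.ofReal_prod_of_nonneg (fun j _ => h7 _),
          ENNReal.prod_rpow_of_nonneg hspos.le]
        congr 1
        exact congrArg (· ^ s) (Fin.prod_univ_eq_prod_range
          (fun j => ENNReal.ofReal (c (ε (k - ((j : ℤ) + 1)) ω))) m).symm
      have hXsup : ENNReal.ofReal (X (k - m) ω) ^ s
          = ⨆ n, ENNReal.ofReal (Xm (k - m) n ω) ^ s :=
        tendsto_nhds_unique
          ((ENNReal.continuous_rpow_const.tendsto _).comp
            ((ENNReal.continuous_ofReal.tendsto _).comp (h6 (k - m))))
          (tendsto_atTop_iSup fun n n' h =>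
            ENNReal.rpow_le_rpow (ENNReal.ofReal_le_ofReal (h2 (k - m) h)) hspos.le)
      simp only [hA]
      rw [hofreal, hXsup, mul_assoc, ENNReal.iSup_mul, ENNReal.mul_iSup]
    rw [lintegral_congr_ae hae,
      lintegral_iSup' (fun n => (hAnmeas n).aemeasurable)
        (by
          filter_upwards [hPT] with ω hω
          intro n n' h
          exact mul_le_mul_right (mul_le_mul_left
            (ENNReal.rpow_le_rpow (ENNReal.ofReal_le_ofReal (hω.2.1 (k - m) h)) hspos.le) _) _)]
    calc ⨆ n, ∫⁻ ω, (∏ j : Fin m, φc (ε (k - (((j : ℕ) : ℤ) + 1)) ω)) *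
          (ENNReal.ofReal (Xm (k - m) n ω) ^ s * ENNReal.ofReal |ε k ω| ^ (2 * ν)) ∂P
        = ⨆ n, ρ ^ m * (Mn n * N) := iSup_congr fun n => hFACT k m n
      _ = ρ ^ m * (M * N) := by
          rw [← ENNReal.mul_iSup, ← ENNReal.iSup_mul, hMsup]
  have hXm0 : ∀ (k : ℤ) (ω : Ω), Xm k 0 ω = 0 := fun k ω => by rw [hXm]; simp
  have hBint : ∀ k : ℤ, ∫⁻ ω, B k ω ∂P = M * N := by
    intro k
    have heq : ∀ ω, B k ω = A k 0 ω := fun ω => by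
      simp only [hA, hB, hXm0, sub_zero]
    rw [lintegral_congr heq, hK k 0, pow_zero, one_mul]
  -- identify M * N with the second moment of η₀
  have hMN : M * N = ∫⁻ ω, ENNReal.ofReal (η 0 ω ^ 2) ∂P := by
    rw [← hBint 0]
    refine lintegral_congr_ae ?_
    filter_upwards [hPT, hDIFF] with ω hω hd
    obtain ⟨h1, -, h3, h4, -, -, -⟩ := hω
    have hm00 : ηm 0 0 ω = 0 := by
      rw [hηm, hXm0, Real.zero_rpow hγpos.ne', zero_mul, f_zero hf hν]
    have habs : |η 0 ω| = X 0 ω ^ α * |ε 0 ω| ^ ν := by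
      have h := hd 0 0
      rw [hm00, sub_zero, hXm0, Real.zero_rpow hαpos.ne', sub_zero] at h
      exact h
    have hsq : η 0 ω ^ 2 = (X 0 ω ^ α * |ε 0 ω| ^ ν) ^ 2 := by
      rw [← habs, sq_abs]
    calc B 0 ω = ENNReal.ofReal (X 0 ω) ^ s * ENNReal.ofReal |ε 0 ω| ^ (2 * ν) := by
          simp only [hB]
      _ = ENNReal.ofReal (X 0 ω ^ s) * ENNReal.ofReal (|ε 0 ω| ^ (2 * ν)) := by
          rw [ENNReal.ofReal_rpow_of_nonneg (h4 0) hspos.le,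
            ENNReal.ofReal_rpow_of_nonneg (abs_nonneg _) (by positivity)]
      _ = ENNReal.ofReal (η 0 ω ^ 2) := by
          rw [← ENNReal.ofReal_mul (Real.rpow_nonneg (h4 0) s), hsq]
          congr 1
          rw [mul_pow]
          congr 1
          · rw [← Real.rpow_natCast (X 0 ω ^ α) 2, ← Real.rpow_mul (h4 0),
              show α * ((2:ℕ):ℝ) = s by rw [hsdef]; norm_num]
          · rw [← Real.rpow_natCast (|ε 0 ω| ^ ν) 2, ← Real.rpow_mul (abs_nonneg _),
              show ν * ((2:ℕ):ℝ) = 2 * ν by push_cast; ring]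

  have hMNlt : M * N < ⊤ := by rw [hMN]; exact hmom
  -- degenerate case : M = 0
  by_cases hM0 : M = 0
  · refine ⟨1, one_pos, 1/2, by norm_num, by norm_num, fun k m _ => ?_⟩
    have hint : ∫⁻ ω, ENNReal.ofReal (X k ω) ^ s ∂P = 0 := by
      rw [hMCT k, hMsup, hM0]
    have h0 := (lintegral_eq_zero_iff (by
      apply Measurable.comp (g := fun a : ℝ≥0∞ => a ^ s)
        ENNReal.continuous_rpow_const.measurable
      exact ENNReal.measurable_ofReal.comp (hXmeas k))).mp hint
    have hdiff : (fun ω => η k ω - ηm k m ω) =ᵐ[P] 0 := by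
      filter_upwards [h0, hPT] with ω hz hω
      obtain ⟨h1, -, h3, h4, -, -, -⟩ := hω
      have hz' : ENNReal.ofReal (X k ω) ^ s = 0 := hz
      have hz'' : ENNReal.ofReal (X k ω) = 0 := by
        rcases ENNReal.rpow_eq_zero_iff.mp hz' with ⟨h, -⟩ | ⟨h, -⟩
        · exact h
        · exact absurd h ENNReal.ofReal_ne_top
      have hXk : X k ω = 0 := le_antisymm (ENNReal.ofReal_eq_zero.mp hz'') (h4 k)
      have hXmk : Xm k m ω = 0 := le_antisymm (hXk ▸ h3 k m) (h1 k m)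
      show η k ω - ηm k m ω = 0
      rw [hη, hηm, hXk, hXmk]
      simp [Real.zero_rpow hγpos.ne', f_zero hf hν]
    rw [eLpNorm_congr_ae hdiff, eLpNorm_zero]
    exact zero_le
  -- degenerate case : N = 0
  by_cases hN0 : N = 0
  · refine ⟨1, one_pos, 1/2, by norm_num, by norm_num, fun k m _ => ?_⟩
    have hNk : ∫⁻ ω, ENNReal.ofReal |ε k ω| ^ (2 * ν) ∂P = 0 := by
      have h := lint_single (P := P) hεmeas hident
        (fun x => ENNReal.ofReal |x| ^ (2 * ν))
        (by
          apply Measurable.comp (g := fun a : ℝ≥0∞ => a ^ (2 * ν))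
            ENNReal.continuous_rpow_const.measurable
          exact ENNReal.measurable_ofReal.comp measurable_abs) k
      rw [show (∫⁻ ω, ENNReal.ofReal |ε k ω| ^ (2 * ν) ∂P)
        = ∫⁻ ω, ENNReal.ofReal |ε 0 ω| ^ (2 * ν) ∂P from h, ← hNdef]
      exact hN0
    have h0 := (lintegral_eq_zero_iff (by
      apply Measurable.comp (g := fun a : ℝ≥0∞ => a ^ (2 * ν))
        ENNReal.continuous_rpow_const.measurable
      exact ENNReal.measurable_ofReal.comp (hεmeas k).abs)).mp hNk
    have hdiff : (fun ω => η k ω - ηm k m ω) =ᵐ[P] 0 := by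
      filter_upwards [h0] with ω hz
      have hz' : ENNReal.ofReal |ε k ω| ^ (2 * ν) = 0 := hz
      have hz'' : ENNReal.ofReal |ε k ω| = 0 := by
        rcases ENNReal.rpow_eq_zero_iff.mp hz' with ⟨h, -⟩ | ⟨h, -⟩
        · exact h
        · exact absurd h ENNReal.ofReal_ne_top
      have hek : ε k ω = 0 :=
        abs_eq_zero.mp (le_antisymm (ENNReal.ofReal_eq_zero.mp hz'') (abs_nonneg _))
      show η k ω - ηm k m ω = 0
      rw [hη, hηm, hek]
      simp [f_zero hf hν]
    rw [eLpNorm_congr_ae hdiff, eLpNorm_zero]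
    exact zero_le
  -- main case
  have hMNne : M * N ≠ 0 := mul_ne_zero hM0 hN0
  have hMNnetop : M * N ≠ ⊤ := hMNlt.ne
  have hρlt1 : ρ < 1 := by
    by_contra hρ
    push_neg at hρ
    have hdom : Tendsto (fun m => ∫⁻ ω, A 0 m ω ∂P) atTop (nhds (∫⁻ _, (0:ℝ≥0∞) ∂P)) := by
      refine tendsto_lintegral_of_dominated_convergence (B 0) (fun m => hAmeas 0 m) ?_ ?_ ?_
      · intro m
        filter_upwards [hPT] with ω hω
        obtain ⟨h1, -, -, -, -, -, -⟩ := hω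
        simp only [hA, hB]
        exact mul_le_mul_left (ENNReal.rpow_le_rpow
          (ENNReal.ofReal_le_ofReal (by linarith [h1 0 m])) hspos.le) _
      · rw [hBint 0]; exact hMNnetop
      · filter_upwards [hPT] with ω hω
        obtain ⟨-, -, -, -, -, h6, -⟩ := hω
        have h0 : Tendsto (fun m => X 0 ω - Xm 0 m ω) atTop (nhds 0) := by
          have h := (tendsto_const_nhds (x := X 0 ω) (f := atTop)).sub (h6 0)
          simpa using h
        have h1 : Tendsto (fun m => ENNReal.ofReal (X 0 ω - Xm 0 m ω) ^ s) atTop (nhds 0) := by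
          have h2 := ((ENNReal.continuous_rpow_const (y := s)).tendsto _).comp
            ((ENNReal.continuous_ofReal.tendsto _).comp h0)
          simpa [Function.comp_def, ENNReal.zero_rpow_of_pos hspos] using h2
        have h3 := ENNReal.Tendsto.mul_const (b := ENNReal.ofReal |ε 0 ω| ^ (2 * ν)) h1
          (Or.inr (ENNReal.rpow_ne_top_of_nonneg (by positivity) ENNReal.ofReal_ne_top))
        rw [zero_mul] at h3
        simp only [hA]
        exact h3
    rw [lintegral_zero] at hdom
    have hlt := hdom.eventually_lt_const (zero_lt_iff.mpr hMNne)
    obtain ⟨m, hm⟩ := hlt.exists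
    rw [hK 0 m] at hm
    have hge : M * N ≤ ρ ^ m * (M * N) :=
      le_mul_of_one_le_left' (one_le_pow_of_one_le' hρ m)
    exact absurd hm (not_lt.mpr hge)

  -- the pointwise bound
  set Cm : ℝ := (max α 1) ^ (2:ℝ) with hCmdef
  have hCm0 : 0 ≤ Cm := by
    rw [hCmdef]; exact Real.rpow_nonneg (le_max_of_le_right zero_le_one) _
  have hc1 : (0:ℝ) ≤ 2 * ν * κ := by positivity
  have hc2 : (0:ℝ) ≤ 2 * ν * (1 - κ) :=
    mul_nonneg (by positivity) (by linarith)
  have hBOUND : ∀ᵐ ω ∂P, ∀ (k : ℤ) (m : ℕ),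
      (‖η k ω - ηm k m ω‖₊ : ℝ≥0∞) ^ (2:ℝ)
        ≤ ENNReal.ofReal Cm * (A k m ω ^ κ * B k ω ^ (1 - κ)) := by
    filter_upwards [hPT, hDIFF] with ω hω hd
    intro k m
    obtain ⟨h1, -, h3, h4, -, -, -⟩ := hω
    have hv := h1 k m
    have hvu := h3 k m
    have hu := h4 k
    have h0uv : (0:ℝ) ≤ X k ω - Xm k m ω := sub_nonneg.2 hvu
    have hdiffnn : 0 ≤ (X k ω ^ α - Xm k m ω ^ α) * |ε k ω| ^ ν :=
      mul_nonneg (sub_nonneg.2 (Real.rpow_le_rpow hv hvu hαpos.le))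
        (Real.rpow_nonneg (abs_nonneg _) _)
    have hAκ : A k m ω ^ κ
        = ENNReal.ofReal ((X k ω - Xm k m ω) ^ (β * 2))
          * ENNReal.ofReal (|ε k ω| ^ (2 * ν * κ)) := by
      simp only [hA]
      rw [ENNReal.mul_rpow_of_nonneg _ _ hκ0.le, ← ENNReal.rpow_mul, ← ENNReal.rpow_mul, hsκ,
        show 2 * ν * κ = 2 * ν * κ from rfl,
        ENNReal.ofReal_rpow_of_nonneg h0uv (mul_nonneg hβpos.le (by norm_num)),
        ENNReal.ofReal_rpow_of_nonneg (abs_nonneg _) hc1]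
    have hBκ : B k ω ^ (1 - κ)
        = ENNReal.ofReal (X k ω ^ ((α - β) * 2))
          * ENNReal.ofReal (|ε k ω| ^ (2 * ν * (1 - κ))) := by
      simp only [hB]
      rw [ENNReal.mul_rpow_of_nonneg _ _ (by linarith : (0:ℝ) ≤ 1 - κ), ← ENNReal.rpow_mul,
        ← ENNReal.rpow_mul, hsκ',
        ENNReal.ofReal_rpow_of_nonneg hu (mul_nonneg (sub_nonneg.2 hβα) (by norm_num)),
        ENNReal.ofReal_rpow_of_nonneg (abs_nonneg _) hc2]
    have hLHS : (‖η k ω - ηm k m ω‖₊ : ℝ≥0∞) ^ (2:ℝ)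
        = ENNReal.ofReal (((X k ω ^ α - Xm k m ω ^ α) * |ε k ω| ^ ν) ^ (2:ℝ)) := by
      rw [← enorm_eq_nnnorm, Real.enorm_eq_ofReal_abs, hd k m,
        ENNReal.ofReal_rpow_of_nonneg hdiffnn (by norm_num)]
    rw [hLHS]
    calc ENNReal.ofReal (((X k ω ^ α - Xm k m ω ^ α) * |ε k ω| ^ ν) ^ (2:ℝ))
        ≤ ENNReal.ofReal (Cm * ((X k ω - Xm k m ω) ^ (β * 2)
            * (X k ω ^ ((α - β) * 2) * |ε k ω| ^ (ν * 2)))) := by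
          refine ENNReal.ofReal_le_ofReal ?_
          rw [hCmdef]
          exact sq_bound hαpos hβdef hv hvu
      _ = ENNReal.ofReal Cm * (ENNReal.ofReal ((X k ω - Xm k m ω) ^ (β * 2)) *
            (ENNReal.ofReal (X k ω ^ ((α - β) * 2)) * ENNReal.ofReal (|ε k ω| ^ (ν * 2)))) := by
          rw [ENNReal.ofReal_mul hCm0, ENNReal.ofReal_mul (Real.rpow_nonneg h0uv _),
            ENNReal.ofReal_mul (Real.rpow_nonneg hu _)]
      _ = ENNReal.ofReal Cm * (A k m ω ^ κ * B k ω ^ (1 - κ)) := by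
          rw [hAκ, hBκ,
            show |ε k ω| ^ (ν * 2) = |ε k ω| ^ (2 * ν * κ) * |ε k ω| ^ (2 * ν * (1 - κ)) by
              rw [← Real.rpow_add_of_nonneg (abs_nonneg _) hc1 hc2]
              congr 1
              ring,
            ENNReal.ofReal_mul (Real.rpow_nonneg (abs_nonneg _) _)]
          ring
  -- exponent-swap helper
  have hpowswap : ∀ (x : ℝ≥0∞) (r : ℝ) (m : ℕ), (x ^ m) ^ r = (x ^ r) ^ m := by
    intro x r m
    rw [← ENNReal.rpow_natCast x m, ← ENNReal.rpow_mul, mul_comm, ENNReal.rpow_mul,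
      ENNReal.rpow_natCast]
  set τ : ℝ≥0∞ := (ρ ^ κ) ^ (1/2 : ℝ) with hτdef
  set C' : ℝ≥0∞ := (ENNReal.ofReal Cm) ^ (1/2 : ℝ) * (M * N) ^ (1/2 : ℝ) with hC'def
  have hmain : ∀ (k : ℤ) (m : ℕ),
      eLpNorm (fun ω => η k ω - ηm k m ω) 2 P ≤ C' * τ ^ m := by
    intro k m
    have hABmeas : Measurable fun ω => A k m ω ^ κ * B k ω ^ (1 - κ) := by
      refine Measurable.mul ?_ ?_
      · apply Measurable.comp (g := fun a : ℝ≥0∞ => a ^ κ)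
          ENNReal.continuous_rpow_const.measurable
        exact hAmeas k m
      · apply Measurable.comp (g := fun a : ℝ≥0∞ => a ^ (1 - κ))
          ENNReal.continuous_rpow_const.measurable
        exact hBmeas k
    have hI2 : ∫⁻ ω, (‖η k ω - ηm k m ω‖₊ : ℝ≥0∞) ^ (2:ℝ) ∂P
        ≤ ENNReal.ofReal Cm * ((ρ ^ m * (M * N)) ^ κ * (M * N) ^ (1 - κ)) := by
      calc ∫⁻ ω, (‖η k ω - ηm k m ω‖₊ : ℝ≥0∞) ^ (2:ℝ) ∂P
          ≤ ∫⁻ ω, ENNReal.ofReal Cm * (A k m ω ^ κ * B k ω ^ (1 - κ)) ∂P :=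
            lintegral_mono_ae (by filter_upwards [hBOUND] with ω h; exact h k m)
        _ = ENNReal.ofReal Cm * ∫⁻ ω, A k m ω ^ κ * B k ω ^ (1 - κ) ∂P :=
            lintegral_const_mul _ hABmeas
        _ ≤ ENNReal.ofReal Cm * ((∫⁻ ω, A k m ω ∂P) ^ κ * (∫⁻ ω, B k ω ∂P) ^ (1 - κ)) := by
            refine mul_le_mul_right ?_ _
            exact ENNReal.lintegral_mul_norm_pow_le (hAmeas k m).aemeasurable
              (hBmeas k).aemeasurable hκ0.le (by linarith) (by ring)
        _ = ENNReal.ofReal Cm * ((ρ ^ m * (M * N)) ^ κ * (M * N) ^ (1 - κ)) := by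
            rw [hK k m, hBint k]
    have hsnorm : eLpNorm (fun ω => η k ω - ηm k m ω) 2 P
        = (∫⁻ ω, (‖η k ω - ηm k m ω‖₊ : ℝ≥0∞) ^ (2:ℝ) ∂P) ^ (1/2 : ℝ) := by
      rw [eLpNorm_eq_lintegral_rpow_enorm_toReal (by norm_num) (by norm_num)]
      norm_num
      rfl
    rw [hsnorm]
    calc (∫⁻ ω, (‖η k ω - ηm k m ω‖₊ : ℝ≥0∞) ^ (2:ℝ) ∂P) ^ (1/2 : ℝ)
        ≤ (ENNReal.ofReal Cm * ((ρ ^ m * (M * N)) ^ κ * (M * N) ^ (1 - κ))) ^ (1/2 : ℝ) :=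
          ENNReal.rpow_le_rpow hI2 (by norm_num)
      _ = C' * τ ^ m := by
          rw [ENNReal.mul_rpow_of_nonneg (ρ ^ m) (M * N) hκ0.le, hpowswap ρ κ m, mul_assoc,
            ← ENNReal.rpow_add_of_nonneg κ (1 - κ) hκ0.le (by linarith),
            show κ + (1 - κ) = 1 by ring, ENNReal.rpow_one,
            ENNReal.mul_rpow_of_nonneg _ _ (by norm_num : (0:ℝ) ≤ 1/2),
            ENNReal.mul_rpow_of_nonneg _ _ (by norm_num : (0:ℝ) ≤ 1/2),
            hpowswap (ρ ^ κ) (1/2 : ℝ) m, hC'def, hτdef]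
          ring
  -- constants
  have hτlt1 : τ < 1 := by
    rw [hτdef]
    exact ENNReal.rpow_lt_one (ENNReal.rpow_lt_one hρlt1 hκ0) (by norm_num)
  have hτtop : τ ≠ ⊤ := (hτlt1.trans ENNReal.one_lt_top).ne
  have hC'top : C' ≠ ⊤ := by
    rw [hC'def]
    exact ENNReal.mul_ne_top
      (ENNReal.rpow_ne_top_of_nonneg (by norm_num) ENNReal.ofReal_ne_top)
      (ENNReal.rpow_ne_top_of_nonneg (by norm_num) hMNnetop)
  refine ⟨C'.toReal + 1, by positivity, max τ.toReal (1/2), lt_max_of_lt_right (by norm_num),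
    max_lt ?_ (by norm_num), fun k m _ => ?_⟩
  · rw [← ENNReal.toReal_one]
    exact (ENNReal.toReal_lt_toReal hτtop ENNReal.one_ne_top).mpr hτlt1
  · have hτle : τ ≤ ENNReal.ofReal (max τ.toReal (1/2)) := by
      conv_lhs => rw [← ENNReal.ofReal_toReal hτtop]
      exact ENNReal.ofReal_le_ofReal (le_max_left _ _)
    have hC'le : C' ≤ ENNReal.ofReal (C'.toReal + 1) := by
      conv_lhs => rw [← ENNReal.ofReal_toReal hC'top]
      exact ENNReal.ofReal_le_ofReal (by linarith)
    calc eLpNorm (fun ω => η k ω - ηm k m ω) 2 P ≤ C' * τ ^ m := hmain k m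
      _ ≤ ENNReal.ofReal (C'.toReal + 1) * (ENNReal.ofReal (max τ.toReal (1/2))) ^ m :=
          mul_le_mul' hC'le (pow_le_pow_left' hτle m)
      _ = ENNReal.ofReal ((C'.toReal + 1) * (max τ.toReal (1/2)) ^ m) := by
          rw [ENNReal.ofReal_mul (by positivity), ENNReal.ofReal_pow
            (le_max_of_le_right (by norm_num))]
end

section
/- Let μ > ν > 0. Assume there is a constant c with 0 ≤ c < 1 such that |c(ε₀)| ≤ c almost surely, E[exp(μ|g(ε₀)|)] < ∞, E[|ε₀|^{2μ}] < ∞, and E[η₀²] < ∞. Then there exists a constant C₂ > 0 such that for all k ∈ ℤ and all m ≥ 1, (E[(η_k − η_{k,m})²])^{1/2} ≤ C₂ c^m. -/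
open MeasureTheory ProbabilityTheory Filter
open scoped ENNReal NNReal

private lemma aux_exp_sub_exp (a b : ℝ) :
    |Real.exp a - Real.exp b| ≤ |a - b| * Real.exp (max a b) := by
  have key : ∀ u v : ℝ, v ≤ u → Real.exp u - Real.exp v ≤ (u - v) * Real.exp u := by
    intro u v h
    have h1 : (v - u) + 1 ≤ Real.exp (v - u) := Real.add_one_le_exp _
    have h2 : Real.exp (v - u) * Real.exp u = Real.exp v := by
      rw [← Real.exp_add]; ring_nf
    nlinarith [Real.exp_pos u]
  rcases le_total b a with h | h
  · rw [abs_of_nonneg (sub_nonneg.2 (Real.exp_le_exp.2 h)), abs_of_nonneg (sub_nonneg.2 h),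
      max_eq_left h]
    exact key a b h
  · rw [abs_sub_comm, abs_sub_comm a b,
      abs_of_nonneg (sub_nonneg.2 (Real.exp_le_exp.2 h)), abs_of_nonneg (sub_nonneg.2 h),
      max_eq_right h]
    exact key b a h

private lemma aux_sq_le_exp {δ : ℝ} (hδ : 0 < δ) {x : ℝ} (hx : 0 ≤ x) :
    x ^ 2 ≤ 4 / δ ^ 2 * Real.exp (δ * x) := by
  have h0 : (0:ℝ) ≤ δ * x / 2 := by positivity
  have h1 : δ * x / 2 ≤ Real.exp (δ * x / 2) := by
    nlinarith [Real.add_one_le_exp (δ * x / 2)]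
  have h2 : (δ * x / 2) ^ 2 ≤ Real.exp (δ * x / 2) ^ 2 := pow_le_pow_left₀ h0 h1 2
  have h3 : Real.exp (δ * x / 2) ^ 2 = Real.exp (δ * x) := by
    rw [sq, ← Real.exp_add]; ring_nf
  rw [h3] at h2
  calc x ^ 2 = 4 / δ ^ 2 * (δ * x / 2) ^ 2 := by field_simp; ring
    _ ≤ 4 / δ ^ 2 * Real.exp (δ * x) := mul_le_mul_of_nonneg_left h2 (by positivity)

private lemma aux_exp_convex {μ l x : ℝ} (hμ : 0 < μ) (hl : 0 ≤ l) (hlμ : l ≤ μ) (hx : 0 ≤ x) :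
    Real.exp (l * x) ≤ (1 - l / μ) + l / μ * Real.exp (μ * x) := by
  have ht0 : 0 ≤ l / μ := div_nonneg hl hμ.le
  have ht1 : l / μ ≤ 1 := div_le_one_of_le₀ hlμ hμ.le
  have h := convexOn_exp.2 (Set.mem_univ (0 : ℝ)) (Set.mem_univ (μ * x))
    (by linarith : (0:ℝ) ≤ 1 - l / μ) ht0 (by ring)
  simp only [smul_eq_mul, mul_zero, zero_add, Real.exp_zero, mul_one] at h
  have hle : l / μ * (μ * x) = l * x := by field_simp
  rw [hle] at h
  exact h

private lemma aux_geom_sum_le {c₀ : ℝ} (hc₀0 : 0 ≤ c₀) (hc₀1 : c₀ < 1) (n : ℕ) :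
    ∑ i ∈ Finset.range n, c₀ ^ i ≤ (1 - c₀)⁻¹ := by
  have h1 : (0:ℝ) < 1 - c₀ := by linarith
  have h := geom_sum_mul c₀ n
  have h2 : (∑ i ∈ Finset.range n, c₀ ^ i) * (1 - c₀) = 1 - c₀ ^ n := by linear_combination -h
  rw [inv_eq_one_div, le_div_iff₀ h1, h2]
  have := pow_nonneg hc₀0 n
  linarith

private lemma aux_indep_prod {Ω : Type*} [MeasurableSpace Ω] (P : Measure Ω)
    [IsProbabilityMeasure P]
    (ε : ℤ → Ω → ℝ) (hεmeas : ∀ j, Measurable (ε j))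
    (hindep : iIndepFun ε P)
    (k : ℤ) (φ : ℕ → ℝ → ℝ≥0∞) (hφ : ∀ i, Measurable (φ i)) (n : ℕ) :
    ∫⁻ ω, ∏ i ∈ Finset.range n, φ i (ε (k - (i + 1)) ω) ∂P
      = ∏ i ∈ Finset.range n, ∫⁻ ω, φ i (ε (k - (i + 1)) ω) ∂P := by
  have h_le : ∀ j : ℤ, MeasurableSpace.comap (ε j) inferInstance ≤ ‹MeasurableSpace Ω› :=
    fun j => measurable_iff_comap_le.1 (hεmeas j)
  induction n with
  | zero => simp
  | succ n ih =>
    simp only [Finset.prod_range_succ]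
    rw [← ih]
    set S : Set ℤ := {j | ∃ i : ℕ, i < n ∧ j = k - (i + 1)} with hSdef
    set T : Set ℤ := {k - (n + 1)} with hTdef
    have hST : Disjoint S T := by
      rw [Set.disjoint_right]
      rintro j hj ⟨i, hi, hij⟩
      rw [hTdef, Set.mem_singleton_iff] at hj
      omega
    have hInd : Indep (⨆ j ∈ S, MeasurableSpace.comap (ε j) inferInstance)
        (⨆ j ∈ T, MeasurableSpace.comap (ε j) inferInstance) P :=
      indep_iSup_of_disjoint (fun j => h_le j) hindep.iIndep hST
    have hmeas1 : Measurable[⨆ j ∈ S, MeasurableSpace.comap (ε j) inferInstance]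
        fun ω => ∏ i ∈ Finset.range n, φ i (ε (k - (i + 1)) ω) := by
      refine Finset.measurable_prod _ fun i hi => ?_
      have hjS : (k - (i + 1) : ℤ) ∈ S := ⟨i, Finset.mem_range.1 hi, rfl⟩
      have hm : Measurable[⨆ j ∈ S, MeasurableSpace.comap (ε j) inferInstance]
          (ε (k - (i + 1))) :=
        measurable_iff_comap_le.2 (le_iSup₂ (f := fun (j : ℤ) (_ : j ∈ S) =>
          MeasurableSpace.comap (ε j) inferInstance) _ hjS)
      exact (hφ i).comp hm
    have hmeas2 : Measurable[⨆ j ∈ T, MeasurableSpace.comap (ε j) inferInstance]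
        fun ω => φ n (ε (k - (n + 1)) ω) := by
      have hm : Measurable[⨆ j ∈ T, MeasurableSpace.comap (ε j) inferInstance]
          (ε (k - (n + 1))) :=
        measurable_iff_comap_le.2 (le_iSup₂ (f := fun (j : ℤ) (_ : j ∈ T) =>
          MeasurableSpace.comap (ε j) inferInstance) _ (Set.mem_singleton _))
      exact (hφ n).comp hm
    exact lintegral_mul_eq_lintegral_mul_lintegral_of_independent_measurableSpace
      (iSup₂_le fun j _ => h_le j) (iSup₂_le fun j _ => h_le j) hInd hmeas1 hmeas2

private lemma aux_exp_bound {ν δ c₀ : ℝ} (hν : 0 < ν) (hδ : 0 < δ) (hc₀0 : 0 ≤ c₀)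
    (m : ℕ) (G t : ℕ → ℝ) (hG : ∀ i, 0 ≤ G i)
    (ht : ∀ i, |t i| ≤ G i * c₀ ^ i)
    (x : ℝ) (hx : Tendsto (fun n => ∑ i ∈ Finset.range n, t i) atTop (nhds x))
    (B : ℝ)
    (hB : ∀ n, Real.exp (∑ i ∈ Finset.range n,
      (ν * c₀ ^ i + (if m ≤ i then δ * c₀ ^ (i - m) else 0)) * G i) ≤ B) :
    (Real.exp (ν * (x / 2)) - Real.exp (ν * ((∑ i ∈ Finset.range m, t i) / 2))) ^ 2
      ≤ (ν / 2) ^ 2 * (4 / δ ^ 2) * (c₀ ^ m) ^ 2 * B := by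
  set lam : ℕ → ℝ := fun i => ν * c₀ ^ i + (if m ≤ i then δ * c₀ ^ (i - m) else 0) with hlam
  have hite : ∀ i, (0:ℝ) ≤ (if m ≤ i then δ * c₀ ^ (i - m) else 0) := by
    intro i; split_ifs with h
    · positivity
    · exact le_rfl
  have hlam0 : ∀ i, 0 ≤ lam i := fun i => add_nonneg (by positivity) (hite i)
  have hlamG0 : ∀ i, 0 ≤ lam i * G i := fun i => mul_nonneg (hlam0 i) (hG i)
  have hB0 : (0:ℝ) < B := lt_of_lt_of_le one_pos (by simpa using hB 0)
  have hqlog : ∀ n, ∑ i ∈ Finset.range n, lam i * G i ≤ Real.log B := fun n =>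
    (Real.le_log_iff_exp_le hB0).2 (hB n)
  have hlamG : Summable fun i => lam i * G i := summable_of_sum_range_le hlamG0 hqlog
  have s1 : Summable fun i => G i * c₀ ^ i := by
    apply Summable.of_nonneg_of_le (fun i => mul_nonneg (hG i) (pow_nonneg hc₀0 i)) (fun i => ?_) (hlamG.div_const ν)
    rw [le_div_iff₀ hν]
    have h1 : ν * c₀ ^ i ≤ lam i := le_add_of_nonneg_right (hite i)
    calc G i * c₀ ^ i * ν = (ν * c₀ ^ i) * G i := by ring
      _ ≤ lam i * G i := mul_le_mul_of_nonneg_right h1 (hG i)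
  have hshift : Summable fun j => lam (j + m) * G (j + m) := (summable_nat_add_iff m).2 hlamG
  have s2 : Summable fun j => G (m + j) * c₀ ^ j := by
    apply Summable.of_nonneg_of_le (fun j => mul_nonneg (hG _) (pow_nonneg hc₀0 j)) (fun j => ?_) (hshift.div_const δ)
    rw [le_div_iff₀ hδ]
    have h1 : δ * c₀ ^ j ≤ lam (j + m) := by
      have hm : m ≤ j + m := Nat.le_add_left m j
      have he : lam (j + m) = ν * c₀ ^ (j + m) + δ * c₀ ^ j := by
        simp only [hlam, if_pos hm, Nat.add_sub_cancel]
      rw [he]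
      exact le_add_of_nonneg_left (by positivity)
    calc G (m + j) * c₀ ^ j * δ = (δ * c₀ ^ j) * G (j + m) := by rw [add_comm m j]; ring
      _ ≤ lam (j + m) * G (j + m) := mul_le_mul_of_nonneg_right h1 (hG _)
  set S := ∑' i, G i * c₀ ^ i with hS
  set T := ∑' j, G (m + j) * c₀ ^ j with hT
  have hS0 : 0 ≤ S := tsum_nonneg fun i => mul_nonneg (hG i) (pow_nonneg hc₀0 i)
  have hT0 : 0 ≤ T := tsum_nonneg fun j => mul_nonneg (hG _) (pow_nonneg hc₀0 j)
  have hpart : ∀ n, ∑ i ∈ Finset.range n, G i * c₀ ^ i ≤ S := fun n =>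
    s1.sum_le_tsum _ (fun i _ => mul_nonneg (hG i) (pow_nonneg hc₀0 i))
  have habs_sum : ∀ n, |∑ i ∈ Finset.range n, t i| ≤ S := fun n =>
    (Finset.abs_sum_le_sum_abs _ _).trans
      ((Finset.sum_le_sum fun i _ => ht i).trans (hpart n))
  have hxS : |x| ≤ S :=
    le_of_tendsto hx.abs (Filter.Eventually.of_forall habs_sum)
  have hdiff : ∀ n, m ≤ n →
      |∑ i ∈ Finset.range n, t i - ∑ i ∈ Finset.range m, t i| ≤ c₀ ^ m * T := by
    intro n hmn
    rw [← Finset.sum_Ico_eq_sub _ hmn]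
    calc |∑ i ∈ Finset.Ico m n, t i| ≤ ∑ i ∈ Finset.Ico m n, |t i| :=
        Finset.abs_sum_le_sum_abs _ _
      _ ≤ ∑ i ∈ Finset.Ico m n, G i * c₀ ^ i := Finset.sum_le_sum fun i _ => ht i
      _ = ∑ j ∈ Finset.range (n - m), G (m + j) * c₀ ^ (m + j) := by
          rw [Finset.sum_Ico_eq_sum_range]
      _ = c₀ ^ m * ∑ j ∈ Finset.range (n - m), G (m + j) * c₀ ^ j := by
          rw [Finset.mul_sum]
          exact Finset.sum_congr rfl fun j _ => by rw [pow_add]; ring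
      _ ≤ c₀ ^ m * T :=
          mul_le_mul_of_nonneg_left (s2.sum_le_tsum _ (fun j _ => mul_nonneg (hG _) (pow_nonneg hc₀0 j)))
            (pow_nonneg hc₀0 m)
  have hxT : |x - ∑ i ∈ Finset.range m, t i| ≤ c₀ ^ m * T := by
    have htd : Tendsto (fun n => |∑ i ∈ Finset.range n, t i - ∑ i ∈ Finset.range m, t i|)
        atTop (nhds |x - ∑ i ∈ Finset.range m, t i|) := (hx.sub_const _).abs
    apply le_of_tendsto htd
    filter_upwards [eventually_ge_atTop m] with n hn using hdiff n hn
  have hexpST : Real.exp (ν * S + δ * T) ≤ B := by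
    have hq : ∀ n, ν * (∑ i ∈ Finset.range (n + m), G i * c₀ ^ i)
        + δ * (∑ j ∈ Finset.range n, G (m + j) * c₀ ^ j)
        = ∑ i ∈ Finset.range (n + m), lam i * G i := by
      intro n
      have hsplit : ∑ i ∈ Finset.range (n + m), lam i * G i
          = ∑ i ∈ Finset.range (n + m), (ν * c₀ ^ i) * G i
            + ∑ i ∈ Finset.range (n + m), (if m ≤ i then δ * c₀ ^ (i - m) else 0) * G i := by
        rw [← Finset.sum_add_distrib]
        exact Finset.sum_congr rfl fun i _ => by simp only [hlam]; ring
      have h1 : ∑ i ∈ Finset.range (n + m), (ν * c₀ ^ i) * G i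
          = ν * ∑ i ∈ Finset.range (n + m), G i * c₀ ^ i := by
        rw [Finset.mul_sum]
        exact Finset.sum_congr rfl fun i _ => by ring
      have h2 : ∑ i ∈ Finset.range (n + m), (if m ≤ i then δ * c₀ ^ (i - m) else 0) * G i
          = δ * ∑ j ∈ Finset.range n, G (m + j) * c₀ ^ j := by
        rw [Finset.range_eq_Ico (n + m),
          ← Finset.sum_Ico_consecutive _ (Nat.zero_le m) (Nat.le_add_left m n)]
        have hz : ∑ i ∈ Finset.Ico 0 m, (if m ≤ i then δ * c₀ ^ (i - m) else 0) * G i = 0 := by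
          apply Finset.sum_eq_zero
          intro i hi
          rw [Finset.mem_Ico] at hi
          rw [if_neg (by omega), zero_mul]
        rw [hz, zero_add, Finset.sum_Ico_eq_sum_range, Nat.add_sub_cancel, Finset.mul_sum]
        refine Finset.sum_congr rfl fun j hj => ?_
        rw [if_pos (Nat.le_add_right m j), Nat.add_sub_cancel_left]
        ring
      rw [hsplit, h1, h2]
    have htendsto : Tendsto (fun n => ν * (∑ i ∈ Finset.range (n + m), G i * c₀ ^ i)
        + δ * (∑ j ∈ Finset.range n, G (m + j) * c₀ ^ j)) atTop (nhds (ν * S + δ * T)) := by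
      apply Tendsto.add
      · exact (s1.hasSum.tendsto_sum_nat.comp (tendsto_add_atTop_nat m)).const_mul ν
      · exact (s2.hasSum.tendsto_sum_nat).const_mul δ
    have hten2 : Tendsto (fun n => Real.exp (ν * (∑ i ∈ Finset.range (n + m), G i * c₀ ^ i)
        + δ * (∑ j ∈ Finset.range n, G (m + j) * c₀ ^ j))) atTop
        (nhds (Real.exp (ν * S + δ * T))) :=
      (Real.continuous_exp.tendsto _).comp htendsto
    apply le_of_tendsto hten2
    apply Filter.Eventually.of_forall
    intro n
    rw [hq n]
    exact hB (n + m)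
  set xm := ∑ i ∈ Finset.range m, t i with hxm
  have h1 : |Real.exp (ν * (x / 2)) - Real.exp (ν * (xm / 2))|
      ≤ ν / 2 * (c₀ ^ m * T) * Real.exp (ν * S / 2) := by
    refine (aux_exp_sub_exp _ _).trans ?_
    have e1 : |ν * (x / 2) - ν * (xm / 2)| = ν / 2 * |x - xm| := by
      rw [show ν * (x / 2) - ν * (xm / 2) = ν / 2 * (x - xm) by ring, abs_mul,
        abs_of_pos (by positivity : (0:ℝ) < ν / 2)]
    rw [e1]
    have hxle : x ≤ S := (le_abs_self x).trans hxS
    have hxmle : xm ≤ S := (le_abs_self xm).trans (habs_sum m)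
    have e2 : max (ν * (x / 2)) (ν * (xm / 2)) ≤ ν * S / 2 := by
      apply max_le
      · nlinarith [mul_nonneg hν.le (sub_nonneg.2 hxle)]
      · nlinarith [mul_nonneg hν.le (sub_nonneg.2 hxmle)]
    apply mul_le_mul
    · exact mul_le_mul_of_nonneg_left hxT (by positivity)
    · exact Real.exp_le_exp.2 e2
    · positivity
    · exact mul_nonneg (by positivity) (mul_nonneg (by positivity) hT0)
  have h2 : (Real.exp (ν * (x / 2)) - Real.exp (ν * (xm / 2))) ^ 2
      ≤ (ν / 2 * (c₀ ^ m * T) * Real.exp (ν * S / 2)) ^ 2 := by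
    rw [← sq_abs (Real.exp (ν * (x / 2)) - Real.exp (ν * (xm / 2)))]
    exact pow_le_pow_left₀ (abs_nonneg _) h1 2
  have h3 : Real.exp (ν * S / 2) ^ 2 = Real.exp (ν * S) := by
    rw [sq, ← Real.exp_add]; ring_nf
  have h4 : T ^ 2 ≤ 4 / δ ^ 2 * Real.exp (δ * T) := aux_sq_le_exp hδ hT0
  calc (Real.exp (ν * (x / 2)) - Real.exp (ν * (xm / 2))) ^ 2
      ≤ (ν / 2 * (c₀ ^ m * T) * Real.exp (ν * S / 2)) ^ 2 := h2
    _ = (ν / 2) ^ 2 * (c₀ ^ m) ^ 2 * (T ^ 2 * Real.exp (ν * S)) := by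
        rw [← h3]; ring
    _ ≤ (ν / 2) ^ 2 * (c₀ ^ m) ^ 2 * ((4 / δ ^ 2 * Real.exp (δ * T)) * Real.exp (ν * S)) := by
        refine mul_le_mul_of_nonneg_left ?_ (by positivity)
        exact mul_le_mul_of_nonneg_right h4 (Real.exp_pos _).le
    _ = (ν / 2) ^ 2 * (4 / δ ^ 2) * (c₀ ^ m) ^ 2 * (Real.exp (ν * S) * Real.exp (δ * T)) := by
        ring
    _ = (ν / 2) ^ 2 * (4 / δ ^ 2) * (c₀ ^ m) ^ 2 * Real.exp (ν * S + δ * T) := by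
        rw [← Real.exp_add]
    _ ≤ (ν / 2) ^ 2 * (4 / δ ^ 2) * (c₀ ^ m) ^ 2 * B :=
        mul_le_mul_of_nonneg_left hexpST (by positivity)

/-- **Lemma 2.** For an exponential augmented GARCH process (`σ_k² = exp X_k`,
`y_k = exp(X_k/2) ε_k`, with truncated versions built from the partial sums `X_{k,m}`):
if `|c(ε₀)| ≤ c < 1` a.s., `E exp(μ|g(ε₀)|) < ∞`, `E|ε₀|^{2μ} < ∞`, `E η₀² < ∞` and
`μ > ν`, then there is `C₂ > 0` with `‖η_k − η_{k,m}‖₂ ≤ C₂ c^m` for all `k`, `m ≥ 1`. -/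
theorem exponential_garch_L2_approximation
    {Ω : Type*} [MeasurableSpace Ω] (P : Measure Ω) [IsProbabilityMeasure P]
    (ε : ℤ → Ω → ℝ) (c g : ℝ → ℝ)
    (hc : Measurable c) (hg : Measurable g)
    (hεmeas : ∀ k, Measurable (ε k))
    (hindep : iIndepFun ε P)
    (hident : ∀ k, IdentDistrib (ε k) (ε 0) P P)
    (μ ν : ℝ) (hν : 0 < ν) (hμν : ν < μ)
    (c₀ : ℝ) (hc₀0 : 0 ≤ c₀) (hc₀1 : c₀ < 1)
    (hcbd : ∀ᵐ ω ∂P, |c (ε 0 ω)| ≤ c₀)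
    (hgmom : ∫⁻ ω, ENNReal.ofReal (Real.exp (μ * |g (ε 0 ω)|)) ∂P < ⊤)
    (hεmom : ∫⁻ ω, ENNReal.ofReal (|ε 0 ω| ^ (2 * μ)) ∂P < ⊤)
    (f : ℝ → ℝ)
    (hf : (∀ x, f x = |x| ^ ν) ∨ (∀ x, f x = Real.sign x * |x| ^ ν))
    (X : ℤ → Ω → ℝ) (hXmeas : ∀ k, Measurable (X k))
    (hX : ∀ k : ℤ, ∀ᵐ ω ∂P, Tendsto
      (fun m => ∑ i ∈ Finset.range m,
        g (ε (k - (i + 1)) ω) * ∏ j ∈ Finset.range i, c (ε (k - (j + 1)) ω))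
      atTop (nhds (X k ω)))
    (Xm : ℤ → ℕ → Ω → ℝ)
    (hXm : ∀ k m ω, Xm k m ω = ∑ i ∈ Finset.range m,
      g (ε (k - (i + 1)) ω) * ∏ j ∈ Finset.range i, c (ε (k - (j + 1)) ω))
    (η : ℤ → Ω → ℝ) (hη : ∀ k ω, η k ω = f (Real.exp (X k ω / 2) * ε k ω))
    (ηm : ℤ → ℕ → Ω → ℝ)
    (hηm : ∀ k m ω, ηm k m ω = f (Real.exp (Xm k m ω / 2) * ε k ω))
    (hmom : ∫⁻ ω, ENNReal.ofReal ((η 0 ω) ^ 2) ∂P < ⊤) :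
    ∃ C₂ > (0 : ℝ),
      ∀ k : ℤ, ∀ m : ℕ, 1 ≤ m →
        eLpNorm (fun ω => η k ω - ηm k m ω) 2 P ≤ ENNReal.ofReal (C₂ * c₀ ^ m) := by
  classical
  have hμ0 : 0 < μ := hν.trans hμν
  have hδ : 0 < μ - ν := sub_pos.2 hμν
  set δ := μ - ν with hδdef
  have h1c : (0:ℝ) < 1 - c₀ := by linarith
  set Me := ∫⁻ ω, ENNReal.ofReal (Real.exp (μ * |g (ε 0 ω)|)) ∂P with hMe
  set M := Me.toReal with hM
  have hMe_ne : Me ≠ ⊤ := hgmom.ne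
  have hMe_eq : ENNReal.ofReal M = Me := ENNReal.ofReal_toReal hMe_ne
  have hM1 : 1 ≤ M := by
    have h1 : (1 : ℝ≥0∞) ≤ Me := by
      rw [hMe]
      calc (1:ℝ≥0∞) = ∫⁻ _, 1 ∂P := by simp
        _ ≤ _ := lintegral_mono fun ω => by
            rw [show (1:ℝ≥0∞) = ENNReal.ofReal 1 by simp]
            exact ENNReal.ofReal_le_ofReal (Real.one_le_exp (by positivity))
    calc (1:ℝ) = (1:ℝ≥0∞).toReal := by simp
      _ ≤ M := ENNReal.toReal_mono hMe_ne h1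
  set Eε := (∫⁻ ω, ENNReal.ofReal (|ε 0 ω| ^ (2 * μ)) ∂P).toReal with hEε
  have hEε0 : 0 ≤ Eε := ENNReal.toReal_nonneg
  set K := Real.exp ((M - 1) / (1 - c₀)) with hK
  have hK0 : (0:ℝ) < K := Real.exp_pos _
  set D := (1 + Eε) * ((ν / 2) ^ 2 * (4 / δ ^ 2) * K) with hD
  have hD0 : 0 < D := by
    apply mul_pos (by linarith)
    exact mul_pos (mul_pos (pow_pos (by positivity) 2) (div_pos four_pos (pow_pos hδ 2))) hK0
  refine ⟨Real.sqrt D, Real.sqrt_pos.2 hD0, ?_⟩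
  intro k m _hm
  -- coefficient sequence
  set lam : ℕ → ℝ := fun i => ν * c₀ ^ i + (if m ≤ i then δ * c₀ ^ (i - m) else 0) with hlamdef
  have hite : ∀ i, (0:ℝ) ≤ (if m ≤ i then δ * c₀ ^ (i - m) else 0) := by
    intro i; split_ifs with h
    · positivity
    · exact le_rfl
  have hitele : ∀ i, (if m ≤ i then δ * c₀ ^ (i - m) else 0) ≤ δ := by
    intro i; split_ifs with h
    · calc δ * c₀ ^ (i - m) ≤ δ * 1 :=
          mul_le_mul_of_nonneg_left (pow_le_one₀ hc₀0 hc₀1.le) hδ.le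
        _ = δ := mul_one δ
    · exact hδ.le
  have hlam0 : ∀ i, 0 ≤ lam i := fun i => add_nonneg (by positivity) (hite i)
  have hlamμ : ∀ i, lam i ≤ μ := by
    intro i
    have h1 : ν * c₀ ^ i ≤ ν := by
      calc ν * c₀ ^ i ≤ ν * 1 :=
          mul_le_mul_of_nonneg_left (pow_le_one₀ hc₀0 hc₀1.le) hν.le
        _ = ν := mul_one ν
    have h2 := hitele i
    have hδeq : δ = μ - ν := hδdef
    simp only [hlamdef]
    linarith
  have hlamsum : ∀ n, ∑ i ∈ Finset.range n, lam i ≤ μ * (1 - c₀)⁻¹ := by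
    intro n
    have hsplit : ∑ i ∈ Finset.range n, lam i
        = ν * ∑ i ∈ Finset.range n, c₀ ^ i
          + ∑ i ∈ Finset.range n, (if m ≤ i then δ * c₀ ^ (i - m) else 0) := by
      rw [Finset.mul_sum, ← Finset.sum_add_distrib]
    have hgeo := aux_geom_sum_le hc₀0 hc₀1 n
    have h2 : ∑ i ∈ Finset.range n, (if m ≤ i then δ * c₀ ^ (i - m) else 0)
        ≤ δ * (1 - c₀)⁻¹ := by
      rcases le_or_gt n m with h | h
      · have hzero : ∀ i ∈ Finset.range n, (if m ≤ i then δ * c₀ ^ (i - m) else 0) = 0 := by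
          intro i hi
          rw [Finset.mem_range] at hi
          rw [if_neg (by omega)]
        rw [Finset.sum_congr rfl hzero, Finset.sum_const, smul_zero]
        positivity
      · rw [Finset.range_eq_Ico, ← Finset.sum_Ico_consecutive _ (Nat.zero_le m) h.le]
        have hz : ∑ i ∈ Finset.Ico 0 m, (if m ≤ i then δ * c₀ ^ (i - m) else 0) = 0 := by
          apply Finset.sum_eq_zero
          intro i hi
          rw [Finset.mem_Ico] at hi
          rw [if_neg (by omega)]
        rw [hz, zero_add, Finset.sum_Ico_eq_sum_range]
        have he : ∀ j ∈ Finset.range (n - m), (if m ≤ m + j then δ * c₀ ^ (m + j - m) else 0)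
            = δ * c₀ ^ j := by
          intro j _
          rw [if_pos (Nat.le_add_right m j), Nat.add_sub_cancel_left]
        rw [Finset.sum_congr rfl he, ← Finset.mul_sum]
        exact mul_le_mul_of_nonneg_left (aux_geom_sum_le hc₀0 hc₀1 _) hδ.le
    have h1 : ν * ∑ i ∈ Finset.range n, c₀ ^ i ≤ ν * (1 - c₀)⁻¹ :=
      mul_le_mul_of_nonneg_left hgeo hν.le
    have hδeq : δ = μ - ν := hδdef
    have h3 : ν * (1 - c₀)⁻¹ + δ * (1 - c₀)⁻¹ = μ * (1 - c₀)⁻¹ := by rw [hδeq]; ring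
    rw [hsplit]
    linarith
  -- the dominating supremum W
  set G : ℕ → Ω → ℝ := fun i ω => |g (ε (k - (i + 1)) ω)| with hGdef
  have hGmeas : ∀ i, Measurable (G i) := fun i => (hg.comp (hεmeas _)).abs
  set Wn : ℕ → Ω → ℝ≥0∞ := fun n ω =>
    ENNReal.ofReal (Real.exp (∑ i ∈ Finset.range n, lam i * G i ω)) with hWndef
  set W : Ω → ℝ≥0∞ := fun ω => ⨆ n, Wn n ω with hWdef
  have hWnmeas : ∀ n, Measurable (Wn n) := by
    intro n
    simp only [hWndef]
    apply ENNReal.measurable_ofReal.comp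
    apply Real.measurable_exp.comp
    exact Finset.measurable_sum _ fun i _ => (hGmeas i).const_mul (lam i)
  have hWmeas : Measurable W := by
    simp only [hWdef]
    exact Measurable.iSup hWnmeas
  have hWnmono : Monotone Wn := by
    intro n n' h ω
    simp only [hWndef]
    apply ENNReal.ofReal_le_ofReal
    apply Real.exp_le_exp.2
    apply Finset.sum_le_sum_of_subset_of_nonneg (Finset.range_subset_range.2 h)
    intro i _ _
    exact mul_nonneg (hlam0 i) (abs_nonneg _)
  -- uniform moment bound for Wn
  have hWn_int : ∀ n, ∫⁻ ω, Wn n ω ∂P ≤ ENNReal.ofReal K := by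
    intro n
    set φ : ℕ → ℝ → ℝ≥0∞ := fun i y => ENNReal.ofReal (Real.exp (lam i * |g y|)) with hφdef
    have hφmeas : ∀ i, Measurable (φ i) := fun i =>
      ENNReal.measurable_ofReal.comp (Real.measurable_exp.comp ((hg.abs).const_mul _))
    have hfac : ∀ i : ℕ, ∫⁻ ω, φ i (ε 0 ω) ∂P ≤ ENNReal.ofReal (1 + lam i / μ * (M - 1)) := by
      intro i
      have ht0 : 0 ≤ lam i / μ := div_nonneg (hlam0 i) hμ0.le
      have hmint : Measurable fun ω => ENNReal.ofReal (Real.exp (μ * |g (ε 0 ω)|)) :=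
        ENNReal.measurable_ofReal.comp
          (Real.measurable_exp.comp (((hg.comp (hεmeas 0)).abs).const_mul μ))
      calc ∫⁻ ω, φ i (ε 0 ω) ∂P
          ≤ ∫⁻ ω, ENNReal.ofReal ((1 - lam i / μ)
              + lam i / μ * Real.exp (μ * |g (ε 0 ω)|)) ∂P := by
            apply lintegral_mono
            intro ω
            simp only [hφdef]
            exact ENNReal.ofReal_le_ofReal
              (aux_exp_convex hμ0 (hlam0 i) (hlamμ i) (abs_nonneg _))
        _ = ∫⁻ ω, (ENNReal.ofReal (1 - lam i / μ)
              + ENNReal.ofReal (lam i / μ) * ENNReal.ofReal (Real.exp (μ * |g (ε 0 ω)|))) ∂P := by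
            apply lintegral_congr
            intro ω
            rw [ENNReal.ofReal_add (by
                have := div_le_one_of_le₀ (hlamμ i) hμ0.le
                linarith)
              (mul_nonneg ht0 (Real.exp_pos _).le), ENNReal.ofReal_mul ht0]
        _ = ENNReal.ofReal (1 - lam i / μ) + ENNReal.ofReal (lam i / μ) * Me := by
            rw [lintegral_add_left measurable_const, lintegral_const, measure_univ, mul_one,
              lintegral_const_mul _ hmint, hMe]
        _ = ENNReal.ofReal ((1 - lam i / μ) + lam i / μ * M) := by
            rw [← hMe_eq, ← ENNReal.ofReal_mul ht0, ← ENNReal.ofReal_add (by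
                have := div_le_one_of_le₀ (hlamμ i) hμ0.le
                linarith)
              (mul_nonneg ht0 (by linarith))]
        _ = ENNReal.ofReal (1 + lam i / μ * (M - 1)) := by
            rw [show (1 - lam i / μ) + lam i / μ * M = 1 + lam i / μ * (M - 1) by ring]
    have hprod : ∏ i ∈ Finset.range n, ENNReal.ofReal (1 + lam i / μ * (M - 1))
        ≤ ENNReal.ofReal K := by
      have hterm_nonneg : ∀ i ∈ Finset.range n, (0:ℝ) ≤ 1 + lam i / μ * (M - 1) := by
        intro i _
        have := mul_nonneg (div_nonneg (hlam0 i) hμ0.le) (by linarith : (0:ℝ) ≤ M - 1)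
        linarith
      rw [← ENNReal.ofReal_prod_of_nonneg hterm_nonneg]
      apply ENNReal.ofReal_le_ofReal
      calc ∏ i ∈ Finset.range n, (1 + lam i / μ * (M - 1))
          ≤ ∏ i ∈ Finset.range n, Real.exp (lam i / μ * (M - 1)) := by
            apply Finset.prod_le_prod hterm_nonneg
            intro i _
            linarith [Real.add_one_le_exp (lam i / μ * (M - 1))]
        _ = Real.exp (∑ i ∈ Finset.range n, lam i / μ * (M - 1)) := (Real.exp_sum _ _).symm
        _ ≤ K := by
            rw [hK]
            apply Real.exp_le_exp.2
            have hsum_eq : ∑ i ∈ Finset.range n, lam i / μ * (M - 1)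
                = (∑ i ∈ Finset.range n, lam i) * ((M - 1) / μ) := by
              rw [Finset.sum_mul]
              exact Finset.sum_congr rfl fun i _ => by ring
            rw [hsum_eq]
            have hMμ : 0 ≤ (M - 1) / μ := div_nonneg (by linarith) hμ0.le
            calc (∑ i ∈ Finset.range n, lam i) * ((M - 1) / μ)
                ≤ (μ * (1 - c₀)⁻¹) * ((M - 1) / μ) :=
                  mul_le_mul_of_nonneg_right (hlamsum n) hMμ
              _ = (M - 1) / (1 - c₀) := by
                  field_simp
    calc ∫⁻ ω, Wn n ω ∂P
        = ∫⁻ ω, ∏ i ∈ Finset.range n, φ i (ε (k - (i + 1)) ω) ∂P := by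
          apply lintegral_congr
          intro ω
          simp only [hWndef, hφdef, hGdef]
          rw [Real.exp_sum, ENNReal.ofReal_prod_of_nonneg (fun i _ => (Real.exp_pos _).le)]
      _ = ∏ i ∈ Finset.range n, ∫⁻ ω, φ i (ε (k - (i + 1)) ω) ∂P :=
          aux_indep_prod P ε hεmeas hindep k φ hφmeas n
      _ ≤ ∏ i ∈ Finset.range n, ENNReal.ofReal (1 + lam i / μ * (M - 1)) := by
          apply Finset.prod_le_prod'
          intro i _
          have heq : ∫⁻ ω, φ i (ε (k - (i + 1)) ω) ∂P = ∫⁻ ω, φ i (ε 0 ω) ∂P := by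
            simpa [Function.comp] using ((hident (k - (i + 1))).comp (hφmeas i)).lintegral_eq
          rw [heq]
          exact hfac i
      _ ≤ ENNReal.ofReal K := hprod
  have hW_int : ∫⁻ ω, W ω ∂P ≤ ENNReal.ofReal K := by
    simp only [hWdef]
    rw [lintegral_iSup hWnmeas hWnmono]
    exact iSup_le hWn_int
  -- a.e. facts
  have hcbd_all : ∀ᵐ ω ∂P, ∀ i : ℕ, |c (ε (k - (i + 1)) ω)| ≤ c₀ := by
    rw [ae_all_iff]
    intro i
    have hid : IdentDistrib (ε (k - (i + 1))) (ε 0) P P := hident _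
    have hmeasset : MeasurableSet {x : ℝ | ¬ |c x| ≤ c₀} := by
      have h : MeasurableSet {x : ℝ | |c x| ≤ c₀}ᶜ :=
        (measurableSet_le hc.abs measurable_const).compl
      rwa [Set.compl_setOf] at h
    rw [ae_iff] at hcbd ⊢
    have hset : {ω | ¬ |c (ε (k - (i + 1)) ω)| ≤ c₀}
        = ε (k - (i + 1)) ⁻¹' {x | ¬ |c x| ≤ c₀} := rfl
    have hset0 : {ω | ¬ |c (ε 0 ω)| ≤ c₀} = ε 0 ⁻¹' {x | ¬ |c x| ≤ c₀} := rfl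
    rw [hset, hid.measure_mem_eq hmeasset, ← hset0]
    exact hcbd
  have hWfin : ∀ᵐ ω ∂P, W ω < ⊤ :=
    ae_lt_top hWmeas (lt_of_le_of_lt hW_int ENNReal.ofReal_lt_top).ne
  -- the pointwise (a.e.) bound
  have hae : ∀ᵐ ω ∂P, (‖η k ω - ηm k m ω‖₊ : ℝ≥0∞) ^ (2:ℝ)
      ≤ ENNReal.ofReal ((ν / 2) ^ 2 * (4 / δ ^ 2) * (c₀ ^ m) ^ 2)
        * (ENNReal.ofReal (|ε k ω| ^ (2 * ν)) * W ω) := by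
    filter_upwards [hX k, hcbd_all, hWfin] with ω hxω hcω hWω
    have ht : ∀ i : ℕ, |g (ε (k - (i + 1)) ω) * ∏ j ∈ Finset.range i, c (ε (k - (j + 1)) ω)|
        ≤ G i ω * c₀ ^ i := by
      intro i
      have hp : |∏ j ∈ Finset.range i, c (ε (k - (j + 1)) ω)| ≤ c₀ ^ i := by
        rw [Finset.abs_prod]
        calc ∏ j ∈ Finset.range i, |c (ε (k - (j + 1)) ω)|
            ≤ ∏ j ∈ Finset.range i, c₀ :=
              Finset.prod_le_prod (fun j _ => abs_nonneg _) (fun j _ => hcω j)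
          _ = c₀ ^ i := by rw [Finset.prod_const, Finset.card_range]
      rw [abs_mul]
      calc |g (ε (k - (i + 1)) ω)| * |∏ j ∈ Finset.range i, c (ε (k - (j + 1)) ω)|
          ≤ |g (ε (k - (i + 1)) ω)| * c₀ ^ i :=
            mul_le_mul_of_nonneg_left hp (abs_nonneg _)
        _ = G i ω * c₀ ^ i := by simp only [hGdef]
    have hB : ∀ n, Real.exp (∑ i ∈ Finset.range n, lam i * G i ω) ≤ (W ω).toReal := by
      intro n
      have h1 : Wn n ω ≤ W ω := by
        simp only [hWdef]
        exact le_iSup (fun n => Wn n ω) n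
      simp only [hWndef] at h1
      exact (ENNReal.ofReal_le_iff_le_toReal hWω.ne).1 h1
    have hkey := aux_exp_bound hν hδ hc₀0 m (fun i => G i ω)
      (fun i => g (ε (k - (i + 1)) ω) * ∏ j ∈ Finset.range i, c (ε (k - (j + 1)) ω))
      (fun i => abs_nonneg _) ht (X k ω) hxω (W ω).toReal
      (by
        intro n
        have := hB n
        simpa only [hlamdef] using this)
    have hxmeq : Xm k m ω = ∑ i ∈ Finset.range m,
        g (ε (k - (i + 1)) ω) * ∏ j ∈ Finset.range i, c (ε (k - (j + 1)) ω) := hXm k m ω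
    rw [← hxmeq] at hkey
    -- the f-algebra
    have hfdiff : ∀ a b e : ℝ, |f (Real.exp a * e) - f (Real.exp b * e)|
        ≤ |e| ^ ν * |Real.exp (ν * a) - Real.exp (ν * b)| := by
      intro a b e
      have hrpow : ∀ y : ℝ, |Real.exp y * e| ^ ν = Real.exp (ν * y) * |e| ^ ν := by
        intro y
        rw [abs_mul, abs_of_pos (Real.exp_pos y),
          Real.mul_rpow (Real.exp_pos y).le (abs_nonneg e),
          Real.rpow_def_of_pos (Real.exp_pos y), Real.log_exp, mul_comm y ν]
      rcases hf with hf1 | hf2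
      · rw [hf1, hf1, hrpow, hrpow]
        rw [show Real.exp (ν * a) * |e| ^ ν - Real.exp (ν * b) * |e| ^ ν
            = (Real.exp (ν * a) - Real.exp (ν * b)) * |e| ^ ν by ring, abs_mul,
          abs_of_nonneg (Real.rpow_nonneg (abs_nonneg e) ν), mul_comm]
      · have hsign : ∀ y : ℝ, Real.sign (Real.exp y * e) = Real.sign e := by
          intro y
          rcases lt_trichotomy e 0 with h | h | h
          · rw [Real.sign_of_neg h, Real.sign_of_neg (mul_neg_of_pos_of_neg (Real.exp_pos y) h)]
          · rw [h, mul_zero]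
          · rw [Real.sign_of_pos h, Real.sign_of_pos (mul_pos (Real.exp_pos y) h)]
        rw [hf2, hf2, hrpow, hrpow, hsign, hsign]
        have hs1 : |Real.sign e| ≤ 1 := by
          rcases lt_trichotomy e 0 with h | h | h
          · rw [Real.sign_of_neg h]; norm_num
          · rw [h, Real.sign_zero]; norm_num
          · rw [Real.sign_of_pos h]; norm_num
        rw [show Real.sign e * (Real.exp (ν * a) * |e| ^ ν)
            - Real.sign e * (Real.exp (ν * b) * |e| ^ ν)
            = Real.sign e * ((Real.exp (ν * a) - Real.exp (ν * b)) * |e| ^ ν) by ring,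
          abs_mul, abs_mul, abs_of_nonneg (Real.rpow_nonneg (abs_nonneg e) ν)]
        calc |Real.sign e| * (|Real.exp (ν * a) - Real.exp (ν * b)| * |e| ^ ν)
            ≤ 1 * (|Real.exp (ν * a) - Real.exp (ν * b)| * |e| ^ ν) :=
              mul_le_mul_of_nonneg_right hs1
                (mul_nonneg (abs_nonneg _) (Real.rpow_nonneg (abs_nonneg e) ν))
          _ = |e| ^ ν * |Real.exp (ν * a) - Real.exp (ν * b)| := by ring
    have hdabs : |η k ω - ηm k m ω| ≤ |ε k ω| ^ ν
        * |Real.exp (ν * (X k ω / 2)) - Real.exp (ν * (Xm k m ω / 2))| := by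
      rw [hη k ω, hηm k m ω]
      exact hfdiff (X k ω / 2) (Xm k m ω / 2) (ε k ω)
    have hrpow2 : (|ε k ω| ^ ν) ^ 2 = |ε k ω| ^ (2 * ν) := by
      rw [← Real.rpow_natCast (|ε k ω| ^ ν) 2, ← Real.rpow_mul (abs_nonneg _)]
      norm_num [mul_comm]
    have hsq : (η k ω - ηm k m ω) ^ 2 ≤ |ε k ω| ^ (2 * ν)
        * ((ν / 2) ^ 2 * (4 / δ ^ 2) * (c₀ ^ m) ^ 2 * (W ω).toReal) := by
      have h2 : (η k ω - ηm k m ω) ^ 2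
          ≤ (|ε k ω| ^ ν * |Real.exp (ν * (X k ω / 2))
            - Real.exp (ν * (Xm k m ω / 2))|) ^ 2 := by
        rw [← sq_abs (η k ω - ηm k m ω)]
        exact pow_le_pow_left₀ (abs_nonneg _) hdabs 2
      have h3 : (|ε k ω| ^ ν * |Real.exp (ν * (X k ω / 2))
            - Real.exp (ν * (Xm k m ω / 2))|) ^ 2
          = |ε k ω| ^ (2 * ν) * (Real.exp (ν * (X k ω / 2))
            - Real.exp (ν * (Xm k m ω / 2))) ^ 2 := by
        rw [mul_pow, sq_abs, hrpow2]
      calc (η k ω - ηm k m ω) ^ 2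
          ≤ (|ε k ω| ^ ν * |Real.exp (ν * (X k ω / 2))
            - Real.exp (ν * (Xm k m ω / 2))|) ^ 2 := h2
        _ = |ε k ω| ^ (2 * ν) * (Real.exp (ν * (X k ω / 2))
            - Real.exp (ν * (Xm k m ω / 2))) ^ 2 := h3
        _ ≤ |ε k ω| ^ (2 * ν)
            * ((ν / 2) ^ 2 * (4 / δ ^ 2) * (c₀ ^ m) ^ 2 * (W ω).toReal) :=
            mul_le_mul_of_nonneg_left hkey (Real.rpow_nonneg (abs_nonneg _) _)
    calc (‖η k ω - ηm k m ω‖₊ : ℝ≥0∞) ^ (2:ℝ)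
        = ENNReal.ofReal ((η k ω - ηm k m ω) ^ 2) := by
          rw [← enorm_eq_nnnorm, Real.enorm_eq_ofReal_abs,
            ENNReal.ofReal_rpow_of_nonneg (abs_nonneg _) (by norm_num)]
          congr 1
          rw [show ((2:ℝ)) = ((2:ℕ):ℝ) by norm_num, Real.rpow_natCast, sq_abs]
      _ ≤ ENNReal.ofReal (|ε k ω| ^ (2 * ν)
          * ((ν / 2) ^ 2 * (4 / δ ^ 2) * (c₀ ^ m) ^ 2 * (W ω).toReal)) :=
          ENNReal.ofReal_le_ofReal hsq
      _ = ENNReal.ofReal ((ν / 2) ^ 2 * (4 / δ ^ 2) * (c₀ ^ m) ^ 2)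
          * (ENNReal.ofReal (|ε k ω| ^ (2 * ν)) * W ω) := by
          rw [ENNReal.ofReal_mul (Real.rpow_nonneg (abs_nonneg _) _),
            ENNReal.ofReal_mul (by positivity : (0:ℝ) ≤ (ν / 2) ^ 2 * (4 / δ ^ 2) * (c₀ ^ m) ^ 2),
            ENNReal.ofReal_toReal hWω.ne]
          ring
  -- independence-based integral bound
  have hφA : Measurable fun y : ℝ => ENNReal.ofReal (|y| ^ (2 * ν)) :=
    ENNReal.measurable_ofReal.comp
      ((Real.continuous_rpow_const (by positivity)).measurable.comp measurable_abs)
  have hAmeas : Measurable fun ω => ENNReal.ofReal (|ε k ω| ^ (2 * ν)) :=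
    hφA.comp (hεmeas k)
  have hA_int : ∫⁻ ω, ENNReal.ofReal (|ε k ω| ^ (2 * ν)) ∂P ≤ ENNReal.ofReal (1 + Eε) := by
    have hid : ∫⁻ ω, ENNReal.ofReal (|ε k ω| ^ (2 * ν)) ∂P
        = ∫⁻ ω, ENNReal.ofReal (|ε 0 ω| ^ (2 * ν)) ∂P := by
      simpa [Function.comp] using ((hident k).comp hφA).lintegral_eq
    rw [hid]
    calc ∫⁻ ω, ENNReal.ofReal (|ε 0 ω| ^ (2 * ν)) ∂P
        ≤ ∫⁻ ω, (1 + ENNReal.ofReal (|ε 0 ω| ^ (2 * μ))) ∂P := by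
          apply lintegral_mono
          intro ω
          rcases le_or_gt (|ε 0 ω|) 1 with h | h
          · calc ENNReal.ofReal (|ε 0 ω| ^ (2 * ν)) ≤ ENNReal.ofReal 1 :=
                ENNReal.ofReal_le_ofReal (Real.rpow_le_one (abs_nonneg _) h (by positivity))
              _ = 1 := ENNReal.ofReal_one
              _ ≤ _ := le_self_add
          · calc ENNReal.ofReal (|ε 0 ω| ^ (2 * ν)) ≤ ENNReal.ofReal (|ε 0 ω| ^ (2 * μ)) :=
                ENNReal.ofReal_le_ofReal
                  (Real.rpow_le_rpow_of_exponent_le h.le (by linarith))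
              _ ≤ _ := le_add_self
      _ = 1 + ∫⁻ ω, ENNReal.ofReal (|ε 0 ω| ^ (2 * μ)) ∂P := by
          rw [lintegral_add_left measurable_const, lintegral_const, measure_univ, one_mul]
      _ = ENNReal.ofReal 1 + ENNReal.ofReal Eε := by
          rw [ENNReal.ofReal_one, hEε, ENNReal.ofReal_toReal hεmom.ne]
      _ = ENNReal.ofReal (1 + Eε) := (ENNReal.ofReal_add zero_le_one hEε0).symm
  -- independence of the factor |ε k|^(2ν) and W
  have h_le : ∀ j : ℤ, MeasurableSpace.comap (ε j) inferInstance ≤ ‹MeasurableSpace Ω› :=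
    fun j => measurable_iff_comap_le.1 (hεmeas j)
  have hfact : ∫⁻ ω, ENNReal.ofReal (|ε k ω| ^ (2 * ν)) * W ω ∂P
      = (∫⁻ ω, ENNReal.ofReal (|ε k ω| ^ (2 * ν)) ∂P) * ∫⁻ ω, W ω ∂P := by
    have hmS_le : (⨆ j ∈ ({k}ᶜ : Set ℤ), MeasurableSpace.comap (ε j) inferInstance)
        ≤ ‹MeasurableSpace Ω› := iSup₂_le fun j _ => h_le j
    set mS : MeasurableSpace Ω :=
      ⨆ j ∈ ({k}ᶜ : Set ℤ), MeasurableSpace.comap (ε j) inferInstance with hmSdef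
    have hεW : ∀ i : ℕ, Measurable[mS] (ε (k - (i + 1))) := by
      intro i
      apply measurable_iff_comap_le.2
      refine le_trans ?_ le_rfl
      exact le_iSup₂ (f := fun (j : ℤ) (_ : j ∈ ({k}ᶜ : Set ℤ)) =>
        MeasurableSpace.comap (ε j) inferInstance) (k - (i + 1))
        (by simp only [Set.mem_compl_iff, Set.mem_singleton_iff]; omega)
    have hWmS : Measurable[mS] W := by
      simp only [hWdef]
      refine Measurable.iSup fun n => ?_
      simp only [hWndef]
      refine ENNReal.measurable_ofReal.comp (Real.measurable_exp.comp ?_)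
      refine Finset.measurable_sum _ fun i _ => ?_
      simp only [hGdef]
      exact ((hg.comp (hεW i)).abs).const_mul (lam i)
    have hAmS : Measurable[MeasurableSpace.comap (ε k) inferInstance]
        fun ω => ENNReal.ofReal (|ε k ω| ^ (2 * ν)) :=
      hφA.comp (measurable_iff_comap_le.2 le_rfl)
    have hIndep : Indep (MeasurableSpace.comap (ε k) inferInstance) mS P := by
      have hbig := indep_iSup_of_disjoint (fun j => h_le j) hindep.iIndep
        (disjoint_compl_right : Disjoint ({k} : Set ℤ) ({k}ᶜ : Set ℤ))
      refine indep_of_indep_of_le_left hbig ?_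
      exact le_iSup₂ (f := fun (j : ℤ) (_ : j ∈ ({k} : Set ℤ)) =>
        MeasurableSpace.comap (ε j) inferInstance) k rfl
    exact lintegral_mul_eq_lintegral_mul_lintegral_of_independent_measurableSpace
      (measurable_iff_comap_le.1 (hεmeas k)) hmS_le hIndep hAmS hWmS
  -- putting the integral bound together
  have hI : ∫⁻ ω, (‖η k ω - ηm k m ω‖₊ : ℝ≥0∞) ^ (2:ℝ) ∂P
      ≤ ENNReal.ofReal (D * (c₀ ^ m) ^ 2) := by
    calc ∫⁻ ω, (‖η k ω - ηm k m ω‖₊ : ℝ≥0∞) ^ (2:ℝ) ∂P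
        ≤ ∫⁻ ω, ENNReal.ofReal ((ν / 2) ^ 2 * (4 / δ ^ 2) * (c₀ ^ m) ^ 2)
            * (ENNReal.ofReal (|ε k ω| ^ (2 * ν)) * W ω) ∂P := lintegral_mono_ae hae
      _ = ENNReal.ofReal ((ν / 2) ^ 2 * (4 / δ ^ 2) * (c₀ ^ m) ^ 2)
          * ∫⁻ ω, ENNReal.ofReal (|ε k ω| ^ (2 * ν)) * W ω ∂P :=
          lintegral_const_mul _ (hAmeas.mul hWmeas)
      _ = ENNReal.ofReal ((ν / 2) ^ 2 * (4 / δ ^ 2) * (c₀ ^ m) ^ 2)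
          * ((∫⁻ ω, ENNReal.ofReal (|ε k ω| ^ (2 * ν)) ∂P) * ∫⁻ ω, W ω ∂P) := by
          rw [hfact]
      _ ≤ ENNReal.ofReal ((ν / 2) ^ 2 * (4 / δ ^ 2) * (c₀ ^ m) ^ 2)
          * (ENNReal.ofReal (1 + Eε) * ENNReal.ofReal K) :=
          mul_le_mul_right (mul_le_mul' hA_int hW_int) _
      _ = ENNReal.ofReal (D * (c₀ ^ m) ^ 2) := by
          rw [← ENNReal.ofReal_mul (by linarith : (0:ℝ) ≤ 1 + Eε),
            ← ENNReal.ofReal_mul (by positivity : (0:ℝ) ≤ (ν / 2) ^ 2 * (4 / δ ^ 2) * (c₀ ^ m) ^ 2)]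
          congr 1
          rw [hD]
          ring
  -- conclude via the L² seminorm
  rw [eLpNorm_eq_lintegral_rpow_enorm_toReal (by norm_num) (by norm_num)]
  have h2r : ((2:ℝ≥0∞)).toReal = (2:ℝ) := by norm_num
  rw [h2r]
  calc (∫⁻ ω, (‖η k ω - ηm k m ω‖₊ : ℝ≥0∞) ^ (2:ℝ) ∂P) ^ (1 / (2:ℝ))
      ≤ (ENNReal.ofReal (D * (c₀ ^ m) ^ 2)) ^ (1 / (2:ℝ)) :=
        ENNReal.rpow_le_rpow hI (by norm_num)
    _ = ENNReal.ofReal ((D * (c₀ ^ m) ^ 2) ^ ((1:ℝ) / 2)) :=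
        ENNReal.ofReal_rpow_of_nonneg (mul_nonneg hD0.le (by positivity)) (by norm_num)
    _ = ENNReal.ofReal (Real.sqrt D * c₀ ^ m) := by
        congr 1
        rw [← Real.sqrt_eq_rpow, Real.sqrt_mul hD0.le, Real.sqrt_sq (by positivity)]
end

section
/- Assume the series X₀ converges almost surely and that −∞ < E[log|c(ε₀)|] < 0. For m ≥ 1 set T_m = ∑_{i=1}^m (log|c(ε_i)| − E[log|c(ε₀)|]). Then there exist constants C₃, C₄ > 0, not depending on m, and α₀ > 0 such that for every 0 < α ≤ α₀, every k ∈ ℤ and every m ≥ 1, P(|X_k − X_{k,m}| > e^{−αm}) ≤ P(T_m > C₃ m) + P(|X₀| > e^{C₄ m}). -/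
open MeasureTheory ProbabilityTheory Filter

section Aux

variable {Ω : Type*} [MeasurableSpace Ω] {P : Measure Ω} [IsProbabilityMeasure P]
  {ε : ℤ → Ω → ℝ}

lemma aux_marg (hεmeas : ∀ k, Measurable (ε k))
    (hident : ∀ k, IdentDistrib (ε k) (ε 0) P P)
    (z : ℤ) {A : Set ℝ} (hA : MeasurableSet A) :
    P (ε z ⁻¹' A) = Measure.map (ε 0) P A := by
  rw [← Measure.map_apply (hεmeas z) hA, (hident z).map_eq]

lemma aux_fin_law (hεmeas : ∀ k, Measurable (ε k))
    (hindep : iIndepFun ε P)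
    (hident : ∀ k, IdentDistrib (ε k) (ε 0) P P)
    (s : Finset ℕ) (φ : ℕ → ℤ) (hφ : Function.Injective φ) :
    Measure.map (fun ω => fun i : s => ε (φ i) ω) P
      = Measure.pi (fun _ : s => Measure.map (ε 0) P) := by
  classical
  haveI : IsProbabilityMeasure (Measure.map (ε 0) P) :=
    Measure.isProbabilityMeasure_map (hεmeas 0).aemeasurable
  refine (Measure.pi_eq fun t ht => ?_).symm
  rw [Measure.map_apply (measurable_pi_lambda _ fun i => hεmeas _) (MeasurableSet.univ_pi ht)]
  set sets : ℤ → Set ℝ := fun z => if h : ∃ i : s, φ i = z then t h.choose else Set.univ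
    with hsets_def
  have hsets_eq : ∀ i : s, sets (φ i) = t i := by
    intro i
    have h : ∃ j : s, φ (j : ℕ) = φ (i : ℕ) := ⟨i, rfl⟩
    rw [hsets_def]
    simp only [dif_pos h]
    exact congrArg t (Subtype.ext (hφ h.choose_spec))
  have hmem : ∀ z ∈ s.image φ, MeasurableSet (sets z) := by
    intro z _
    rw [hsets_def]
    dsimp only
    split
    · exact ht _
    · exact MeasurableSet.univ
  have key : (fun ω => fun i : s => ε (φ i) ω) ⁻¹' (Set.pi Set.univ t)
      = ⋂ z ∈ s.image φ, ε z ⁻¹' sets z := by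
    ext ω
    simp only [Set.mem_preimage, Set.mem_pi, Set.mem_univ, forall_true_left,
      Set.mem_iInter, Finset.mem_image]
    constructor
    · rintro h z ⟨i, hi, rfl⟩
      have := h ⟨i, hi⟩
      rwa [← hsets_eq ⟨i, hi⟩] at this
    · intro h i
      have := h (φ i) ⟨i, i.2, rfl⟩
      rwa [hsets_eq i] at this
  rw [key, hindep.measure_inter_preimage_eq_mul _ hmem,
    Finset.prod_image (fun a _ b _ hab => hφ hab)]
  rw [← Finset.prod_attach s (fun i => P (ε (φ i) ⁻¹' sets (φ i)))]
  rw [show (Finset.univ : Finset s) = s.attach from rfl]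
  refine Finset.prod_congr rfl fun i _ => ?_
  rw [hsets_eq i, aux_marg hεmeas hident _ (ht i)]


lemma aux_seq_law (hεmeas : ∀ k, Measurable (ε k))
    (hindep : iIndepFun ε P)
    (hident : ∀ k, IdentDistrib (ε k) (ε 0) P P)
    (φ ψ : ℕ → ℤ) (hφ : Function.Injective φ) (hψ : Function.Injective ψ) :
    Measure.map (fun ω => fun i : ℕ => ε (φ i) ω) P
      = Measure.map (fun ω => fun i : ℕ => ε (ψ i) ω) P := by
  have hmφ : Measurable (fun ω => fun i : ℕ => ε (φ i) ω) :=
    measurable_pi_lambda _ fun i => hεmeas _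
  have hmψ : Measurable (fun ω => fun i : ℕ => ε (ψ i) ω) :=
    measurable_pi_lambda _ fun i => hεmeas _
  haveI : IsProbabilityMeasure (Measure.map (fun ω => fun i : ℕ => ε (φ i) ω) P) :=
    Measure.isProbabilityMeasure_map hmφ.aemeasurable
  haveI : IsProbabilityMeasure (Measure.map (fun ω => fun i : ℕ => ε (ψ i) ω) P) :=
    Measure.isProbabilityMeasure_map hmψ.aemeasurable
  refine ext_of_generate_finite _ generateFrom_measurableCylinders.symm
    isPiSystem_measurableCylinders (fun u hu => ?_) (by simp)
  obtain ⟨s, S, hS, rfl⟩ := (mem_measurableCylinders u).mp hu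
  have hres : ∀ (χ : ℕ → ℤ), (fun ω => fun i : ℕ => ε (χ i) ω) ⁻¹' cylinder s S
      = (fun ω => fun i : s => ε (χ i) ω) ⁻¹' S := fun χ => rfl
  rw [Measure.map_apply hmφ hS.cylinder, Measure.map_apply hmψ hS.cylinder, hres, hres,
    ← Measure.map_apply (measurable_pi_lambda _ fun i => hεmeas _) hS,
    ← Measure.map_apply (measurable_pi_lambda _ fun i => hεmeas _) hS,
    aux_fin_law hεmeas hindep hident s φ hφ, aux_fin_law hεmeas hindep hident s ψ hψ]

lemma aux_comp_law (hεmeas : ∀ k, Measurable (ε k))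
    (hindep : iIndepFun ε P)
    (hident : ∀ k, IdentDistrib (ε k) (ε 0) P P)
    (φ ψ : ℕ → ℤ) (hφ : Function.Injective φ) (hψ : Function.Injective ψ)
    (G : (ℕ → ℝ) → ℝ) (hG : Measurable G) {A : Set ℝ} (hA : MeasurableSet A) :
    P {ω | G (fun i => ε (φ i) ω) ∈ A} = P {ω | G (fun i => ε (ψ i) ω) ∈ A} := by
  have hmφ : Measurable (fun ω => fun i : ℕ => ε (φ i) ω) :=
    measurable_pi_lambda _ fun i => hεmeas _
  have hmψ : Measurable (fun ω => fun i : ℕ => ε (ψ i) ω) :=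
    measurable_pi_lambda _ fun i => hεmeas _
  have h1 : {ω | G (fun i => ε (φ i) ω) ∈ A}
      = (fun ω => fun i : ℕ => ε (φ i) ω) ⁻¹' (G ⁻¹' A) := rfl
  have h2 : {ω | G (fun i => ε (ψ i) ω) ∈ A}
      = (fun ω => fun i : ℕ => ε (ψ i) ω) ⁻¹' (G ⁻¹' A) := rfl
  rw [h1, h2, ← Measure.map_apply hmφ (hG hA), ← Measure.map_apply hmψ (hG hA),
    aux_seq_law hεmeas hindep hident φ ψ hφ hψ]

end Aux

/-- **Lemma 3.** If `−∞ < E log|c(ε₀)| < 0`, then with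
`T_m = ∑_{i=1}^m (log|c(ε_i)| − E log|c(ε₀)|)` there are constants `C₃, C₄ > 0` and some
`α₀ > 0` such that for every `0 < α ≤ α₀`, every `k` and every `m ≥ 1`,
`P(|X_k − X_{k,m}| > e^{−αm}) ≤ P(T_m > C₃ m) + P(|X₀| > e^{C₄ m})`. -/
theorem augmented_garch_tail_approximation
    {Ω : Type*} [MeasurableSpace Ω] (P : Measure Ω) [IsProbabilityMeasure P]
    (ε : ℤ → Ω → ℝ) (c g : ℝ → ℝ)
    (hc : Measurable c) (hg : Measurable g)
    (hεmeas : ∀ k, Measurable (ε k))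
    (hindep : iIndepFun ε P)
    (hident : ∀ k, IdentDistrib (ε k) (ε 0) P P)
    (hlogint : Integrable (fun ω => Real.log |c (ε 0 ω)|) P)
    (hlogneg : ∫ ω, Real.log |c (ε 0 ω)| ∂P < 0)
    (X : ℤ → Ω → ℝ) (hXmeas : ∀ k, Measurable (X k))
    (hX : ∀ k : ℤ, ∀ᵐ ω ∂P, Tendsto
      (fun m => ∑ i ∈ Finset.range m,
        g (ε (k - (i + 1)) ω) * ∏ j ∈ Finset.range i, c (ε (k - (j + 1)) ω))
      atTop (nhds (X k ω)))
    (Xm : ℤ → ℕ → Ω → ℝ)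
    (hXm : ∀ k m ω, Xm k m ω = ∑ i ∈ Finset.range m,
      g (ε (k - (i + 1)) ω) * ∏ j ∈ Finset.range i, c (ε (k - (j + 1)) ω))
    (T : ℕ → Ω → ℝ)
    (hT : ∀ m ω, T m ω = ∑ i ∈ Finset.range m,
      (Real.log |c (ε ((i : ℤ) + 1) ω)| - ∫ ω', Real.log |c (ε 0 ω')| ∂P)) :
    ∃ C₃ > (0 : ℝ), ∃ C₄ > (0 : ℝ), ∃ α₀ > (0 : ℝ), ∀ α : ℝ, 0 < α → α ≤ α₀ →
      ∀ k : ℤ, ∀ m : ℕ, 1 ≤ m →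
        P {ω | |X k ω - Xm k m ω| > Real.exp (-α * m)} ≤
          P {ω | T m ω > C₃ * m} + P {ω | |X 0 ω| > Real.exp (C₄ * m)} := by
  classical
  set μ0 : ℝ := ∫ ω, Real.log |c (ε 0 ω)| ∂P with hμ0def
  have hμ0 : μ0 < 0 := hlogneg
  refine ⟨-μ0/2, by linarith, -μ0/4, by linarith, -μ0/4, by linarith, ?_⟩
  intro α hα hαle k m hm
  set C₃ : ℝ := -μ0/2 with hC₃def
  set C₄ : ℝ := -μ0/4 with hC₄def
  -- Step A: a.s. identity
  have hIdAE : ∀ᵐ ω ∂P, X k ω - Xm k m ω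
      = (∏ j ∈ Finset.range m, c (ε (k - (j + 1)) ω)) * X (k - m) ω := by
    filter_upwards [hX k, hX (k - m)] with ω h1 h2
    have halg : ∀ n : ℕ,
        (∑ i ∈ Finset.range (m + n), g (ε (k - (i + 1)) ω) *
          ∏ j ∈ Finset.range i, c (ε (k - (j + 1)) ω))
        = Xm k m ω + (∏ j ∈ Finset.range m, c (ε (k - (j + 1)) ω)) *
          (∑ i ∈ Finset.range n, g (ε (k - m - (i + 1)) ω) *
            ∏ j ∈ Finset.range i, c (ε (k - m - (j + 1)) ω)) := by
      intro n
      rw [Finset.sum_range_add, hXm]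
      congr 1
      rw [Finset.mul_sum]
      refine Finset.sum_congr rfl fun i _ => ?_
      rw [Finset.prod_range_add]
      have e1 : (k - (↑(m + i) + 1) : ℤ) = k - m - (↑i + 1) := by push_cast; ring
      have e2 : ∀ j : ℕ, (k - (↑(m + j) + 1) : ℤ) = k - m - (↑j + 1) := fun j => by
        push_cast; ring
      have e3 : (∏ x ∈ Finset.range i, c (ε (k - (↑(m + x) + 1)) ω))
          = ∏ x ∈ Finset.range i, c (ε (k - ↑m - (↑x + 1)) ω) :=
        Finset.prod_congr rfl fun x _ => by rw [e2 x]
      rw [e1, e3]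
      ring
    have hmn : Tendsto (fun n : ℕ => m + n) atTop atTop :=
      (tendsto_add_atTop_nat m).congr fun n => Nat.add_comm n m
    have hL := (h1.comp hmn).congr halg
    have hR : Tendsto (fun n => Xm k m ω + (∏ j ∈ Finset.range m, c (ε (k - (j + 1)) ω)) *
          (∑ i ∈ Finset.range n, g (ε (k - m - (i + 1)) ω) *
            ∏ j ∈ Finset.range i, c (ε (k - m - (j + 1)) ω)))
        atTop (nhds (Xm k m ω + (∏ j ∈ Finset.range m, c (ε (k - (j + 1)) ω)) * X (k - m) ω)) :=
      tendsto_const_nhds.add (h2.const_mul _)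
    have := tendsto_nhds_unique hL hR
    linarith
  set A : Set Ω :=
    {ω | ∑ j ∈ Finset.range m, Real.log |c (ε (k - (j + 1)) ω)| > (μ0 + C₃) * m} with hAdef
  set B : Set Ω := {ω | |X (k - m) ω| > Real.exp (C₄ * m)} with hBdef
  set N : Set Ω := {ω | ¬ (X k ω - Xm k m ω
      = (∏ j ∈ Finset.range m, c (ε (k - (j + 1)) ω)) * X (k - m) ω)} with hNdef
  have hN : P N = 0 := ae_iff.mp hIdAE
  -- Step B: inclusion
  have hsub : {ω | |X k ω - Xm k m ω| > Real.exp (-α * m)} ⊆ A ∪ B ∪ N := by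
    intro ω hmem
    by_cases hid : X k ω - Xm k m ω
        = (∏ j ∈ Finset.range m, c (ε (k - (j + 1)) ω)) * X (k - m) ω
    swap
    · exact Or.inr hid
    left
    by_contra hcon
    rw [Set.mem_union] at hcon
    push_neg at hcon
    obtain ⟨hA', hB'⟩ := hcon
    have hA'' : ∑ j ∈ Finset.range m, Real.log |c (ε (k - (j + 1)) ω)| ≤ (μ0 + C₃) * m :=
      not_lt.mp hA'
    have hB'' : |X (k - m) ω| ≤ Real.exp (C₄ * m) := not_lt.mp hB'
    have h1 : |∏ j ∈ Finset.range m, c (ε (k - (j + 1)) ω)|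
        ≤ Real.exp (∑ j ∈ Finset.range m, Real.log |c (ε (k - (j + 1)) ω)|) := by
      rw [Finset.abs_prod, Real.exp_sum]
      exact Finset.prod_le_prod (fun j _ => abs_nonneg _) (fun j _ => Real.le_exp_log _)
    have h2 : |X k ω - Xm k m ω| ≤ Real.exp ((μ0 + C₃) * m) * Real.exp (C₄ * m) := by
      rw [hid, abs_mul]
      exact mul_le_mul (h1.trans (Real.exp_le_exp.mpr hA'')) hB'' (abs_nonneg _)
        (Real.exp_pos _).le
    rw [← Real.exp_add] at h2
    have h3 : (μ0 + C₃) * m + C₄ * m ≤ -α * m := by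
      have hm0 : (0:ℝ) ≤ m := Nat.cast_nonneg m
      have hsum : μ0 + C₃ + C₄ ≤ -α := by
        rw [hC₃def, hC₄def]; linarith
      nlinarith
    exact absurd hmem (not_lt.mpr (h2.trans (Real.exp_le_exp.mpr h3)))
  -- Step C: P A = P (T m > C₃ m)
  have hinj1 : Function.Injective (fun i : ℕ => k - ((i : ℤ) + 1)) := fun a b h => by
    simp only at h; omega
  have hinj2 : Function.Injective (fun i : ℕ => (i : ℤ) + 1) := fun a b h => by
    simp only at h; omega
  have hGc : Measurable (fun y : ℕ → ℝ => ∑ j ∈ Finset.range m, Real.log |c (y j)|) :=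
    Finset.measurable_sum _ fun j _ =>
      Real.measurable_log.comp ((hc.comp (measurable_pi_apply j)).abs)
  have hPA : P A = P {ω | T m ω > C₃ * m} := by
    have hcl := aux_comp_law hεmeas hindep hident _ _ hinj1 hinj2
      (fun y : ℕ → ℝ => ∑ j ∈ Finset.range m, Real.log |c (y j)|) hGc
      (measurableSet_Ioi (a := (μ0 + C₃) * m))
    have e1 : A = {ω | (fun y : ℕ → ℝ => ∑ j ∈ Finset.range m, Real.log |c (y j)|)
        (fun i => ε ((fun i : ℕ => k - ((i : ℤ) + 1)) i) ω) ∈ Set.Ioi ((μ0 + C₃) * m)} := rfl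
    have e2 : {ω | (fun y : ℕ → ℝ => ∑ j ∈ Finset.range m, Real.log |c (y j)|)
        (fun i => ε ((fun i : ℕ => (i : ℤ) + 1) i) ω) ∈ Set.Ioi ((μ0 + C₃) * m)}
        = {ω | T m ω > C₃ * m} := by
      ext ω
      simp only [Set.mem_setOf_eq, Set.mem_Ioi, hT m ω]
      have hsum : ∑ i ∈ Finset.range m, (Real.log |c (ε ((i : ℤ) + 1) ω)| - μ0)
          = (∑ j ∈ Finset.range m, Real.log |c (ε ((j : ℤ) + 1) ω)|) - m * μ0 := by
        rw [Finset.sum_sub_distrib, Finset.sum_const, Finset.card_range, nsmul_eq_mul]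
      rw [hsum]
      have hrw : (μ0 + C₃) * m = C₃ * m + m * μ0 := by ring
      constructor <;> intro h <;> linarith
    rw [e1, hcl, e2]
  -- Step D: P B = P (|X 0| > exp (C₄ m))
  set F : ℕ → (ℕ → ℝ) → ℝ :=
    fun n y => ∑ i ∈ Finset.range n, g (y i) * ∏ j ∈ Finset.range i, c (y j) with hFdef
  have hFmeas : ∀ n, Measurable (F n) := fun n =>
    Finset.measurable_sum _ fun i _ =>
      (hg.comp (measurable_pi_apply i)).mul
        (Finset.measurable_prod _ fun j _ => hc.comp (measurable_pi_apply j))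
  set Sconv : Set (ℕ → ℝ) := {y | ∃ l, Tendsto (fun n => F n y) atTop (nhds l)} with hSconvdef
  have hSmeas : MeasurableSet Sconv := measurableSet_exists_tendsto hFmeas
  set G : (ℕ → ℝ) → ℝ := fun y => if h : y ∈ Sconv then h.choose else 0 with hGdef
  have hGtend : ∀ y, Tendsto (fun n => Sconv.piecewise (F n) (fun _ => 0) y) atTop (nhds (G y)) := by
    intro y
    by_cases h : y ∈ Sconv
    · simp only [Set.piecewise_eq_of_mem _ _ _ h, hGdef, dif_pos h]
      exact h.choose_spec
    · simp only [Set.piecewise_eq_of_notMem _ _ _ h, hGdef, dif_neg h]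
      exact tendsto_const_nhds
  have hGmeas : Measurable G :=
    measurable_of_tendsto_metrizable
      (fun n => Measurable.piecewise hSmeas (hFmeas n) measurable_const)
      (tendsto_pi_nhds.mpr hGtend)
  have hXG : ∀ k' : ℤ, ∀ᵐ ω ∂P, X k' ω = G (fun i => ε (k' - (i + 1)) ω) := by
    intro k'
    filter_upwards [hX k'] with ω hω
    have hy : (fun i : ℕ => ε (k' - (i + 1)) ω) ∈ Sconv := ⟨X k' ω, hω⟩
    rw [hGdef]
    simp only [dif_pos hy]
    exact tendsto_nhds_unique hω hy.choose_spec
  have hinjB1 : Function.Injective (fun i : ℕ => k - (m : ℤ) - ((i : ℤ) + 1)) := fun a b h => by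
    simp only at h; omega
  have hinjB2 : Function.Injective (fun i : ℕ => (0 : ℤ) - ((i : ℤ) + 1)) := fun a b h => by
    simp only at h; omega
  have hPB : P B = P {ω | |X 0 ω| > Real.exp (C₄ * m)} := by
    have hB1 : P B = P {ω | (fun y => |G y|)
        (fun i => ε ((fun i : ℕ => k - (m : ℤ) - ((i : ℤ) + 1)) i) ω)
        ∈ Set.Ioi (Real.exp (C₄ * m))} := by
      refine measure_congr (Filter.eventuallyEq_set.mpr ?_)
      filter_upwards [hXG (k - m)] with ω hω
      simp only [hBdef, Set.mem_setOf_eq, Set.mem_Ioi, hω]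
    have hB2 := aux_comp_law hεmeas hindep hident _ _ hinjB1 hinjB2
      (fun y => |G y|) hGmeas.abs (measurableSet_Ioi (a := Real.exp (C₄ * m)))
    have hB3 : P {ω | (fun y => |G y|)
        (fun i => ε ((fun i : ℕ => (0 : ℤ) - ((i : ℤ) + 1)) i) ω)
        ∈ Set.Ioi (Real.exp (C₄ * m))} = P {ω | |X 0 ω| > Real.exp (C₄ * m)} := by
      refine measure_congr (Filter.eventuallyEq_set.mpr ?_)
      filter_upwards [hXG 0] with ω hω
      simp only [Set.mem_setOf_eq, Set.mem_Ioi, hω]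
    rw [hB1, hB2, hB3]
  calc P {ω | |X k ω - Xm k m ω| > Real.exp (-α * m)}
      ≤ P (A ∪ B ∪ N) := measure_mono hsub
    _ ≤ P (A ∪ B) + P N := measure_union_le _ _
    _ = P (A ∪ B) := by rw [hN, add_zero]
    _ ≤ P A + P B := measure_union_le _ _
    _ = P {ω | T m ω > C₃ * m} + P {ω | |X 0 ω| > Real.exp (C₄ * m)} := by rw [hPA, hPB]
end
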